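/- arXiv:math/0602515 — 3 statements merged into one kernel-verified Lean document; each statement's English description precedes it below -/
import Mathlib

section
/- Let x = (x_1,…,x_4) ∈ Z^4 with |x_i| ≤ n/2 for i = 1,…,4, and let x' ∈ Z_n^4 be its reduction modulo n. Then for every constant C' > 0 there is a constant C such that for all n ≥ 2 and all integers t with 0 ≤ t ≤ C' n^2, one has q_t(x,0) ≤ p_{t,n}(x',0) ≤ q_t(x,0) + C/n^4. -/
open MeasureTheory ProbabilityTheory Filter
open scoped ENNReal

noncomputable section
open scoped Classical

/-- The four-dimensional discrete torus `Z_n^4`. -/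
abbrev Torus (n : ℕ) : Type := Fin 4 → ZMod n

instance (n : ℕ) : MeasurableSpace (ZMod n) := ⊤

/-- The `i`-th standard unit vector in `ℤ⁴`. -/
def unitVec (i : Fin 4) : Fin 4 → ℤ := fun j => if j = i then 1 else 0

/-- One-step distribution of the lazy simple random walk on `ℤ⁴`: stay put with
probability `1/2`, move to each of the 8 nearest neighbours with probability `1/16`. -/
def stepProb (x : Fin 4 → ℤ) : ℝ≥0∞ :=
  if x = 0 then 1 / 2
  else if ∃ i, x = unitVec i ∨ x = -unitVec i then 1 / 16 else 0

/-- `latticeQ t x` is the `t`-step transition probability `q_t(0, x)` of the lazy walk on `ℤ⁴`. -/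
def latticeQ : ℕ → (Fin 4 → ℤ) → ℝ≥0∞
  | 0 => fun x => if x = 0 then 1 else 0
  | t + 1 => fun x => ∑' y : Fin 4 → ℤ, latticeQ t y * stepProb (x - y)

/-- `q_t(x, y)`, the `t`-step transition probabilities of the lazy walk on `ℤ⁴`. -/
def lq (t : ℕ) (x y : Fin 4 → ℤ) : ℝ≥0∞ := latticeQ t (y - x)

/-- Reduction of a point of `ℤ⁴` modulo `n`. -/
def torusProj (n : ℕ) (x : Fin 4 → ℤ) : Torus n := fun i => (x i : ZMod n)

/-- `tp t n x y` is the transition probability `p_{t,n}(x,y)` of the walk on the torus. -/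
def tp (t n : ℕ) (x y : Torus n) : ℝ≥0∞ :=
  ∑' z : Fin 4 → ℤ, if torusProj n z = y - x then latticeQ t z else 0

/-- The uniform mixing time `τ_n`. -/
def mixTime (n : ℕ) : ℕ :=
  sInf {t : ℕ | ∀ x : Torus n,
    |(tp t n 0 x).toReal - 1 / (n : ℝ) ^ 4| ≤ 1 / (2 * (n : ℝ) ^ 4)}

variable {Ω : Type*} [MeasureSpace Ω]

/-- `X` is a random walk on the torus `Z_n^4`: the increments are i.i.d. with the lazy
step distribution (reduced mod `n`), independent of the starting point. -/
def IsTorusWalk (n : ℕ) (X : ℕ → Ω → Torus n) : Prop :=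
  (∀ t, Measurable (X t)) ∧
  ∃ ξ : ℕ → Ω → (Fin 4 → ℤ),
    (∀ k, Measurable (ξ k)) ∧
    (∀ k x, volume {ω | ξ k ω = x} = stepProb x) ∧
    iIndepFun ξ volume ∧
    IndepFun (X 0) (fun ω k => ξ k ω) volume ∧
    ∀ t ω, X t ω = X 0 ω + torusProj n (∑ k ∈ Finset.range t, ξ k ω)

/-- `Z` is a lazy random walk on `ℤ⁴`. -/
def IsLatticeWalk (Z : ℕ → Ω → Fin 4 → ℤ) : Prop :=
  (∀ t, Measurable (Z t)) ∧
  ∃ ξ : ℕ → Ω → (Fin 4 → ℤ),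
    (∀ k, Measurable (ξ k)) ∧
    (∀ k x, volume {ω | ξ k ω = x} = stepProb x) ∧
    iIndepFun ξ volume ∧
    IndepFun (Z 0) (fun ω k => ξ k ω) volume ∧
    ∀ t ω, Z t ω = Z 0 ω + ∑ k ∈ Finset.range t, ξ k ω

/-- The random variable `Z` is uniformly distributed on the torus. -/
def IsUniformStart (n : ℕ) (Z : Ω → Torus n) : Prop :=
  ∀ v : Torus n, volume {ω | Z ω = v} = ((n : ℝ≥0∞) ^ 4)⁻¹

/-- The part of a list strictly after the last occurrence of `u` (the whole list if `u`
does not occur). -/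
def afterLast {V : Type*} [DecidableEq V] (u : V) (l : List V) : List V :=
  (l.reverse.takeWhile (fun v => decide (v ≠ u))).reverse

lemma afterLast_length_le {V : Type*} [DecidableEq V] (u : V) (l : List V) :
    (afterLast u l).length ≤ l.length := by
  unfold afterLast
  rw [List.length_reverse]
  calc (l.reverse.takeWhile _).length ≤ l.reverse.length :=
        (List.takeWhile_sublist _).length_le
    _ = l.length := List.length_reverse

/-- Chronological loop erasure `LE(λ)` of a finite path `λ`. -/
def loopErase {V : Type*} [DecidableEq V] : List V → List V
  | [] => []
  | u :: us => u :: loopErase (afterLast u us)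
  termination_by l => l.length
  decreasing_by
    simp only [List.length_cons]
    exact Nat.lt_succ_of_le (afterLast_length_le u us)

/-- The path `X[0,L]` of a walk, as a list of visited points. -/
def pathOf {α : Type*} (X : ℕ → Ω → α) (L : ℕ) (ω : Ω) : List α :=
  (List.range (L + 1)).map fun t => X t ω

/-- `u` is a `k`-local cutpoint of the walk `X` (for the outcome `ω`):
`{X_{u-k},…,X_{u-1}} ∩ {X_{u+1},…,X_{u+k}} = ∅`. -/
def IsLocalCutpt {α : Type*} (X : ℕ → Ω → α) (k u : ℕ) (ω : Ω) : Prop :=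
  ∀ a b : ℕ, 1 ≤ a → a ≤ k → a ≤ u → 1 ≤ b → b ≤ k → X (u - a) ω ≠ X (u + b) ω

/-- `Cap_M(U)`, computed from an auxiliary walk `W` started from the uniform distribution. -/
def capProb {Ω' : Type*} [MeasureSpace Ω'] {n : ℕ} (W : ℕ → Ω' → Torus n)
    (M : ℕ) (U : Set (Torus n)) : ℝ≥0∞ :=
  volume {ω' | ∃ t ≤ M, W t ω' ∈ U}

/-- `Close_M(U, V)`, computed from an auxiliary walk `W` started from the uniform
distribution. -/
def closeProb {Ω' : Type*} [MeasureSpace Ω'] {n : ℕ} (W : ℕ → Ω' → Torus n)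
    (M : ℕ) (U V : Set (Torus n)) : ℝ≥0∞ :=
  volume {ω' | (∃ t ≤ M, W t ω' ∈ U) ∧ (∃ s ≤ M, W s ω' ∈ V)}

end


noncomputable section
open scoped Classical
namespace St2

/-- 1-d lazy walk kernel: stay w.p. 1/2, ±1 w.p. 1/4 each. -/
def r : ℕ → ℤ → ℝ
  | 0, a => if a = 0 then 1 else 0
  | (N+1), a => r N a / 2 + r N (a-1) / 4 + r N (a+1) / 4

lemma r_nonneg (N : ℕ) (a : ℤ) : 0 ≤ r N a := by
  induction N generalizing a with
  | zero => unfold r; split <;> norm_num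
  | succ N ih =>
    have h1 := ih a; have h2 := ih (a-1); have h3 := ih (a+1)
    unfold r; linarith

lemma r_support (N : ℕ) (a : ℤ) (h : (N:ℤ) < |a|) : r N a = 0 := by
  induction N generalizing a with
  | zero =>
    have : a ≠ 0 := by rintro rfl; simp at h
    simp [r, this]
  | succ N ih =>
    rw [lt_abs] at h
    unfold r
    rw [ih a (lt_abs.mpr (by omega)), ih (a-1) (lt_abs.mpr (by omega)),
      ih (a+1) (lt_abs.mpr (by omega))]
    norm_num

lemma choose_id (n k : ℕ) :
    (2*n+2).choose (k+2) = (2*n).choose k + 2 * ((2*n).choose (k+1)) + (2*n).choose (k+2) := by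
  have h1 : (2*n+2).choose (k+2) = (2*n+1).choose (k+1) + (2*n+1).choose (k+2) := by
    rw [show 2*n+2 = (2*n+1)+1 from rfl]
    exact Nat.choose_succ_succ' (2*n+1) (k+1)
  have h2 : (2*n+1).choose (k+1) = (2*n).choose k + (2*n).choose (k+1) := Nat.choose_succ_succ' _ _
  have h3 : (2*n+1).choose (k+2) = (2*n).choose (k+1) + (2*n).choose (k+2) := Nat.choose_succ_succ' _ _
  omega

lemma r_eq (N : ℕ) (a : ℤ) (h : -(N:ℤ) ≤ a) :
    r N a = ((2*N).choose (a + N).toNat : ℝ) / 4^N := by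
  induction N generalizing a with
  | zero =>
    simp only [Nat.cast_zero, add_zero, mul_zero, pow_zero]
    rcases eq_or_ne a 0 with rfl | ha
    · simp [r]
    · rw [show r 0 a = 0 from by simp [r, ha]]
      have h1 : 1 ≤ (a).toNat := by omega
      rw [Nat.choose_eq_zero_of_lt (by omega)]
      norm_num
  | succ N ih =>
    simp only [r, Nat.cast_add, Nat.cast_one]
    rcases eq_or_ne a (-(N:ℤ)-1) with rfl | hne
    · have e1 : r N (-(N:ℤ)-1) = 0 := r_support _ _ (by rw [lt_abs]; omega)
      have e2 : r N (-(N:ℤ)-1-1) = 0 := r_support _ _ (by rw [lt_abs]; omega)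
      have e3 : r N (-(N:ℤ)-1+1) = ((2*N).choose 0 : ℝ) / 4^N := by
        rw [ih _ (by omega), show ((-(N:ℤ)-1+1) + N).toNat = 0 from by omega]
      rw [e1, e2, e3, show ((-(N:ℤ)-1) + ((N:ℤ)+1)).toNat = 0 from by omega]
      simp only [Nat.choose_zero_right]
      push_cast
      field_simp
      ring
    · rcases eq_or_ne a (-(N:ℤ)) with rfl | hne2
      · have e1 : r N (-(N:ℤ)) = ((2*N).choose 0 : ℝ) / 4^N := by
          rw [ih _ (by omega), show ((-(N:ℤ)) + N).toNat = 0 from by omega]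
        have e2 : r N (-(N:ℤ)-1) = 0 := r_support _ _ (by rw [lt_abs]; omega)
        have e3 : r N (-(N:ℤ)+1) = ((2*N).choose 1 : ℝ) / 4^N := by
          rw [ih _ (by omega), show ((-(N:ℤ)+1) + N).toNat = 1 from by omega]
        rw [e1, e2, e3, show ((-(N:ℤ)) + ((N:ℤ)+1)).toNat = 1 from by omega]
        rw [Nat.choose_zero_right, Nat.choose_one_right,
          show (2*(N+1)).choose 1 = 2*N+2 from by rw [Nat.choose_one_right]; omega]
        push_cast
        field_simp
        ring
      · have ha : -(N:ℤ) + 1 ≤ a := by omega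
        obtain ⟨m, hm⟩ : ∃ m : ℕ, a + N = (m : ℤ) + 1 := ⟨(a+N-1).toNat, by omega⟩
        have e1 : r N a = ((2*N).choose (m+1) : ℝ) / 4^N := by
          rw [ih _ (by omega), show (a + (N:ℤ)).toNat = m+1 from by omega]
        have e2 : r N (a-1) = ((2*N).choose m : ℝ) / 4^N := by
          rw [ih _ (by omega), show ((a-1) + (N:ℤ)).toNat = m from by omega]
        have e3 : r N (a+1) = ((2*N).choose (m+2) : ℝ) / 4^N := by
          rw [ih _ (by omega), show ((a+1) + (N:ℤ)).toNat = m+2 from by omega]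
        rw [e1, e2, e3, show (a + ((N:ℤ)+1)).toNat = m+2 from by omega,
          show 2*(N+1) = 2*N+2 from by ring, choose_id]
        push_cast
        field_simp
        ring

lemma cb_sq (N : ℕ) : (2*N+1) * (Nat.centralBinom N)^2 ≤ 16^N := by
  induction N with
  | zero => simp [Nat.centralBinom]
  | succ N ih =>
    have key := Nat.succ_mul_centralBinom_succ N
    have hpos : 0 < (N+1)^2 := by positivity
    refine Nat.le_of_mul_le_mul_left ?_ hpos
    calc (N+1)^2 * ((2*(N+1)+1) * (Nat.centralBinom (N+1))^2)
        = (2*N+3) * ((N+1) * Nat.centralBinom (N+1))^2 := by ring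
      _ = (2*N+3) * (2*(2*N+1) * Nat.centralBinom N)^2 := by rw [key]
      _ = ((2*N+3)*(2*N+1)) * (4 * ((2*N+1) * (Nat.centralBinom N)^2)) := by ring
      _ ≤ ((2*N+2)*(2*N+2)) * (4 * 16^N) := by
          exact Nat.mul_le_mul (by nlinarith) (Nat.mul_le_mul_left 4 ih)
      _ = (N+1)^2 * (4 * (16^N * 4)) := by ring
      _ = (N+1)^2 * 16^(N+1) := by rw [pow_succ]; ring

lemma r_le_inv_sqrt (N : ℕ) (a : ℤ) : r N a ≤ 1 / Real.sqrt (N+1) := by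
  have hs : (0:ℝ) < Real.sqrt (N+1) := Real.sqrt_pos.2 (by positivity)
  rcases lt_or_ge (N:ℤ) |a| with h | h
  · rw [r_support N a h]; positivity
  · rw [abs_le] at h
    rw [r_eq N a (by omega)]
    set c : ℝ := ((2*N).choose (a + N).toNat : ℝ) with hc
    have hc0 : 0 ≤ c := by positivity
    have h1 : c ≤ (Nat.centralBinom N : ℝ) := by
      rw [hc, Nat.centralBinom]
      exact_mod_cast (by simpa [Nat.mul_div_cancel_left N (by norm_num : 0 < 2)] using
        Nat.choose_le_middle ((a+N).toNat) (2*N))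
    have hcbR : (2*(N:ℝ)+1) * ((Nat.centralBinom N : ℝ))^2 ≤ 16^N := by
      exact_mod_cast cb_sq N
    have h16 : ((4:ℝ)^N)^2 = 16^N := by
      rw [← pow_mul, show (16:ℝ) = 4^2 from by norm_num, ← pow_mul, mul_comm]
    have hsq : (c/4^N)^2 ≤ (((N:ℝ)+1))⁻¹ := by
      rw [div_pow, h16, div_le_iff₀ (by positivity), inv_mul_eq_div,
        div_eq_mul_inv, ← mul_le_mul_iff_of_pos_right (show (0:ℝ) < (N:ℝ)+1 from by positivity)]
      have : ((16:ℝ)^N) * ((N:ℝ)+1)⁻¹ * ((N:ℝ)+1) = 16^N := by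
        field_simp
      rw [this]
      have hc2 : c^2 ≤ ((Nat.centralBinom N : ℝ))^2 := by nlinarith
      have hN0 : (0:ℝ) ≤ (N:ℝ) := Nat.cast_nonneg N
      nlinarith [sq_nonneg ((Nat.centralBinom N : ℝ))]
    calc c/4^N = Real.sqrt ((c/4^N)^2) := (Real.sqrt_sq (by positivity)).symm
      _ ≤ Real.sqrt (((N:ℝ)+1)⁻¹) := Real.sqrt_le_sqrt hsq
      _ = (Real.sqrt ((N:ℝ)+1))⁻¹ := Real.sqrt_inv _
      _ = 1 / Real.sqrt ((N:ℝ)+1) := (one_div _).symm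


lemma r_zero (a : ℤ) : r 0 a = if a = 0 then 1 else 0 := rfl

lemma r_succ (N : ℕ) (a : ℤ) : r (N+1) a = r N a / 2 + r N (a-1) / 4 + r N (a+1) / 4 := rfl

lemma r_trim (N : ℕ) (g : ℤ → ℝ) (G : Finset ℤ) (hG : Finset.Icc (-(N:ℤ)) N ⊆ G) :
    ∑ a ∈ G, r N a * g a = ∑ a ∈ Finset.Icc (-(N:ℤ)) N, r N a * g a := by
  symm
  apply Finset.sum_subset hG
  intro a _ ha
  rw [Finset.mem_Icc] at ha
  rw [r_support N a (lt_abs.mpr (by omega)), zero_mul]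

lemma sum_shift (A B d : ℤ) (f : ℤ → ℝ) :
    ∑ a ∈ Finset.Icc A B, f a = ∑ b ∈ Finset.Icc (A-d) (B-d), f (b+d) := by
  rw [show Finset.Icc A B = (Finset.Icc (A-d) (B-d)).map (addRightEmbedding d) by
    rw [Finset.map_add_right_Icc]; congr 1 <;> ring]
  rw [Finset.sum_map]
  rfl

lemma r_step_sum (N : ℕ) (g : ℤ → ℝ) :
    ∑ a ∈ Finset.Icc (-((N:ℤ)+1)) ((N:ℤ)+1), r (N+1) a * g a
    = ∑ b ∈ Finset.Icc (-(N:ℤ)) N, r N b * (g b / 2 + g (b+1) / 4 + g (b-1) / 4) := by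
  have hsplit : ∀ a : ℤ, r (N+1) a * g a
      = r N a * (g a / 2) + (r N (a-1) * (g a / 4) + r N (a+1) * (g a / 4)) := by
    intro a; rw [r_succ]; ring
  rw [Finset.sum_congr rfl (fun a _ => hsplit a), Finset.sum_add_distrib, Finset.sum_add_distrib]
  have h1 : ∑ a ∈ Finset.Icc (-((N:ℤ)+1)) ((N:ℤ)+1), r N a * (g a / 2)
      = ∑ b ∈ Finset.Icc (-(N:ℤ)) N, r N b * (g b / 2) :=
    r_trim N (fun a => g a / 2) _ (Finset.Icc_subset_Icc (by omega) (by omega))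
  have h2 : ∑ a ∈ Finset.Icc (-((N:ℤ)+1)) ((N:ℤ)+1), r N (a-1) * (g a / 4)
      = ∑ b ∈ Finset.Icc (-(N:ℤ)) N, r N b * (g (b+1) / 4) := by
    rw [sum_shift _ _ 1]
    have : ∀ b : ℤ, r N (b+1-1) * (g (b+1) / 4) = r N b * (g (b+1) / 4) := by
      intro b; congr 2; ring
    rw [Finset.sum_congr rfl (fun b _ => this b)]
    exact r_trim N (fun b => g (b+1) / 4) _ (Finset.Icc_subset_Icc (by omega) (by omega))
  have h3 : ∑ a ∈ Finset.Icc (-((N:ℤ)+1)) ((N:ℤ)+1), r N (a+1) * (g a / 4)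
      = ∑ b ∈ Finset.Icc (-(N:ℤ)) N, r N b * (g (b-1) / 4) := by
    rw [sum_shift _ _ (-1)]
    have : ∀ b : ℤ, r N (b+(-1)+1) * (g (b+(-1)) / 4) = r N b * (g (b-1) / 4) := by
      intro b
      have e1 : b + (-1) + 1 = b := by ring
      have e2 : b + (-1) = b - 1 := by ring
      rw [e1, e2]
    rw [Finset.sum_congr rfl (fun b _ => this b)]
    exact r_trim N (fun b => g (b-1) / 4) _ (Finset.Icc_subset_Icc (by omega) (by omega))
  rw [h1, h2, h3, ← Finset.sum_add_distrib, ← Finset.sum_add_distrib]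
  apply Finset.sum_congr rfl
  intro b _
  ring

lemma r_mass (N : ℕ) : ∑ a ∈ Finset.Icc (-(N:ℤ)) N, r N a = 1 := by
  induction N with
  | zero => simp [r_zero]
  | succ N ih =>
    have h := r_step_sum N (fun _ => 1)
    push_cast
    have e : ∀ a ∈ Finset.Icc (-((N:ℤ)+1)) ((N:ℤ)+1), r (N+1) a = r (N+1) a * (fun _ : ℤ => (1:ℝ)) a := by
      intro a _; simp
    rw [Finset.sum_congr rfl e, h]
    have : ∀ b ∈ Finset.Icc (-(N:ℤ)) N, r N b * ((1:ℝ)/2 + 1/4 + 1/4) = r N b := by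
      intro b _; ring
    rw [Finset.sum_congr rfl this, ih]

lemma r_mom2 (N : ℕ) : ∑ a ∈ Finset.Icc (-(N:ℤ)) N, r N a * (a:ℝ)^2 ≤ (N:ℝ) := by
  induction N with
  | zero => simp [r_zero]
  | succ N ih =>
    have h := r_step_sum N (fun b : ℤ => ((b:ℝ))^2)
    push_cast
    rw [h]
    have e : ∀ b : ℤ, r N b * (((b:ℝ))^2/2 + ((b:ℝ)+1)^2/4 + ((b:ℝ)-1)^2/4)
        = r N b * (b:ℝ)^2 + (1/2) * r N b := by intro b; ring
    have e2 : ∀ b ∈ Finset.Icc (-(N:ℤ)) N,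
        r N b * ((fun b : ℤ => ((b:ℝ))^2) b / 2 + (fun b : ℤ => ((b:ℝ))^2) (b+1) / 4
          + (fun b : ℤ => ((b:ℝ))^2) (b-1) / 4) = r N b * (b:ℝ)^2 + (1/2) * r N b := by
      intro b _; push_cast; ring
    rw [Finset.sum_congr rfl e2, Finset.sum_add_distrib, ← Finset.mul_sum, r_mass N]
    linarith [ih]

lemma r_mom4 (N : ℕ) : ∑ a ∈ Finset.Icc (-(N:ℤ)) N, r N a * (a:ℝ)^4 ≤ 2*(N:ℝ)^2 := by
  induction N with
  | zero => simp [r_zero]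
  | succ N ih =>
    have h := r_step_sum N (fun b : ℤ => ((b:ℝ))^4)
    push_cast
    rw [h]
    have e2 : ∀ b ∈ Finset.Icc (-(N:ℤ)) N,
        r N b * ((fun b : ℤ => ((b:ℝ))^4) b / 2 + (fun b : ℤ => ((b:ℝ))^4) (b+1) / 4
          + (fun b : ℤ => ((b:ℝ))^4) (b-1) / 4)
        = r N b * (b:ℝ)^4 + 3 * (r N b * (b:ℝ)^2) + (1/2) * r N b := by
      intro b _; push_cast; ring
    rw [Finset.sum_congr rfl e2, Finset.sum_add_distrib, Finset.sum_add_distrib,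
      ← Finset.mul_sum, ← Finset.mul_sum, r_mass N]
    have := r_mom2 N
    have hN : (0:ℝ) ≤ (N:ℝ) := Nat.cast_nonneg N
    nlinarith [ih]

lemma r_mom6 (N : ℕ) : ∑ a ∈ Finset.Icc (-(N:ℤ)) N, r N a * (a:ℝ)^6 ≤ 8*(N:ℝ)^3 := by
  induction N with
  | zero => simp [r_zero]
  | succ N ih =>
    have h := r_step_sum N (fun b : ℤ => ((b:ℝ))^6)
    push_cast
    rw [h]
    have e2 : ∀ b ∈ Finset.Icc (-(N:ℤ)) N,
        r N b * ((fun b : ℤ => ((b:ℝ))^6) b / 2 + (fun b : ℤ => ((b:ℝ))^6) (b+1) / 4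
          + (fun b : ℤ => ((b:ℝ))^6) (b-1) / 4)
        = r N b * (b:ℝ)^6 + (15/2) * (r N b * (b:ℝ)^4) + (15/2) * (r N b * (b:ℝ)^2)
          + (1/2) * r N b := by
      intro b _; push_cast; ring
    rw [Finset.sum_congr rfl e2, Finset.sum_add_distrib, Finset.sum_add_distrib,
      Finset.sum_add_distrib, ← Finset.mul_sum, ← Finset.mul_sum, ← Finset.mul_sum, r_mass N]
    have h2 := r_mom2 N
    have h4 := r_mom4 N
    have hN : (0:ℝ) ≤ (N:ℝ) := Nat.cast_nonneg N
    nlinarith [ih]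

lemma r_mom6_any (N : ℕ) (F : Finset ℤ) :
    ∑ a ∈ F, r N a * (a:ℝ)^6 ≤ 8*((N:ℝ)+1)^3 := by
  have h1 : ∑ a ∈ F, r N a * (a:ℝ)^6 ≤ ∑ a ∈ F ∪ Finset.Icc (-(N:ℤ)) N, r N a * (a:ℝ)^6 := by
    apply Finset.sum_le_sum_of_subset_of_nonneg Finset.subset_union_left
    intro a _ _
    have : (0:ℝ) ≤ ((a:ℝ))^6 := by positivity
    exact mul_nonneg (r_nonneg N a) this
  have h2 := r_trim N (fun a => ((a:ℝ))^6) (F ∪ Finset.Icc (-(N:ℤ)) N) Finset.subset_union_right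
  refine h1.trans ?_
  rw [h2]
  refine (r_mom6 N).trans ?_
  have hN : (0:ℝ) ≤ (N:ℝ) := Nat.cast_nonneg N
  nlinarith

lemma r_tail (N : ℕ) (F : Finset ℤ) (s : ℝ) (hs : 0 < s) (hF : ∀ a ∈ F, s ≤ |(a:ℝ)|) :
    ∑ a ∈ F, r N a ≤ 8*((N:ℝ)+1)^3 / s^6 := by
  have hs6 : (0:ℝ) < s^6 := by positivity
  have h1 : ∀ a ∈ F, r N a ≤ r N a * (a:ℝ)^6 / s^6 := by
    intro a ha
    have h2 : s^6 ≤ (a:ℝ)^6 := by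
      calc s^6 ≤ |(a:ℝ)|^6 := pow_le_pow_left₀ hs.le (hF a ha) 6
        _ = (a:ℝ)^6 := by
            rw [← abs_pow]
            exact abs_of_nonneg (by positivity)
    rw [le_div_iff₀ hs6]
    exact mul_le_mul_of_nonneg_left h2 (r_nonneg N a)
  calc ∑ a ∈ F, r N a ≤ ∑ a ∈ F, r N a * (a:ℝ)^6 / s^6 := Finset.sum_le_sum h1
    _ = (∑ a ∈ F, r N a * (a:ℝ)^6) / s^6 := by rw [Finset.sum_div]
    _ ≤ 8*((N:ℝ)+1)^3 / s^6 :=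
        div_le_div_of_nonneg_right (r_mom6_any N F) hs6.le

lemma r_CK (A B : ℕ) (a : ℤ) :
    r (A+B) a = ∑ b ∈ Finset.Icc (-(A:ℤ)) A, r A b * r B (a - b) := by
  induction B generalizing a with
  | zero =>
    have e : ∀ b ∈ Finset.Icc (-(A:ℤ)) A, r A b * r 0 (a - b)
        = if b = a then r A b else 0 := by
      intro b _
      rw [r_zero]
      by_cases hb : b = a
      · simp [hb]
      · rw [if_neg (by omega), if_neg hb, mul_zero]
    rw [Nat.add_zero, Finset.sum_congr rfl e, Finset.sum_ite_eq']
    by_cases ha : a ∈ Finset.Icc (-(A:ℤ)) A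
    · rw [if_pos ha]
    · rw [if_neg ha]
      rw [Finset.mem_Icc] at ha
      exact r_support A a (lt_abs.mpr (by omega))
  | succ B ih =>
    have lhs : r (A+(B+1)) a = r (A+B) a / 2 + r (A+B) (a-1) / 4 + r (A+B) (a+1) / 4 := by
      rw [show A+(B+1) = (A+B)+1 from rfl, r_succ]
    rw [lhs, ih a, ih (a-1), ih (a+1), Finset.sum_div, Finset.sum_div, Finset.sum_div,
      ← Finset.sum_add_distrib, ← Finset.sum_add_distrib]
    apply Finset.sum_congr rfl
    intro b _
    rw [r_succ B (a-b), show a-1-b = a-b-1 from by ring, show a+1-b = a-b+1 from by ring]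
    ring

lemma r_point (N : ℕ) (a : ℤ) (ha : 1 ≤ |a|) :
    r N a ≤ 8192 * ((N:ℝ)+1)^3 / (Real.sqrt ((N:ℝ)+1) * (a:ℝ)^6) := by
  have haR : 1 ≤ |(a:ℝ)| := by rw [← Int.cast_abs]; exact_mod_cast ha
  set A := (N+1)/2 with hA
  set B := N/2 with hB
  have hAB : A + B = N := by omega
  have hBA : B ≤ A := by omega
  have hCK : r N a = ∑ b ∈ Finset.Icc (-(A:ℤ)) A, r A b * r B (a - b) := by
    have := r_CK A B a; rwa [hAB] at this
  set s : ℝ := |(a:ℝ)| / 2 with hs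
  have hspos : (0:ℝ) < s := by rw [hs]; linarith
  have hsqB : (0:ℝ) < Real.sqrt ((B:ℝ)+1) := Real.sqrt_pos.2 (by positivity)
  have hsqA : (0:ℝ) < Real.sqrt ((A:ℝ)+1) := Real.sqrt_pos.2 (by positivity)
  -- split the sum
  set P : ℤ → Prop := fun b => |(a:ℝ)| ≤ 2 * |(b:ℝ)| with hP
  have hsplit := Finset.sum_filter_add_sum_filter_not (Finset.Icc (-(A:ℤ)) A)
    (fun b => P b) (fun b => r A b * r B (a - b))
  rw [hCK, ← hsplit]
  have hpart1 : ∑ b ∈ (Finset.Icc (-(A:ℤ)) A).filter (fun b => P b), r A b * r B (a-b)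
      ≤ (1 / Real.sqrt ((B:ℝ)+1)) * (8*((A:ℝ)+1)^3 / s^6) := by
    calc ∑ b ∈ (Finset.Icc (-(A:ℤ)) A).filter (fun b => P b), r A b * r B (a-b)
        ≤ ∑ b ∈ (Finset.Icc (-(A:ℤ)) A).filter (fun b => P b), r A b * (1/Real.sqrt ((B:ℝ)+1)) := by
          apply Finset.sum_le_sum
          intro b _
          exact mul_le_mul_of_nonneg_left (by exact_mod_cast r_le_inv_sqrt B (a-b)) (r_nonneg A b)
      _ = (1/Real.sqrt ((B:ℝ)+1)) * ∑ b ∈ (Finset.Icc (-(A:ℤ)) A).filter (fun b => P b), r A b := by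
          rw [Finset.mul_sum]; apply Finset.sum_congr rfl; intro b _; ring
      _ ≤ (1/Real.sqrt ((B:ℝ)+1)) * (8*((A:ℝ)+1)^3 / s^6) := by
          apply mul_le_mul_of_nonneg_left _ (by positivity)
          apply r_tail A _ s hspos
          intro b hb
          rw [Finset.mem_filter] at hb
          have h2 : |(a:ℝ)| ≤ 2*|(b:ℝ)| := hb.2
          rw [hs]; linarith
  have hpart2 : ∑ b ∈ (Finset.Icc (-(A:ℤ)) A).filter (fun b => ¬ P b), r A b * r B (a-b)
      ≤ (1 / Real.sqrt ((A:ℝ)+1)) * (8*((B:ℝ)+1)^3 / s^6) := by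
    calc ∑ b ∈ (Finset.Icc (-(A:ℤ)) A).filter (fun b => ¬ P b), r A b * r B (a-b)
        ≤ ∑ b ∈ (Finset.Icc (-(A:ℤ)) A).filter (fun b => ¬ P b), (1/Real.sqrt ((A:ℝ)+1)) * r B (a-b) := by
          apply Finset.sum_le_sum
          intro b _
          exact mul_le_mul_of_nonneg_right (r_le_inv_sqrt A b) (r_nonneg B (a-b))
      _ = (1/Real.sqrt ((A:ℝ)+1)) * ∑ b ∈ (Finset.Icc (-(A:ℤ)) A).filter (fun b => ¬ P b), r B (a-b) := by
          rw [Finset.mul_sum]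
      _ ≤ (1/Real.sqrt ((A:ℝ)+1)) * (8*((B:ℝ)+1)^3 / s^6) := by
          apply mul_le_mul_of_nonneg_left _ (by positivity)
          rw [show ∑ b ∈ (Finset.Icc (-(A:ℤ)) A).filter (fun b => ¬ P b), r B (a-b)
            = ∑ c ∈ ((Finset.Icc (-(A:ℤ)) A).filter (fun b => ¬ P b)).image (fun b => a - b), r B c from
            (Finset.sum_image (by intro x _ y _ h; omega)).symm]
          apply r_tail B _ s hspos
          intro c hc
          rw [Finset.mem_image] at hc
          obtain ⟨b, hb, rfl⟩ := hc
          rw [Finset.mem_filter] at hb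
          have hnb : ¬ (|(a:ℝ)| ≤ 2*|(b:ℝ)|) := hb.2
          push_neg at hnb
          have hcast : ((a - b : ℤ) : ℝ) = (a:ℝ) - (b:ℝ) := by push_cast; ring
          rw [hcast, hs]
          have h1 : |(a:ℝ)| - |(b:ℝ)| ≤ |(a:ℝ) - (b:ℝ)| := by
            have := abs_sub_abs_le_abs_sub (a:ℝ) (b:ℝ); linarith
          linarith
  -- combine
  have hmono : 1 / Real.sqrt ((A:ℝ)+1) ≤ 1 / Real.sqrt ((B:ℝ)+1) := by
    apply one_div_le_one_div_of_le hsqB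
    apply Real.sqrt_le_sqrt
    have : (B:ℝ) ≤ (A:ℝ) := by exact_mod_cast hBA
    linarith
  have hB3A3 : 8*((B:ℝ)+1)^3 / s^6 ≤ 8*((A:ℝ)+1)^3 / s^6 := by
    gcongr <;> exact_mod_cast hBA
  have ha0 : (a:ℝ) ≠ 0 := by
    intro h; rw [h, abs_zero] at haR; linarith
  have ha6 : (0:ℝ) < (a:ℝ)^6 := by positivity
  have hs6eq : s^6 = (a:ℝ)^6 / 64 := by
    rw [hs, div_pow, pow_abs, abs_of_nonneg (by positivity : (0:ℝ) ≤ (a:ℝ)^6)]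
    norm_num
  have hkey : (1/Real.sqrt ((B:ℝ)+1)) * (8*((A:ℝ)+1)^3 / s^6)
      = 512*((A:ℝ)+1)^3 / (Real.sqrt ((B:ℝ)+1) * (a:ℝ)^6) := by
    rw [hs6eq]
    field_simp
    ring
  have htot : ∑ b ∈ (Finset.Icc (-(A:ℤ)) A).filter (fun b => P b), r A b * r B (a-b)
      + ∑ b ∈ (Finset.Icc (-(A:ℤ)) A).filter (fun b => ¬ P b), r A b * r B (a-b)
      ≤ 1024*((A:ℝ)+1)^3 / (Real.sqrt ((B:ℝ)+1) * (a:ℝ)^6) := by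
    have h2' : ∑ b ∈ (Finset.Icc (-(A:ℤ)) A).filter (fun b => ¬ P b), r A b * r B (a-b)
        ≤ (1 / Real.sqrt ((B:ℝ)+1)) * (8*((A:ℝ)+1)^3 / s^6) := by
      refine hpart2.trans ?_
      have h8B : (0:ℝ) ≤ 8*((B:ℝ)+1)^3 / s^6 := by positivity
      calc (1 / Real.sqrt ((A:ℝ)+1)) * (8*((B:ℝ)+1)^3 / s^6)
          ≤ (1 / Real.sqrt ((B:ℝ)+1)) * (8*((B:ℝ)+1)^3 / s^6) :=
            mul_le_mul_of_nonneg_right hmono h8B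
        _ ≤ (1 / Real.sqrt ((B:ℝ)+1)) * (8*((A:ℝ)+1)^3 / s^6) :=
            mul_le_mul_of_nonneg_left hB3A3 (by positivity)
    have := add_le_add hpart1 h2'
    rw [hkey] at this
    refine this.trans ?_
    rw [show (512:ℝ)*((A:ℝ)+1)^3 / (Real.sqrt ((B:ℝ)+1) * (a:ℝ)^6)
      + 512*((A:ℝ)+1)^3 / (Real.sqrt ((B:ℝ)+1) * (a:ℝ)^6)
      = 1024*((A:ℝ)+1)^3 / (Real.sqrt ((B:ℝ)+1) * (a:ℝ)^6) from by ring]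
  refine htot.trans ?_
  -- 1024 (A+1)^3 / (sqrt(B+1) a^6) ≤ 8192 (N+1)^3 / (sqrt(N+1) a^6)
  have hQ : (0:ℝ) < Real.sqrt ((N:ℝ)+1) := Real.sqrt_pos.2 (by positivity)
  have h27 : ((A:ℝ)+1)^3 ≤ (27/8)*((N:ℝ)+1)^3 := by
    have h1 : (A:ℝ) ≤ ((N:ℝ)+1)/2 := by
      have : 2*A ≤ N+1 := by omega
      have := (Nat.cast_le (α := ℝ)).mpr this
      push_cast at this
      linarith
    have h2 : (A:ℝ)+1 ≤ (3/2)*((N:ℝ)+1) := by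
      have hN : (0:ℝ) ≤ (N:ℝ) := Nat.cast_nonneg N
      linarith
    calc ((A:ℝ)+1)^3 ≤ ((3/2)*((N:ℝ)+1))^3 := by
          apply pow_le_pow_left₀ (by positivity) h2
      _ = (27/8)*((N:ℝ)+1)^3 := by ring
  have hsq2 : Real.sqrt ((N:ℝ)+1) ≤ 2 * Real.sqrt ((B:ℝ)+1) := by
    have h1 : ((N:ℝ)+1) ≤ 4*((B:ℝ)+1) := by
      have h0 : N+1 ≤ 4*B+4 := by omega
      have := (Nat.cast_le (α := ℝ)).mpr h0
      push_cast at this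
      linarith
    calc Real.sqrt ((N:ℝ)+1) ≤ Real.sqrt (4*((B:ℝ)+1)) := Real.sqrt_le_sqrt h1
      _ = Real.sqrt 4 * Real.sqrt ((B:ℝ)+1) := Real.sqrt_mul (by norm_num) _
      _ = 2 * Real.sqrt ((B:ℝ)+1) := by
          rw [show (4:ℝ) = 2^2 from by norm_num, Real.sqrt_sq (by norm_num)]
  rw [div_le_div_iff₀ (by positivity) (by positivity)]
  have hprod : ((A:ℝ)+1)^3 * Real.sqrt ((N:ℝ)+1)
      ≤ ((27/8)*((N:ℝ)+1)^3) * (2*Real.sqrt ((B:ℝ)+1)) :=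
    mul_le_mul h27 hsq2 hQ.le (by positivity)
  have hz : (0:ℝ) ≤ ((N:ℝ)+1)^3 * (Real.sqrt ((B:ℝ)+1) * (a:ℝ)^6) := by positivity
  nlinarith [mul_le_mul_of_nonneg_right hprod ha6.le, hz]


lemma unitVec_ne_zero (i : Fin 4) : unitVec i ≠ 0 := by
  intro h
  have := congrFun h i
  simp [unitVec] at this

lemma unitVec_inj {i j : Fin 4} (h : unitVec i = unitVec j) : i = j := by
  by_contra hne
  have := congrFun h i
  simp [unitVec, hne] at this

lemma unitVec_ne_neg (i j : Fin 4) : unitVec i ≠ -unitVec j := by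
  intro h
  have := congrFun h i
  by_cases hij : i = j <;> simp [unitVec, hij] at this

lemma neg_unitVec_ne_zero (i : Fin 4) : -unitVec i ≠ 0 := by
  intro h
  exact unitVec_ne_zero i (by rwa [neg_eq_zero] at h)

lemma stepProb_eq (d : Fin 4 → ℤ) :
    stepProb d = (if d = 0 then (1/2 : ℝ≥0∞) else 0)
      + ∑ i : Fin 4, ((if d = unitVec i then (1/16:ℝ≥0∞) else 0)
        + (if d = -unitVec i then (1/16:ℝ≥0∞) else 0)) := by
  by_cases h0 : d = 0
  · subst h0
    rw [stepProb, if_pos rfl, if_pos rfl]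
    have e : ∀ i ∈ (Finset.univ : Finset (Fin 4)),
        ((if (0 : Fin 4 → ℤ) = unitVec i then (1/16:ℝ≥0∞) else 0)
          + (if (0 : Fin 4 → ℤ) = -unitVec i then (1/16:ℝ≥0∞) else 0)) = 0 := by
      intro i _
      rw [if_neg (fun h => unitVec_ne_zero i h.symm),
        if_neg (fun h => neg_unitVec_ne_zero i h.symm), add_zero]
    rw [Finset.sum_congr rfl e]
    simp
  · rw [stepProb, if_neg h0]
    by_cases hex : ∃ i, d = unitVec i ∨ d = -unitVec i
    · rw [if_pos hex]
      obtain ⟨i0, hi0 | hi0⟩ := hex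
      · subst hi0
        rw [if_neg h0]
        have e : ∀ i ∈ (Finset.univ : Finset (Fin 4)),
            ((if unitVec i0 = unitVec i then (1/16:ℝ≥0∞) else 0)
              + (if unitVec i0 = -unitVec i then (1/16:ℝ≥0∞) else 0))
            = if i = i0 then (1/16:ℝ≥0∞) else 0 := by
          intro i _
          rw [if_neg (unitVec_ne_neg i0 i), add_zero]
          by_cases hii : i = i0
          · subst hii; rw [if_pos rfl, if_pos rfl]
          · rw [if_neg (fun h => hii (unitVec_inj h).symm), if_neg hii]
        rw [Finset.sum_congr rfl e, Finset.sum_ite_eq', if_pos (Finset.mem_univ i0), zero_add]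
      · subst hi0
        rw [if_neg h0]
        have e : ∀ i ∈ (Finset.univ : Finset (Fin 4)),
            ((if -unitVec i0 = unitVec i then (1/16:ℝ≥0∞) else 0)
              + (if -unitVec i0 = -unitVec i then (1/16:ℝ≥0∞) else 0))
            = if i = i0 then (1/16:ℝ≥0∞) else 0 := by
          intro i _
          rw [if_neg (fun h => unitVec_ne_neg i i0 h.symm), zero_add]
          by_cases hii : i = i0
          · subst hii; rw [if_pos rfl, if_pos rfl]
          · rw [if_neg (fun h => hii (unitVec_inj (neg_injective h)).symm), if_neg hii]
        rw [Finset.sum_congr rfl e, Finset.sum_ite_eq', if_pos (Finset.mem_univ i0), zero_add]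
    · rw [if_neg hex, if_neg h0]
      have e : ∀ i ∈ (Finset.univ : Finset (Fin 4)),
          ((if d = unitVec i then (1/16:ℝ≥0∞) else 0)
            + (if d = -unitVec i then (1/16:ℝ≥0∞) else 0)) = 0 := by
        intro i _
        rw [if_neg (fun h => hex ⟨i, Or.inl h⟩), if_neg (fun h => hex ⟨i, Or.inr h⟩), add_zero]
      rw [Finset.sum_congr rfl e]
      simp

lemma tsum_point (f : (Fin 4 → ℤ) → ℝ≥0∞) (z v : Fin 4 → ℤ) (c : ℝ≥0∞) :
    ∑' y : Fin 4 → ℤ, (if z - y = v then f y * c else 0) = f (z - v) * c := by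
  rw [tsum_eq_single (z - v)]
  · rw [if_pos (by rw [sub_sub_cancel])]
  · intro y hy
    rw [if_neg]
    intro h
    exact hy (by rw [← h, sub_sub_cancel])

lemma latticeQ_succ (t : ℕ) (z : Fin 4 → ℤ) :
    latticeQ (t+1) z = latticeQ t z * (1/2)
      + ∑ i : Fin 4, (latticeQ t (z - unitVec i) * (1/16)
          + latticeQ t (z + unitVec i) * (1/16)) := by
  show (∑' y : Fin 4 → ℤ, latticeQ t y * stepProb (z - y)) = _
  have e : ∀ y : Fin 4 → ℤ, latticeQ t y * stepProb (z - y)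
      = (if z - y = 0 then latticeQ t y * (1/2) else 0)
        + ∑ i : Fin 4, ((if z - y = unitVec i then latticeQ t y * (1/16) else 0)
          + (if z - y = -unitVec i then latticeQ t y * (1/16) else 0)) := by
    intro y
    rw [stepProb_eq, mul_add, Finset.mul_sum]
    congr 1
    · split <;> simp
    · apply Finset.sum_congr rfl
      intro i _
      rw [mul_add]
      congr 1 <;> (split <;> simp)
  rw [tsum_congr e, ENNReal.tsum_add,
    Summable.tsum_finsetSum (fun (i : Fin 4) _ => ENNReal.summable)]
  congr 1
  · rw [tsum_point (latticeQ t) z 0 (1/2), sub_zero]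
  · apply Finset.sum_congr rfl
    intro i _
    rw [ENNReal.tsum_add, tsum_point (latticeQ t) z (unitVec i) (1/16),
      tsum_point (latticeQ t) z (-unitVec i) (1/16), sub_neg_eq_add]

def cnt {t : ℕ} (c : Fin t → Fin 4) (i : Fin 4) : ℕ := ∑ k, if c k = i then 1 else 0

lemma cnt_le {t : ℕ} (c : Fin t → Fin 4) (i : Fin 4) : cnt c i ≤ t := by
  unfold cnt
  calc ∑ k : Fin t, (if c k = i then 1 else 0) ≤ ∑ _k : Fin t, 1 :=
        Finset.sum_le_sum (fun k _ => by split <;> norm_num)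
    _ = t := by simp

lemma cnt_cons {t : ℕ} (k : Fin 4) (c : Fin t → Fin 4) (i : Fin 4) :
    cnt (Fin.cons k c) i = (if k = i then 1 else 0) + cnt c i := by
  unfold cnt
  rw [Fin.sum_univ_succ]
  simp [Fin.cons_zero, Fin.cons_succ]

def gfun (t : ℕ) (z : Fin 4 → ℤ) : ℝ :=
  (∑ c : Fin t → Fin 4, ∏ i, r (cnt c i) (z i)) / 4^t

lemma gfun_nonneg (t : ℕ) (z : Fin 4 → ℤ) : 0 ≤ gfun t z := by
  unfold gfun
  apply div_nonneg _ (by positivity)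
  apply Finset.sum_nonneg
  intro c _
  exact Finset.prod_nonneg (fun i _ => r_nonneg _ _)

lemma gfun_zero (z : Fin 4 → ℤ) : gfun 0 z = if z = 0 then 1 else 0 := by
  unfold gfun
  rw [pow_zero, div_one, Fintype.sum_unique]
  simp only [cnt, Finset.univ_eq_empty, Finset.sum_empty]
  by_cases hz : z = 0
  · subst hz
    rw [if_pos rfl]
    apply Finset.prod_eq_one
    intro i _
    rw [r_zero]
    simp
  · rw [if_neg hz]
    obtain ⟨i0, hi0⟩ : ∃ i, z i ≠ 0 := by
      by_contra hall
      push_neg at hall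
      exact hz (funext hall)
    apply Finset.prod_eq_zero (Finset.mem_univ i0)
    rw [r_zero, if_neg hi0]

lemma gfun_support (t : ℕ) (z : Fin 4 → ℤ) (i0 : Fin 4) (h : (t:ℤ) < |z i0|) : gfun t z = 0 := by
  unfold gfun
  rw [Finset.sum_eq_zero, zero_div]
  intro c _
  apply Finset.prod_eq_zero (Finset.mem_univ i0)
  apply r_support
  calc ((cnt c i0 : ℕ) : ℤ) ≤ (t:ℤ) := by exact_mod_cast cnt_le c i0
    _ < |z i0| := h

lemma gfun_succ (t : ℕ) (z : Fin 4 → ℤ) :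
    gfun (t+1) z = gfun t z * (1/2)
      + ∑ i : Fin 4, (gfun t (z - unitVec i) * (1/16) + gfun t (z + unitVec i) * (1/16)) := by
  have hsum : ∑ c : Fin (t+1) → Fin 4, ∏ i, r (cnt c i) (z i)
      = ∑ k : Fin 4, ∑ c : Fin t → Fin 4, ∏ i, r (cnt (Fin.cons k c) i) (z i) := by
    rw [← (Fin.consEquiv (fun _ : Fin (t+1) => Fin 4)).sum_comp
      (fun c => ∏ i, r (cnt c i) (z i)), Fintype.sum_prod_type]
    rfl
  have hper : ∀ (k : Fin 4) (c : Fin t → Fin 4),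
      ∏ i, r (cnt (Fin.cons k c) i) (z i)
      = (∏ i, r (cnt c i) (z i)) / 2
        + (∏ i, r (cnt c i) ((z - unitVec k) i)) / 4
        + (∏ i, r (cnt c i) ((z + unitVec k) i)) / 4 := by
    intro k c
    have h1 : ∏ i, r (cnt (Fin.cons k c) i) (z i)
        = r (cnt c k + 1) (z k) * ∏ i ∈ Finset.univ.erase k, r (cnt c i) (z i) := by
      rw [← Finset.mul_prod_erase Finset.univ _ (Finset.mem_univ k)]
      congr 1
      · rw [cnt_cons, if_pos rfl, add_comm]
      · apply Finset.prod_congr rfl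
        intro i hi
        rw [cnt_cons, if_neg (fun h => (Finset.mem_erase.mp hi).1 h.symm), zero_add]
    have h2 : ∏ i, r (cnt c i) ((z - unitVec k) i)
        = r (cnt c k) (z k - 1) * ∏ i ∈ Finset.univ.erase k, r (cnt c i) (z i) := by
      rw [← Finset.mul_prod_erase Finset.univ _ (Finset.mem_univ k)]
      congr 1
      · congr 1
        show z k - unitVec k k = z k - 1
        rw [show unitVec k k = 1 from by rw [unitVec]; rw [if_pos rfl]]
      · apply Finset.prod_congr rfl
        intro i hi
        congr 1
        show z i - unitVec k i = z i
        rw [show unitVec k i = 0 from by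
          rw [unitVec]; rw [if_neg (Finset.mem_erase.mp hi).1], sub_zero]
    have h3 : ∏ i, r (cnt c i) ((z + unitVec k) i)
        = r (cnt c k) (z k + 1) * ∏ i ∈ Finset.univ.erase k, r (cnt c i) (z i) := by
      rw [← Finset.mul_prod_erase Finset.univ _ (Finset.mem_univ k)]
      congr 1
      · congr 1
        show z k + unitVec k k = z k + 1
        rw [show unitVec k k = 1 from by rw [unitVec]; rw [if_pos rfl]]
      · apply Finset.prod_congr rfl
        intro i hi
        congr 1
        show z i + unitVec k i = z i
        rw [show unitVec k i = 0 from by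
          rw [unitVec]; rw [if_neg (Finset.mem_erase.mp hi).1], add_zero]
    have h0 : ∏ i, r (cnt c i) (z i)
        = r (cnt c k) (z k) * ∏ i ∈ Finset.univ.erase k, r (cnt c i) (z i) :=
      (Finset.mul_prod_erase Finset.univ _ (Finset.mem_univ k)).symm
    rw [h1, h2, h3, h0, r_succ]
    ring
  unfold gfun
  rw [hsum]
  rw [Finset.sum_congr rfl (fun k _ => Finset.sum_congr rfl (fun c _ => hper k c))]
  have expand : ∀ k : Fin 4, ∑ c : Fin t → Fin 4,
      ((∏ i, r (cnt c i) (z i)) / 2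
        + (∏ i, r (cnt c i) ((z - unitVec k) i)) / 4
        + (∏ i, r (cnt c i) ((z + unitVec k) i)) / 4)
      = (∑ c : Fin t → Fin 4, ∏ i, r (cnt c i) (z i)) / 2
        + (∑ c : Fin t → Fin 4, ∏ i, r (cnt c i) ((z - unitVec k) i)) / 4
        + (∑ c : Fin t → Fin 4, ∏ i, r (cnt c i) ((z + unitVec k) i)) / 4 := by
    intro k
    rw [Finset.sum_add_distrib, Finset.sum_add_distrib, Finset.sum_div, Finset.sum_div,
      Finset.sum_div]
  rw [Finset.sum_congr rfl (fun k _ => expand k)]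
  rw [Finset.sum_add_distrib, Finset.sum_add_distrib, Finset.sum_const, Finset.card_univ]
  rw [show (Fintype.card (Fin 4)) = 4 from by simp, nsmul_eq_mul]
  rw [Finset.sum_add_distrib, ← Finset.sum_mul, ← Finset.sum_mul,
    ← Finset.sum_div, ← Finset.sum_div, ← Finset.sum_div, ← Finset.sum_div, pow_succ]
  ring

lemma latticeQ_eq (t : ℕ) (z : Fin 4 → ℤ) : latticeQ t z = ENNReal.ofReal (gfun t z) := by
  induction t generalizing z with
  | zero =>
    show (if z = 0 then (1:ℝ≥0∞) else 0) = _
    rw [gfun_zero]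
    split <;> simp
  | succ t ih =>
    rw [latticeQ_succ, gfun_succ]
    have hterm : ∀ y : Fin 4 → ℤ, ∀ c : ℝ, 0 ≤ c →
        ENNReal.ofReal (gfun t y * c) = ENNReal.ofReal (gfun t y) * ENNReal.ofReal c :=
      fun y c hc => ENNReal.ofReal_mul (gfun_nonneg t y)
    have h116 : ENNReal.ofReal (1/16 : ℝ) = (1/16 : ℝ≥0∞) := by
      rw [ENNReal.ofReal_div_of_pos (by norm_num), ENNReal.ofReal_one]
      norm_num [ENNReal.ofReal_ofNat]
    have h12 : ENNReal.ofReal (1/2 : ℝ) = (1/2 : ℝ≥0∞) := by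
      rw [ENNReal.ofReal_div_of_pos (by norm_num), ENNReal.ofReal_one]
      norm_num [ENNReal.ofReal_ofNat]
    have hnn : ∀ (i : Fin 4), 0 ≤ gfun t (z - unitVec i) * (1/16) + gfun t (z + unitVec i) * (1/16) :=
      fun i => add_nonneg (mul_nonneg (gfun_nonneg _ _) (by norm_num))
        (mul_nonneg (gfun_nonneg _ _) (by norm_num))
    rw [ENNReal.ofReal_add (mul_nonneg (gfun_nonneg _ _) (by norm_num))
      (Finset.sum_nonneg (fun i _ => hnn i))]
    congr 1
    · rw [hterm z _ (by norm_num), h12, ih]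
    · rw [ENNReal.ofReal_sum_of_nonneg (fun i _ => hnn i)]
      apply Finset.sum_congr rfl
      intro i _
      rw [ENNReal.ofReal_add (mul_nonneg (gfun_nonneg _ _) (by norm_num))
        (mul_nonneg (gfun_nonneg _ _) (by norm_num)),
        hterm _ _ (by norm_num : (0:ℝ) ≤ 1/16), hterm _ _ (by norm_num : (0:ℝ) ≤ 1/16),
        h116, ih, ih]


lemma count_prod (t : ℕ) (i j : Fin 4) (hij : i ≠ j) (x y : ℝ) :
    ∑ c : Fin t → Fin 4, x ^ (cnt c i) * y ^ (cnt c j) = (x + y + 2)^t := by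
  set w : Fin 4 → ℝ := fun m => if m = i then x else if m = j then y else 1 with hw
  have h1 : ∀ c : Fin t → Fin 4, x ^ cnt c i * y ^ cnt c j = ∏ k, w (c k) := by
    intro c
    have e : ∀ k : Fin t,
        w (c k) = x ^ (if c k = i then 1 else 0) * y ^ (if c k = j then 1 else 0) := by
      intro k
      show (if c k = i then x else if c k = j then y else 1) = _
      by_cases h1 : c k = i
      · rw [if_pos h1, if_pos h1, if_neg (fun h => hij (by rw [← h1, h]))]
        norm_num
      · rw [if_neg h1, if_neg h1, pow_zero, one_mul]
        by_cases h2 : c k = j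
        · rw [if_pos h2, if_pos h2, pow_one]
        · rw [if_neg h2, if_neg h2, pow_zero]
    rw [Finset.prod_congr rfl (fun k _ => e k), Finset.prod_mul_distrib,
      Finset.prod_pow_eq_pow_sum, Finset.prod_pow_eq_pow_sum]
    rfl
  rw [Finset.sum_congr rfl (fun c _ => h1 c)]
  have h2 := Finset.prod_univ_sum (fun _ : Fin t => (Finset.univ : Finset (Fin 4)))
    (fun _ m => w m)
  rw [Fintype.piFinset_univ] at h2
  rw [← h2, Finset.prod_const, Finset.card_univ, Fintype.card_fin]
  congr 1
  rw [← Finset.add_sum_erase _ _ (Finset.mem_univ i)]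
  rw [← Finset.add_sum_erase _ _ (Finset.mem_erase.mpr ⟨Ne.symm hij, Finset.mem_univ j⟩)]
  have hwi : w i = x := by rw [hw]; simp
  have hwj : w j = y := by rw [hw]; simp [Ne.symm hij, hij]
  have hrest : ∀ m ∈ ((Finset.univ.erase i).erase j), w m = 1 := by
    intro m hm
    rw [Finset.mem_erase, Finset.mem_erase] at hm
    show (if m = i then x else if m = j then y else 1) = 1
    rw [if_neg hm.2.1, if_neg hm.1]
  rw [hwi, hwj, Finset.sum_congr rfl hrest, Finset.sum_const]
  have hcard : ((Finset.univ.erase i).erase j).card = 2 := by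
    rw [Finset.card_erase_of_mem (Finset.mem_erase.mpr ⟨Ne.symm hij, Finset.mem_univ j⟩),
      Finset.card_erase_of_mem (Finset.mem_univ i), Finset.card_univ, Fintype.card_fin]
  rw [hcard]
  norm_num
  ring

lemma keyE (t : ℕ) (i j : Fin 4) (hij : i ≠ j) :
    ∑ c : Fin t → Fin 4, (1:ℝ) / (((cnt c i : ℝ) + 1) * ((cnt c j : ℝ) + 1))
      ≤ 16 * 4^t / (((t:ℝ)+1)*((t:ℝ)+2)) := by
  have hpow : ∀ (M : ℕ), ∫ u in (0:ℝ)..1, u^M = 1/((M:ℝ)+1) := by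
    intro M; rw [integral_pow]; norm_num
  -- inner identity for fixed x
  have hinner : ∀ x : ℝ, ∑ c : Fin t → Fin 4, x^(cnt c i) * (1/((cnt c j : ℝ)+1))
      = ((x+3)^(t+1) - (x+2)^(t+1))/((t:ℝ)+1) := by
    intro x
    have e1 : ∀ c : Fin t → Fin 4, x^(cnt c i) * (1/((cnt c j : ℝ)+1))
        = ∫ y in (0:ℝ)..1, x^(cnt c i) * y^(cnt c j) := by
      intro c
      rw [intervalIntegral.integral_const_mul, hpow]
    rw [Finset.sum_congr rfl (fun c _ => e1 c),
      ← intervalIntegral.integral_finset_sum (fun c _ => (by fun_prop :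
        Continuous (fun y : ℝ => x^(cnt c i) * y^(cnt c j))).intervalIntegrable 0 1)]
    have e2 : ∀ y : ℝ, ∑ c : Fin t → Fin 4, x^(cnt c i) * y^(cnt c j) = (x + y + 2)^t :=
      fun y => count_prod t i j hij x y
    rw [intervalIntegral.integral_congr (g := fun y => (y + (x+2))^t)
      (fun y _ => by rw [e2 y]; ring_nf)]
    rw [intervalIntegral.integral_comp_add_right (fun u => u^t) (x+2), integral_pow]
    ring_nf
  -- outer swap
  have houter : ∑ c : Fin t → Fin 4, (1:ℝ) / (((cnt c i : ℝ) + 1) * ((cnt c j : ℝ) + 1))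
      = ∫ x in (0:ℝ)..1, ((x+3)^(t+1) - (x+2)^(t+1))/((t:ℝ)+1) := by
    have e1 : ∀ c : Fin t → Fin 4, (1:ℝ) / (((cnt c i : ℝ) + 1) * ((cnt c j : ℝ) + 1))
        = ∫ x in (0:ℝ)..1, x^(cnt c i) * (1/((cnt c j : ℝ)+1)) := by
      intro c
      rw [intervalIntegral.integral_mul_const, hpow]
      rw [div_mul_div_comm, one_mul]
    rw [Finset.sum_congr rfl (fun c _ => e1 c),
      ← intervalIntegral.integral_finset_sum (fun c _ => (by fun_prop :
        Continuous (fun x : ℝ => x^(cnt c i) * (1/((cnt c j : ℝ)+1)))).intervalIntegrable 0 1)]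
    exact intervalIntegral.integral_congr (fun x _ => hinner x)
  rw [houter]
  have hmono : ∫ x in (0:ℝ)..1, ((x+3)^(t+1) - (x+2)^(t+1))/((t:ℝ)+1)
      ≤ ∫ x in (0:ℝ)..1, (x+3)^(t+1)/((t:ℝ)+1) := by
    apply intervalIntegral.integral_mono_on (by norm_num)
    · exact ((by fun_prop : Continuous (fun x : ℝ =>
        ((x+3)^(t+1) - (x+2)^(t+1))/((t:ℝ)+1))).intervalIntegrable 0 1)
    · exact ((by fun_prop : Continuous (fun x : ℝ =>
        (x+3)^(t+1)/((t:ℝ)+1))).intervalIntegrable 0 1)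
    · intro x hx
      apply div_le_div_of_nonneg_right _ (by positivity)
      have : (0:ℝ) ≤ (x+2)^(t+1) := by
        have : (0:ℝ) ≤ x + 2 := by cases hx; linarith
        positivity
      linarith
  refine hmono.trans ?_
  have hval : ∫ x in (0:ℝ)..1, (x+3)^(t+1)/((t:ℝ)+1)
      = ((4:ℝ)^(t+2) - 3^(t+2))/(((t:ℝ)+2)*((t:ℝ)+1)) := by
    rw [intervalIntegral.integral_div]
    rw [intervalIntegral.integral_congr (g := fun x => (x + 3)^(t+1)) (fun x _ => rfl)]
    rw [intervalIntegral.integral_comp_add_right (fun u => u^(t+1)) 3, integral_pow, div_div]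
    push_cast
    norm_num
    ring_nf
  rw [hval]
  have h1 : ((4:ℝ)^(t+2) - 3^(t+2)) ≤ 16 * 4^t := by
    have : ((4:ℝ)^(t+2)) = 16 * 4^t := by rw [pow_add]; ring
    have h3 : (0:ℝ) ≤ (3:ℝ)^(t+2) := by positivity
    linarith
  have h2 : (0:ℝ) < ((t:ℝ)+1)*((t:ℝ)+2) := by positivity
  rw [div_le_div_iff₀ (by positivity) h2]
  have h3 : (0:ℝ) ≤ ((t:ℝ)+1)*((t:ℝ)+2) := h2.le
  nlinarith [h1]

lemma amgm (u v : ℝ) (hu : 0 < u) (hv : 0 < v) :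
    (1/Real.sqrt u) * (1/Real.sqrt v) ≤ (1/u + 1/v)/2 := by
  have hs : (0:ℝ) < Real.sqrt (u*v) := Real.sqrt_pos.2 (by positivity)
  have hsq : Real.sqrt (u*v)^2 = u*v := Real.sq_sqrt (by positivity)
  have h2 : 2*Real.sqrt (u*v) ≤ u + v := by
    have hnn := sq_nonneg (Real.sqrt u - Real.sqrt v)
    have hu2 := Real.sq_sqrt hu.le
    have hv2 := Real.sq_sqrt hv.le
    have hm : Real.sqrt u * Real.sqrt v = Real.sqrt (u*v) := (Real.sqrt_mul hu.le v).symm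
    nlinarith
  rw [div_mul_div_comm, one_mul, ← Real.sqrt_mul hu.le]
  rw [div_add_div _ _ (ne_of_gt hu) (ne_of_gt hv), div_div, div_le_div_iff₀ hs (by positivity)]
  nlinarith [mul_le_mul_of_nonneg_right h2 hs.le, hsq]

lemma keyW (t : ℕ) :
    ∑ c : Fin t → Fin 4, ∏ i : Fin 4, (1 / Real.sqrt ((cnt c i : ℝ) + 1))
      ≤ 16 * 4^t / (((t:ℝ)+1)*((t:ℝ)+2)) := by
  have e : ∀ (p q : ℕ), (1/Real.sqrt ((p:ℝ)+1)) * (1/Real.sqrt ((q:ℝ)+1))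
      = 1/Real.sqrt (((p:ℝ)+1)*((q:ℝ)+1)) := by
    intro p q
    rw [div_mul_div_comm, one_mul, ← Real.sqrt_mul (by positivity)]
  have hper : ∀ c : Fin t → Fin 4, ∏ i : Fin 4, (1/Real.sqrt ((cnt c i : ℝ)+1))
      ≤ ((1:ℝ)/(((cnt c 0 : ℝ)+1)*((cnt c 1 : ℝ)+1))
          + 1/(((cnt c 2 : ℝ)+1)*((cnt c 3 : ℝ)+1)))/2 := by
    intro c
    rw [Fin.prod_univ_four]
    calc (1/Real.sqrt ((cnt c 0 : ℝ)+1)) * (1/Real.sqrt ((cnt c 1 : ℝ)+1))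
          * (1/Real.sqrt ((cnt c 2 : ℝ)+1)) * (1/Real.sqrt ((cnt c 3 : ℝ)+1))
        = ((1/Real.sqrt ((cnt c 0 : ℝ)+1)) * (1/Real.sqrt ((cnt c 1 : ℝ)+1)))
          * ((1/Real.sqrt ((cnt c 2 : ℝ)+1)) * (1/Real.sqrt ((cnt c 3 : ℝ)+1))) := by ring
      _ = (1/Real.sqrt (((cnt c 0 : ℝ)+1)*((cnt c 1 : ℝ)+1)))
          * (1/Real.sqrt (((cnt c 2 : ℝ)+1)*((cnt c 3 : ℝ)+1))) := by
          rw [e (cnt c 0) (cnt c 1), e (cnt c 2) (cnt c 3)]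
      _ ≤ _ := amgm _ _ (by positivity) (by positivity)
  calc ∑ c : Fin t → Fin 4, ∏ i : Fin 4, (1 / Real.sqrt ((cnt c i : ℝ) + 1))
      ≤ ∑ c : Fin t → Fin 4, ((1:ℝ)/(((cnt c 0 : ℝ)+1)*((cnt c 1 : ℝ)+1))
          + 1/(((cnt c 2 : ℝ)+1)*((cnt c 3 : ℝ)+1)))/2 := Finset.sum_le_sum (fun c _ => hper c)
    _ = ((∑ c : Fin t → Fin 4, (1:ℝ)/(((cnt c 0 : ℝ)+1)*((cnt c 1 : ℝ)+1)))
        + (∑ c : Fin t → Fin 4, (1:ℝ)/(((cnt c 2 : ℝ)+1)*((cnt c 3 : ℝ)+1))))/2 := by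
        rw [← Finset.sum_div, Finset.sum_add_distrib]
    _ ≤ (16 * 4^t / (((t:ℝ)+1)*((t:ℝ)+2)) + 16 * 4^t / (((t:ℝ)+1)*((t:ℝ)+2)))/2 := by
        apply div_le_div_of_nonneg_right _ (by norm_num)
        exact add_le_add (keyE t 0 1 (by decide)) (keyE t 2 3 (by decide))
    _ = 16 * 4^t / (((t:ℝ)+1)*((t:ℝ)+2)) := by ring


lemma invsq_nat (m : ℕ) :
    ∑ k ∈ Finset.range m, (1:ℝ)/((k:ℝ)+1)^2 ≤ 2 - 2/((m:ℝ)+1) := by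
  induction m with
  | zero => simp
  | succ m ih =>
    rw [Finset.sum_range_succ]
    have h1 : (1:ℝ)/((m:ℝ)+1)^2 ≤ 2/((m:ℝ)+1) - 2/((m:ℝ)+2) := by
      have hm : (0:ℝ) < (m:ℝ)+1 := by positivity
      have hm2 : (0:ℝ) < (m:ℝ)+2 := by positivity
      rw [div_sub_div _ _ (ne_of_gt hm) (ne_of_gt hm2), div_le_div_iff₀ (by positivity) (by positivity)]
      ring_nf
      nlinarith [Nat.cast_nonneg (α := ℝ) m]
    push_cast
    rw [show ((m:ℝ)+1+1) = (m:ℝ)+2 from by ring]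
    linarith

lemma invsix_sum (M : ℤ) :
    ∑ k ∈ (Finset.Icc (-M) M).erase 0, (1:ℝ)/(k:ℝ)^6 ≤ 4 := by
  have hterm : ∀ k ∈ (Finset.Icc (-M) M).erase 0, (1:ℝ)/(k:ℝ)^6 ≤ 1/(k:ℝ)^2 := by
    intro k hk
    rw [Finset.mem_erase] at hk
    have hk1 : (1:ℝ) ≤ (k:ℝ)^2 := by
      have h0 : 1 ≤ |k| := Int.one_le_abs hk.1
      have h2 : (1:ℝ) ≤ |(k:ℝ)| := by rw [← Int.cast_abs]; exact_mod_cast h0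
      nlinarith [sq_abs (k:ℝ)]
    have h26 : (k:ℝ)^2 ≤ (k:ℝ)^6 := by
      nlinarith [mul_nonneg (mul_nonneg (sub_nonneg.mpr hk1) (sq_nonneg (k:ℝ)))
        (by positivity : (0:ℝ) ≤ (k:ℝ)^2+1)]
    apply div_le_div_of_nonneg_left one_pos.le (by nlinarith) h26
  refine (Finset.sum_le_sum hterm).trans ?_
  have hsplit : (Finset.Icc (-M) M).erase 0
      = Finset.Icc (-M) (-1) ∪ Finset.Icc 1 M := by
    ext k
    simp only [Finset.mem_erase, Finset.mem_Icc, Finset.mem_union]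
    omega
  rw [hsplit, Finset.sum_union (by
    rw [Finset.disjoint_left]
    intro k hk hk2
    rw [Finset.mem_Icc] at hk hk2
    omega)]
  have hpos : ∑ k ∈ Finset.Icc (1:ℤ) M, (1:ℝ)/(k:ℝ)^2 ≤ 2 := by
    have hmap : Finset.Icc (1:ℤ) M
        = (Finset.range M.toNat).map ⟨fun m : ℕ => (m:ℤ)+1, (show Function.Injective (fun m : ℕ => (m:ℤ)+1) from fun a b h => by dsimp only at h; omega)⟩ := by
      ext k
      simp only [Finset.mem_Icc, Finset.mem_map, Finset.mem_range, Function.Embedding.coeFn_mk]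
      constructor
      · intro h
        exact ⟨(k-1).toNat, by omega, by omega⟩
      · rintro ⟨m, hm, rfl⟩
        omega
    rw [hmap, Finset.sum_map]
    simp only [Function.Embedding.coeFn_mk]
    push_cast
    have h1 := invsq_nat M.toNat
    have h0 : (0:ℝ) ≤ 2/((M.toNat:ℝ)+1) := by positivity
    linarith
  have hneg : ∑ k ∈ Finset.Icc (-M) (-1:ℤ), (1:ℝ)/(k:ℝ)^2 ≤ 2 := by
    have hmap : Finset.Icc (-M) (-1:ℤ)
        = (Finset.range M.toNat).map ⟨fun m : ℕ => -((m:ℤ)+1), (show Function.Injective (fun m : ℕ => -((m:ℤ)+1)) from fun a b h => by dsimp only at h; omega)⟩ := by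
      ext k
      simp only [Finset.mem_Icc, Finset.mem_map, Finset.mem_range, Function.Embedding.coeFn_mk]
      constructor
      · intro h
        exact ⟨(-k-1).toNat, by omega, by omega⟩
      · rintro ⟨m, hm, rfl⟩
        omega
    rw [hmap, Finset.sum_map]
    simp only [Function.Embedding.coeFn_mk]
    push_cast
    simp only [neg_sq]
    have h1 := invsq_nat M.toNat
    have h0 : (0:ℝ) ≤ 2/((M.toNat:ℝ)+1) := by positivity
    linarith
  linarith

lemma Tsum_bound (n : ℕ) (hn : 2 ≤ n) (v : ℤ) (hv : 2*|v| ≤ (n:ℤ)) (N t : ℕ) (hN : N ≤ t) :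
    ∑ a ∈ ((Finset.Icc (-(t:ℤ)) t).filter (fun a : ℤ => (a : ZMod n) = ((v : ℤ) : ZMod n))).erase v,
      r N a ≤ 2097152 * ((N:ℝ)+1)^3 / (Real.sqrt ((N:ℝ)+1) * (n:ℝ)^6) := by
  set E := ((Finset.Icc (-(t:ℤ)) t).filter (fun a : ℤ => (a : ZMod n) = ((v : ℤ) : ZMod n))).erase v
    with hE
  set K : ℤ → ℤ := fun a => (a - v) / n with hK
  set D : ℝ := 524288 * ((N:ℝ)+1)^3 / (Real.sqrt ((N:ℝ)+1) * (n:ℝ)^6) with hD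
  have hsqN : (0:ℝ) < Real.sqrt ((N:ℝ)+1) := Real.sqrt_pos.2 (by positivity)
  have hnR : (0:ℝ) < (n:ℝ) := by positivity
  -- facts about elements of E
  have hfacts : ∀ a ∈ E, a = v + K a * n ∧ K a ≠ 0 ∧ |K a| * (n:ℤ) ≤ 2*|a| ∧ |K a| ≤ (t:ℤ) + n := by
    intro a ha
    rw [hE, Finset.mem_erase, Finset.mem_filter, Finset.mem_Icc] at ha
    obtain ⟨hav, ⟨ha1, ha2⟩, hmod⟩ := ha
    have hdvd : (n:ℤ) ∣ (a - v) := by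
      have := (ZMod.intCast_eq_intCast_iff a v n).mp hmod
      exact Int.ModEq.dvd this.symm
    have hk : a = v + K a * n := by
      rw [hK]
      have h1 := Int.ediv_mul_cancel hdvd
      dsimp only
      linarith
    have hk0 : K a ≠ 0 := by
      intro h
      rw [h] at hk
      omega
    have habs1 : |K a * (n:ℤ)| ≤ |a| + |v| := by
      calc |K a * (n:ℤ)| = |a - v| := by rw [show K a * (n:ℤ) = a - v from by linarith [hk]]
        _ ≤ |a| + |v| := abs_sub a v
    have habs2 : |K a * (n:ℤ)| = |K a| * n := by
      rw [abs_mul, abs_of_nonneg (by positivity : (0:ℤ) ≤ (n:ℤ))]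
    have hk1 : 1 ≤ |K a| := Int.one_le_abs hk0
    have hmono : (n:ℤ) ≤ |K a| * n := le_mul_of_one_le_left (by positivity) hk1
    have hmain : |K a| * (n:ℤ) ≤ 2*|a| := by linarith [habs1, habs2, hv, hmono]
    refine ⟨hk, hk0, hmain, ?_⟩
    have hat : |a| ≤ (t:ℤ) := abs_le.mpr ⟨ha1, ha2⟩
    have h2k : 2*|K a| ≤ |K a| * (n:ℤ) := by
      calc 2*|K a| = |K a| * 2 := by ring
        _ ≤ |K a| * n := by
          apply mul_le_mul_of_nonneg_left _ (abs_nonneg _)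
          exact_mod_cast hn
    have hn0 : (0:ℤ) ≤ (n:ℤ) := by positivity
    linarith
  -- pointwise bound
  have hpt : ∀ a ∈ E, r N a ≤ D * ((1:ℝ)/((K a : ℤ):ℝ)^6) := by
    intro a ha
    obtain ⟨hk, hk0, hmain, _⟩ := hfacts a ha
    have hn2 : (2:ℤ) ≤ (n:ℤ) := by exact_mod_cast hn
    have ha1 : 1 ≤ |a| := by
      have h1 : (n:ℤ) ≤ |K a| * n := le_mul_of_one_le_left (by positivity) (Int.one_le_abs hk0)
      linarith
    have hr := r_point N a ha1
    refine hr.trans ?_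
    have hKn : |(K a : ℝ)| * (n:ℝ) ≤ 2*|(a:ℝ)| := by
      have h2 : ((|K a| * (n:ℤ) : ℤ) : ℝ) ≤ ((2*|a| : ℤ) : ℝ) := by exact_mod_cast hmain
      push_cast at h2
      linarith
    have hp6 : ((K a : ℤ):ℝ)^6 * (n:ℝ)^6 ≤ 64 * ((a:ℤ):ℝ)^6 := by
      have h6 := pow_le_pow_left₀ (by positivity) hKn 6
      rw [mul_pow, mul_pow] at h6
      have e1 : |(K a:ℝ)|^6 = (K a:ℝ)^6 := by
        rw [pow_abs, abs_of_nonneg (by positivity)]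
      have e2 : |(a:ℝ)|^6 = (a:ℝ)^6 := by
        rw [pow_abs, abs_of_nonneg (by positivity)]
      rw [e1, e2] at h6
      norm_num at h6
      linarith
    have hK6 : (0:ℝ) < ((K a : ℤ):ℝ)^6 := by
      have : (K a : ℝ) ≠ 0 := by exact_mod_cast hk0
      positivity
    have ha6 : (0:ℝ) < ((a:ℤ):ℝ)^6 := by
      have ha0 : a ≠ 0 := by
        intro h0
        rw [h0] at ha1
        simp at ha1
      have : (a : ℝ) ≠ 0 := by exact_mod_cast ha0
      positivity
    rw [hD]
    rw [div_mul_eq_mul_div, mul_one_div, div_div]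
    rw [div_le_div_iff₀ (by positivity) (by positivity)]
    nlinarith [hsqN, sq_nonneg ((N:ℝ)+1), pow_pos hnR 6,
      mul_le_mul_of_nonneg_left hp6 (mul_nonneg (by positivity : (0:ℝ) ≤ 8192*((N:ℝ)+1)^3) hsqN.le)]
  -- sum the pointwise bounds and reindex
  have hsum1 : ∑ a ∈ E, r N a ≤ D * ∑ a ∈ E, (1:ℝ)/((K a : ℤ):ℝ)^6 := by
    rw [Finset.mul_sum]
    exact Finset.sum_le_sum hpt
  have hinj : ∀ a ∈ E, ∀ b ∈ E, K a = K b → a = b := by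
    intro a ha b hb hab
    have h1 := (hfacts a ha).1
    have h2 := (hfacts b hb).1
    rw [h1, h2, hab]
  have himg : ∑ a ∈ E, (1:ℝ)/((K a : ℤ):ℝ)^6
      = ∑ k ∈ E.image K, (1:ℝ)/((k:ℤ):ℝ)^6 := by rw [Finset.sum_image hinj]
  have hsub : E.image K ⊆ (Finset.Icc (-((t:ℤ)+n)) ((t:ℤ)+n)).erase 0 := by
    intro k hk
    rw [Finset.mem_image] at hk
    obtain ⟨a, ha, rfl⟩ := hk
    obtain ⟨_, hk0, _, hkle⟩ := hfacts a ha
    rw [Finset.mem_erase, Finset.mem_Icc]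
    constructor
    · exact hk0
    · exact abs_le.mp hkle
  have hsum2 : ∑ k ∈ E.image K, (1:ℝ)/((k:ℤ):ℝ)^6 ≤ 4 := by
    refine le_trans (Finset.sum_le_sum_of_subset_of_nonneg hsub (fun k _ _ => by positivity)) ?_
    exact invsix_sum ((t:ℤ)+n)
  calc ∑ a ∈ E, r N a ≤ D * ∑ a ∈ E, (1:ℝ)/((K a : ℤ):ℝ)^6 := hsum1
    _ ≤ D * 4 := by
        apply mul_le_mul_of_nonneg_left _ (by rw [hD]; positivity)
        rw [himg]
        exact hsum2
    _ = 2097152 * ((N:ℝ)+1)^3 / (Real.sqrt ((N:ℝ)+1) * (n:ℝ)^6) := by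
        rw [hD]
        ring


lemma prod4_le {a b c d a' b' c' d' : ℝ} (ha : a ≤ a') (hb : b ≤ b') (hc : c ≤ c') (hd : d ≤ d')
    (hb0 : 0 ≤ b) (hc0 : 0 ≤ c) (hd0 : 0 ≤ d)
    (ha'0 : 0 ≤ a') (hb'0 : 0 ≤ b') (hc'0 : 0 ≤ c') : a*b*c*d ≤ a'*b'*c'*d' :=
  mul_le_mul (mul_le_mul (mul_le_mul ha hb hb0 ha'0) hc hc0 (mul_nonneg ha'0 hb'0)) hd hd0
    (mul_nonneg (mul_nonneg ha'0 hb'0) hc'0)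

lemma master4 (R T S w : Fin 4 → ℝ) (A β : ℝ)
    (hSd : ∀ i, S i = R i + T i) (hR0 : ∀ i, 0 ≤ R i) (hT0 : ∀ i, 0 ≤ T i)
    (hw0 : ∀ i, 0 ≤ w i) (hA : 0 ≤ A) (hβ : 0 ≤ β)
    (hRw : ∀ i, R i ≤ A * w i) (hSw : ∀ i, S i ≤ A * w i) (hTw : ∀ i, T i ≤ β * w i) :
    ∏ i, S i ≤ ∏ i, R i + (4*A^3*β) * ∏ i, w i := by
  rw [Fin.prod_univ_four, Fin.prod_univ_four, Fin.prod_univ_four]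
  have hS0 : ∀ i, 0 ≤ S i := fun i => (hSd i) ▸ add_nonneg (hR0 i) (hT0 i)
  have key : S 0 * S 1 * S 2 * S 3
      = R 0 * R 1 * R 2 * R 3
        + (T 0 * S 1 * S 2 * S 3 + R 0 * T 1 * S 2 * S 3
          + R 0 * R 1 * T 2 * S 3 + R 0 * R 1 * R 2 * T 3) := by
    rw [hSd 0, hSd 1, hSd 2, hSd 3]
    ring
  rw [key]
  have h1 : T 0 * S 1 * S 2 * S 3 ≤ (β*w 0)*(A*w 1)*(A*w 2)*(A*w 3) :=
    prod4_le (hTw 0) (hSw 1) (hSw 2) (hSw 3) (hS0 1) (hS0 2) (hS0 3)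
      (mul_nonneg hβ (hw0 0)) (mul_nonneg hA (hw0 1)) (mul_nonneg hA (hw0 2))
  have h2 : R 0 * T 1 * S 2 * S 3 ≤ (A*w 0)*(β*w 1)*(A*w 2)*(A*w 3) :=
    prod4_le (hRw 0) (hTw 1) (hSw 2) (hSw 3) (hT0 1) (hS0 2) (hS0 3)
      (mul_nonneg hA (hw0 0)) (mul_nonneg hβ (hw0 1)) (mul_nonneg hA (hw0 2))
  have h3 : R 0 * R 1 * T 2 * S 3 ≤ (A*w 0)*(A*w 1)*(β*w 2)*(A*w 3) :=
    prod4_le (hRw 0) (hRw 1) (hTw 2) (hSw 3) (hR0 1) (hT0 2) (hS0 3)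
      (mul_nonneg hA (hw0 0)) (mul_nonneg hA (hw0 1)) (mul_nonneg hβ (hw0 2))
  have h4 : R 0 * R 1 * R 2 * T 3 ≤ (A*w 0)*(A*w 1)*(A*w 2)*(β*w 3) :=
    prod4_le (hRw 0) (hRw 1) (hRw 2) (hTw 3) (hR0 1) (hR0 2) (hT0 3)
      (mul_nonneg hA (hw0 0)) (mul_nonneg hA (hw0 1)) (mul_nonneg hA (hw0 2))
  have e1 : (β*w 0)*(A*w 1)*(A*w 2)*(A*w 3) = A^3*β*(w 0*w 1*w 2*w 3) := by ring
  have e2 : (A*w 0)*(β*w 1)*(A*w 2)*(A*w 3) = A^3*β*(w 0*w 1*w 2*w 3) := by ring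
  have e3 : (A*w 0)*(A*w 1)*(β*w 2)*(A*w 3) = A^3*β*(w 0*w 1*w 2*w 3) := by ring
  have e4 : (A*w 0)*(A*w 1)*(A*w 2)*(β*w 3) = A^3*β*(w 0*w 1*w 2*w 3) := by ring
  rw [e1] at h1; rw [e2] at h2; rw [e3] at h3; rw [e4] at h4
  linarith


end St2
end

set_option maxHeartbeats 2000000 in
/-- Comparison of transition probabilities on `ℤ⁴` and on the torus:
`q_t(x,0) ≤ p_{t,n}(x',0) ≤ q_t(x,0) + C/n⁴` for `t ≤ C' n²`. -/
theorem statement2 (C' : ℝ) (hC' : 0 < C') :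
    ∃ C : ℝ, ∀ n : ℕ, 2 ≤ n → ∀ x : Fin 4 → ℤ,
      (∀ i, 2 * |x i| ≤ (n : ℤ)) → ∀ t : ℕ, (t : ℝ) ≤ C' * (n : ℝ) ^ 2 →
        lq t x 0 ≤ tp t n (torusProj n x) 0 ∧
        tp t n (torusProj n x) 0 ≤ lq t x 0 + ENNReal.ofReal C / (n : ℝ≥0∞) ^ 4 := by
  classical
  set B₁ : ℝ := 2097152 with hB₁
  set A : ℝ := 1 + B₁*(C'+1)^3 with hA
  have hA1 : (1:ℝ) ≤ A := by
    have h0 : (0:ℝ) ≤ B₁*(C'+1)^3 := by rw [hB₁]; positivity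
    rw [hA]; linarith
  have hA0 : (0:ℝ) ≤ A := by linarith
  refine ⟨64*A^3*B₁*(C'+1), ?_⟩
  intro n hn x hx t ht
  have hnR : (0:ℝ) < (n:ℝ) := by positivity
  have hn1 : (1:ℝ) ≤ (n:ℝ)^2 := by
    have : (1:ℝ) ≤ (n:ℝ) := by exact_mod_cast (by omega : 1 ≤ n)
    nlinarith
  have htp1 : (t:ℝ)+1 ≤ (C'+1)*(n:ℝ)^2 := by nlinarith
  -- the projected target
  have hcast : ∀ (i : Fin 4), ((-(x i) : ℤ) : ZMod n) = (0:ZMod n) - ((x i : ℤ) : ZMod n) := by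
    intro i; push_cast; ring
  -- lower bound
  have hproj : torusProj n (0 - x) = (0:Torus n) - torusProj n x := by
    funext i
    show ((0 - x) i : ZMod n) = (0:ZMod n) - (x i : ZMod n)
    rw [Pi.sub_apply, Pi.zero_apply, zero_sub, zero_sub]
    push_cast
    ring
  have hlow : lq t x 0 ≤ tp t n (torusProj n x) 0 := by
    have h1 : lq t x 0
        = (if torusProj n (0 - x) = (0:Torus n) - torusProj n x
            then latticeQ t (0-x) else 0) := by
      rw [if_pos hproj]
      rfl
    rw [h1]
    exact ENNReal.le_tsum (0 - x)
  refine ⟨hlow, ?_⟩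
  -- setup finsets
  set L : Fin 4 → Finset ℤ := fun i =>
    (Finset.Icc (-(t:ℤ)) (t:ℤ)).filter (fun a : ℤ => (a : ZMod n) = ((-(x i) : ℤ) : ZMod n))
    with hL
  set box : Finset (Fin 4 → ℤ) := Fintype.piFinset (fun _ => Finset.Icc (-(t:ℤ)) (t:ℤ)) with hbox
  -- tp as a real sum
  have htp : tp t n (torusProj n x) 0
      = ENNReal.ofReal ((∑ c : Fin t → Fin 4,
          ∏ i, ∑ a ∈ L i, St2.r (St2.cnt c i) a)/4^t) := by
    have h1 : tp t n (torusProj n x) 0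
        = ∑ z ∈ box, (if torusProj n z = (0:Torus n) - torusProj n x
            then latticeQ t z else 0) := by
      apply tsum_eq_sum
      intro z hz
      rw [hbox, Fintype.mem_piFinset] at hz
      push_neg at hz
      obtain ⟨i0, hi0⟩ := hz
      rw [Finset.mem_Icc] at hi0
      have hz0 : latticeQ t z = 0 := by
        rw [St2.latticeQ_eq, St2.gfun_support t z i0 (by rw [lt_abs]; omega),
          ENNReal.ofReal_zero]
      split <;> simp [hz0]
    have hfil : box.filter (fun z => torusProj n z = (0:Torus n) - torusProj n x)
        = Fintype.piFinset L := by
      ext z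
      rw [Finset.mem_filter, hbox, Fintype.mem_piFinset, Fintype.mem_piFinset]
      constructor
      · rintro ⟨hbz, hp⟩
        intro i
        rw [hL]
        rw [Finset.mem_filter]
        refine ⟨hbz i, ?_⟩
        rw [hcast i]
        exact congrFun hp i
      · intro h
        constructor
        · intro i
          have := h i
          rw [hL, Finset.mem_filter] at this
          exact this.1
        · funext i
          have := h i
          rw [hL, Finset.mem_filter] at this
          have h2 := this.2
          rw [hcast i] at h2
          exact h2
    rw [h1, ← Finset.sum_filter, hfil]
    rw [Finset.sum_congr rfl (fun z _ => St2.latticeQ_eq t z),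
      ← ENNReal.ofReal_sum_of_nonneg (fun z _ => St2.gfun_nonneg t z)]
    congr 1
    unfold St2.gfun
    rw [← Finset.sum_div]
    congr 1
    rw [Finset.sum_comm]
    apply Finset.sum_congr rfl
    intro c _
    exact (Finset.prod_univ_sum L (fun i a => St2.r (St2.cnt c i) a)).symm
  -- lq as a real sum
  have hlq : lq t x 0
      = ENNReal.ofReal ((∑ c : Fin t → Fin 4,
          ∏ i, St2.r (St2.cnt c i) (-(x i)))/4^t) := by
    have h1 : lq t x 0 = latticeQ t (0 - x) := rfl
    rw [h1, St2.latticeQ_eq]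
    congr 1
    unfold St2.gfun
    congr 1
    apply Finset.sum_congr rfl
    intro c _
    apply Finset.prod_congr rfl
    intro i _
    congr 1
    rw [Pi.sub_apply, Pi.zero_apply, zero_sub]
  -- main real estimate
  set β : ℝ := B₁*((t:ℝ)+1)^3/(n:ℝ)^6 with hβdef
  have hβ0 : 0 ≤ β := by rw [hβdef, hB₁]; positivity
  have hβle : β ≤ B₁*(C'+1)^3 := by
    rw [hβdef]
    rw [div_le_iff₀ (by positivity)]
    have h1 : ((t:ℝ)+1)^3 ≤ ((C'+1)*(n:ℝ)^2)^3 :=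
      pow_le_pow_left₀ (by positivity) htp1 3
    have h2 : ((C'+1)*(n:ℝ)^2)^3 = (C'+1)^3*(n:ℝ)^6 := by ring
    rw [hB₁]
    nlinarith
  have hmain : (∑ c : Fin t → Fin 4, ∏ i, ∑ a ∈ L i, St2.r (St2.cnt c i) a)/4^t
      ≤ (∑ c : Fin t → Fin 4, ∏ i, St2.r (St2.cnt c i) (-(x i)))/4^t
        + (64*A^3*B₁*(C'+1))/(n:ℝ)^4 := by
    have hperc : ∀ c : Fin t → Fin 4,
        ∏ i, (∑ a ∈ L i, St2.r (St2.cnt c i) a)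
        ≤ ∏ i, St2.r (St2.cnt c i) (-(x i))
          + (4*A^3*β) * ∏ i, (1 / Real.sqrt ((St2.cnt c i : ℝ) + 1)) := by
      intro c
      have hw0 : ∀ i : Fin 4, (0:ℝ) ≤ 1 / Real.sqrt ((St2.cnt c i : ℝ) + 1) := by
        intro i; positivity
      have hR0 : ∀ i : Fin 4, 0 ≤ St2.r (St2.cnt c i) (-(x i)) := fun i => St2.r_nonneg _ _
      have hT0 : ∀ i : Fin 4, (0:ℝ) ≤ ∑ a ∈ (L i).erase (-(x i)), St2.r (St2.cnt c i) a :=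
        fun i => Finset.sum_nonneg (fun a _ => St2.r_nonneg _ _)
      have hSd : ∀ i : Fin 4, (∑ a ∈ L i, St2.r (St2.cnt c i) a)
          = St2.r (St2.cnt c i) (-(x i))
            + ∑ a ∈ (L i).erase (-(x i)), St2.r (St2.cnt c i) a := by
        intro i
        by_cases hmem : (-(x i)) ∈ L i
        · exact (Finset.add_sum_erase _ _ hmem).symm
        · rw [Finset.erase_eq_of_notMem hmem]
          have hRi : St2.r (St2.cnt c i) (-(x i)) = 0 := by
            apply St2.r_support
            have hic : ¬ ((-(x i)) ∈ Finset.Icc (-(t:ℤ)) (t:ℤ)) := by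
              intro hic
              exact hmem (by rw [hL]; exact Finset.mem_filter.mpr ⟨hic, rfl⟩)
            rw [Finset.mem_Icc] at hic
            have hcle := St2.cnt_le c i
            rw [lt_abs]
            omega
          rw [hRi, zero_add]
      have hTw : ∀ i : Fin 4, (∑ a ∈ (L i).erase (-(x i)), St2.r (St2.cnt c i) a)
          ≤ β * (1 / Real.sqrt ((St2.cnt c i : ℝ) + 1)) := by
        intro i
        have h1 := St2.Tsum_bound n hn (-(x i)) (by rw [abs_neg]; exact hx i)
          (St2.cnt c i) t (St2.cnt_le c i)
        refine le_trans (le_of_eq (by rw [hL])) (h1.trans ?_)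
        have he : (2097152:ℝ) * ((St2.cnt c i:ℝ)+1)^3
              / (Real.sqrt ((St2.cnt c i:ℝ)+1) * (n:ℝ)^6)
            = (2097152 * ((St2.cnt c i:ℝ)+1)^3/(n:ℝ)^6)
              * (1/Real.sqrt ((St2.cnt c i:ℝ)+1)) := by
          ring
        rw [he, hβdef, hB₁]
        apply mul_le_mul_of_nonneg_right _ (hw0 i)
        apply div_le_div_of_nonneg_right _ (by positivity)
        have hcle : ((St2.cnt c i : ℝ)+1) ≤ ((t:ℝ)+1) := by
          have h2 : ((St2.cnt c i : ℕ):ℝ) ≤ (t:ℝ) := by exact_mod_cast St2.cnt_le c i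
          linarith
        have h3 := pow_le_pow_left₀ (by positivity : (0:ℝ) ≤ (St2.cnt c i : ℝ)+1) hcle 3
        nlinarith
      have hRw : ∀ i : Fin 4, St2.r (St2.cnt c i) (-(x i))
          ≤ A * (1 / Real.sqrt ((St2.cnt c i : ℝ) + 1)) := by
        intro i
        have h1 : St2.r (St2.cnt c i) (-(x i)) ≤ 1 / Real.sqrt ((St2.cnt c i : ℝ) + 1) :=
          St2.r_le_inv_sqrt _ _
        have h2 := mul_le_mul_of_nonneg_right hA1 (hw0 i)
        rw [one_mul] at h2
        linarith
      have hSw : ∀ i : Fin 4, (∑ a ∈ L i, St2.r (St2.cnt c i) a)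
          ≤ A * (1 / Real.sqrt ((St2.cnt c i : ℝ) + 1)) := by
        intro i
        rw [hSd i]
        have h1 : St2.r (St2.cnt c i) (-(x i)) ≤ 1 / Real.sqrt ((St2.cnt c i : ℝ) + 1) :=
          St2.r_le_inv_sqrt _ _
        have h2 : (∑ a ∈ (L i).erase (-(x i)), St2.r (St2.cnt c i) a)
            ≤ (B₁*(C'+1)^3) * (1 / Real.sqrt ((St2.cnt c i : ℝ) + 1)) :=
          (hTw i).trans (mul_le_mul_of_nonneg_right hβle (hw0 i))
        have h3 : A * (1 / Real.sqrt ((St2.cnt c i : ℝ) + 1))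
            = 1 * (1 / Real.sqrt ((St2.cnt c i : ℝ) + 1))
              + (B₁*(C'+1)^3) * (1 / Real.sqrt ((St2.cnt c i : ℝ) + 1)) := by
          rw [hA]; ring
        rw [h3]
        apply add_le_add _ h2
        rw [one_mul]
        exact h1
      exact St2.master4 (fun i => St2.r (St2.cnt c i) (-(x i)))
        (fun i => ∑ a ∈ (L i).erase (-(x i)), St2.r (St2.cnt c i) a)
        (fun i => ∑ a ∈ L i, St2.r (St2.cnt c i) a)
        (fun i => 1 / Real.sqrt ((St2.cnt c i : ℝ) + 1))
        A β hSd hR0 hT0 hw0 hA0 hβ0 hRw hSw hTw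
    have hsum : ∑ c : Fin t → Fin 4, ∏ i, (∑ a ∈ L i, St2.r (St2.cnt c i) a)
        ≤ ∑ c : Fin t → Fin 4, ∏ i, St2.r (St2.cnt c i) (-(x i))
          + (4*A^3*β) * (16 * 4^t / (((t:ℝ)+1)*((t:ℝ)+2))) := by
      calc ∑ c : Fin t → Fin 4, ∏ i, (∑ a ∈ L i, St2.r (St2.cnt c i) a)
          ≤ ∑ c : Fin t → Fin 4, (∏ i, St2.r (St2.cnt c i) (-(x i))
            + (4*A^3*β) * ∏ i, (1 / Real.sqrt ((St2.cnt c i : ℝ) + 1))) :=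
            Finset.sum_le_sum (fun c _ => hperc c)
        _ = ∑ c : Fin t → Fin 4, ∏ i, St2.r (St2.cnt c i) (-(x i))
            + (4*A^3*β) * ∑ c : Fin t → Fin 4,
              ∏ i, (1 / Real.sqrt ((St2.cnt c i : ℝ) + 1)) := by
            rw [Finset.sum_add_distrib, Finset.mul_sum]
        _ ≤ _ := by
            apply add_le_add_right
            apply mul_le_mul_of_nonneg_left (St2.keyW t) (by positivity)
    have h4t : (0:ℝ) < (4:ℝ)^t := by positivity
    have hD : (0:ℝ) < ((t:ℝ)+1)*((t:ℝ)+2) := by positivity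
    have hdiv := div_le_div_of_nonneg_right hsum h4t.le
    rw [add_div] at hdiv
    refine hdiv.trans ?_
    apply add_le_add_right
    have hZ : ((4*A^3*β) * (16 * 4^t / (((t:ℝ)+1)*((t:ℝ)+2)))) / 4^t
        = 64*A^3*B₁*(((t:ℝ)+1)^3/((n:ℝ)^6 * (((t:ℝ)+1)*((t:ℝ)+2)))) := by
      rw [hβdef]
      field_simp
      ring
    rw [hZ]
    have hfrac : ((t:ℝ)+1)^3/((n:ℝ)^6 * (((t:ℝ)+1)*((t:ℝ)+2))) ≤ (C'+1)/(n:ℝ)^4 := by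
      rw [div_le_div_iff₀ (by positivity) (by positivity)]
      have e1 : ((t:ℝ)+1)^2 ≤ ((t:ℝ)+1)*((t:ℝ)+2) := by nlinarith [Nat.cast_nonneg (α := ℝ) t]
      have hstep : ((t:ℝ)+1)^3 ≤ (C'+1)*(n:ℝ)^2*(((t:ℝ)+1)*((t:ℝ)+2)) := by
        have h2 : ((t:ℝ)+1)^3 = ((t:ℝ)+1)*((t:ℝ)+1)^2 := by ring
        rw [h2]
        exact mul_le_mul htp1 e1 (by positivity) (by positivity)
      nlinarith [mul_le_mul_of_nonneg_right hstep (pow_nonneg hnR.le 4), pow_pos hnR 2,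
        pow_pos hnR 4, pow_pos hnR 6]
    have hC3 : (0:ℝ) ≤ 64*A^3*B₁ := by
      apply mul_nonneg (mul_nonneg (by norm_num) (pow_nonneg hA0 3))
      rw [hB₁]; norm_num
    calc 64*A^3*B₁*(((t:ℝ)+1)^3/((n:ℝ)^6 * (((t:ℝ)+1)*((t:ℝ)+2))))
        ≤ 64*A^3*B₁*((C'+1)/(n:ℝ)^4) := mul_le_mul_of_nonneg_left hfrac hC3
      _ = (64*A^3*B₁*(C'+1))/(n:ℝ)^4 := by ring
  -- ENNReal packaging
  have hlqR0 : (0:ℝ) ≤ (∑ c : Fin t → Fin 4, ∏ i, St2.r (St2.cnt c i) (-(x i)))/4^t :=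
    div_nonneg (Finset.sum_nonneg fun c _ => Finset.prod_nonneg fun i _ => St2.r_nonneg _ _)
      (by positivity)
  have hC0 : (0:ℝ) ≤ 64*A^3*B₁*(C'+1) := by
    apply mul_nonneg (mul_nonneg (mul_nonneg (by norm_num) (pow_nonneg hA0 3)) ?_) (by linarith)
    rw [hB₁]; norm_num
  rw [htp, hlq]
  refine le_trans (ENNReal.ofReal_le_ofReal hmain) ?_
  rw [ENNReal.ofReal_add hlqR0 (div_nonneg hC0 (by positivity))]
  apply add_le_add_right
  rw [ENNReal.ofReal_div_of_pos (by positivity), ENNReal.ofReal_pow (by positivity),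
    ENNReal.ofReal_natCast]
end

section
/- Let L, M, d be nonnegative integers with d ≥ τ_n, and let f be a nonnegative function of a pair consisting of a path of length L+1 and a path of length M+1 in Z_n^4. Let (X_t)_{t≥0} and (Y_t)_{t≥0} be independent random walks on Z_n^4, where Y_0 is uniformly distributed on Z_n^4 (and X_0 has arbitrary distribution). Then E[f(X[0,L], X[L+d, L+M+d])] ≤ (3/2) E[f(X[0,L], Y[0,M])]. -/
open MeasureTheory ProbabilityTheory Filter
open scoped ENNReal

section Aux
open MeasureTheory ProbabilityTheory
open scoped ENNReal

noncomputable section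
open scoped Classical
set_option linter.unusedSectionVars false

abbrev Lat4 : Type := Fin 4 → ℤ

lemma torusProj_add (n : ℕ) (x y : Lat4) :
    torusProj n (x + y) = torusProj n x + torusProj n y := by
  funext i; simp [torusProj]

lemma torusProj_zero (n : ℕ) : torusProj n (0 : Lat4) = 0 := by
  funext i; simp [torusProj]

instance : MeasurableAdd₂ Lat4 := ⟨Measurable.of_discrete⟩

variable {Ω : Type*} [MeasureSpace Ω] [IsProbabilityMeasure (volume : Measure Ω)]

section Walk
variable {n : ℕ} [NeZero n] (ξ : ℕ → Ω → Lat4)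

lemma sum_meas (hm : ∀ k, Measurable (ξ k)) (u : Finset ℕ) :
    Measurable fun ω => ∑ k ∈ u, ξ k ω :=
  Finset.measurable_sum u fun k _ => hm k

lemma indep_P (hm : ∀ k, Measurable (ξ k))
    (hi : iIndepFun ξ volume)
    (s t : Finset ℕ) (hst : Disjoint s t)
    (P : (↥s → Lat4) → Prop) (Q : (↥t → Lat4) → Prop) :
    volume ({ω | P fun k : ↥s => ξ k ω} ∩ {ω | Q fun k : ↥t => ξ k ω}) =
      volume {ω | P fun k : ↥s => ξ k ω} * volume {ω | Q fun k : ↥t => ξ k ω} :=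
  (hi.indepFun_finset s t hst hm).measure_inter_preimage_eq_mul
    (s := {g | P g}) (t := {g | Q g}) .of_discrete .of_discrete

lemma sum_law (hm : ∀ k, Measurable (ξ k))
    (hs : ∀ k x, volume {ω | ξ k ω = x} = stepProb x)
    (hi : iIndepFun ξ volume) :
    ∀ (t a : ℕ) (z : Lat4),
      volume {ω | ∑ k ∈ Finset.Ico a (a + t), ξ k ω = z} = latticeQ t z := by
  intro t
  induction t with
  | zero =>
    intro a z
    simp only [Nat.add_zero, Finset.Ico_self, Finset.sum_empty, latticeQ]
    rcases eq_or_ne z 0 with h | h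
    · subst h; simp
    · simp [h, Ne.symm h]
  | succ t ih =>
    intro a z
    have hsplit : ∀ ω : Ω, ∑ k ∈ Finset.Ico a (a + (t + 1)), ξ k ω
        = ∑ k ∈ Finset.Ico a (a + t), ξ k ω + ξ (a + t) ω := by
      intro ω
      rw [show a + (t + 1) = (a + t) + 1 from rfl]
      exact Finset.sum_Ico_succ_top (Nat.le_add_right a t) _
    have hset : {ω : Ω | ∑ k ∈ Finset.Ico a (a + (t + 1)), ξ k ω = z}
        = ⋃ y : Lat4, ({ω | ∑ k ∈ Finset.Ico a (a + t), ξ k ω = y}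
            ∩ {ω | ξ (a + t) ω = z - y}) := by
      ext ω
      simp only [Set.mem_setOf_eq, Set.mem_iUnion, Set.mem_inter_iff, hsplit ω]
      constructor
      · intro h
        exact ⟨_, rfl, by rw [eq_sub_iff_add_eq, add_comm]; exact h⟩
      · rintro ⟨y, h1, h2⟩
        rw [h1, h2]; abel
    have hterm : ∀ y : Lat4,
        volume ({ω | ∑ k ∈ Finset.Ico a (a + t), ξ k ω = y} ∩ {ω | ξ (a + t) ω = z - y})
          = latticeQ t y * stepProb (z - y) := by
      intro y
      have hd : Disjoint (Finset.Ico a (a + t)) ({a + t} : Finset ℕ) :=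
        Finset.disjoint_singleton_right.mpr (by simp)
      have h := indep_P ξ hm hi (Finset.Ico a (a + t)) {a + t} hd
        (fun g => ∑ k, g k = y)
        (fun g => g ⟨a + t, Finset.mem_singleton_self _⟩ = z - y)
      have e1 : {ω : Ω | ∑ k : ↥(Finset.Ico a (a + t)), ξ (↑k) ω = y}
          = {ω : Ω | ∑ k ∈ Finset.Ico a (a + t), ξ k ω = y} := by
        ext ω
        rw [Set.mem_setOf_eq, Set.mem_setOf_eq,
          Finset.sum_coe_sort (Finset.Ico a (a + t)) (fun k => ξ k ω)]
      rw [e1] at h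
      rw [h, ih a y, hs (a + t) (z - y)]
    rw [hset, measure_iUnion, latticeQ]
    · exact tsum_congr hterm
    · intro y y' hne
      simp only [Set.disjoint_left]
      rintro ω ⟨h1, -⟩ ⟨h2, -⟩
      exact hne (h1 ▸ h2 ▸ rfl)
    · intro y
      exact ((sum_meas ξ hm _) (measurableSet_singleton y)).inter
        ((hm _) (measurableSet_singleton (z - y)))

lemma proj_law (hm : ∀ k, Measurable (ξ k))
    (hs : ∀ k x, volume {ω | ξ k ω = x} = stepProb x)
    (hi : iIndepFun ξ volume)
    (t a : ℕ) (v : Torus n) :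
    volume {ω | torusProj n (∑ k ∈ Finset.Ico a (a + t), ξ k ω) = v} = tp t n 0 v := by
  have hset : {ω : Ω | torusProj n (∑ k ∈ Finset.Ico a (a + t), ξ k ω) = v}
      = ⋃ z : Lat4, ({ω | ∑ k ∈ Finset.Ico a (a + t), ξ k ω = z}
          ∩ {ω | torusProj n z = v}) := by
    ext ω
    simp only [Set.mem_setOf_eq, Set.mem_iUnion, Set.mem_inter_iff]
    constructor
    · intro h; exact ⟨_, rfl, h⟩
    · rintro ⟨z, h1, h2⟩; rw [h1]; exact h2
  rw [hset, measure_iUnion, tp]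
  · refine tsum_congr fun z => ?_
    rw [sub_zero]
    by_cases hz : torusProj n z = v
    · rw [if_pos hz]
      have : {ω : Ω | torusProj n z = v} = Set.univ := by simp [hz]
      rw [this, Set.inter_univ, sum_law ξ hm hs hi t a z]
    · rw [if_neg hz]
      have : {ω : Ω | torusProj n z = v} = ∅ := by simp [hz]
      rw [this, Set.inter_empty, measure_empty]
  · intro z z' hne
    simp only [Set.disjoint_left]
    rintro ω ⟨h1, -⟩ ⟨h2, -⟩
    exact hne (h1 ▸ h2 ▸ rfl)
  · intro z
    exact ((sum_meas ξ hm _) (measurableSet_singleton z)).inter (MeasurableSet.const _)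

lemma indep_sumevents (hm : ∀ k, Measurable (ξ k))
    (hi : iIndepFun ξ volume)
    (u1 u2 : Finset ℕ) (h12 : Disjoint u1 u2) (c1 c2 : Torus n) :
    volume ({ω | torusProj n (∑ k ∈ u1, ξ k ω) = c1}
        ∩ {ω | torusProj n (∑ k ∈ u2, ξ k ω) = c2})
      = volume {ω | torusProj n (∑ k ∈ u1, ξ k ω) = c1}
        * volume {ω | torusProj n (∑ k ∈ u2, ξ k ω) = c2} := by
  have h := indep_P ξ hm hi u1 u2 h12
    (fun g => torusProj n (∑ k, g k) = c1) (fun g => torusProj n (∑ k, g k) = c2)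
  have e1 : {ω : Ω | torusProj n (∑ k : ↥u1, ξ (↑k) ω) = c1}
      = {ω : Ω | torusProj n (∑ k ∈ u1, ξ k ω) = c1} := by
    ext ω
    rw [Set.mem_setOf_eq, Set.mem_setOf_eq, Finset.sum_coe_sort u1 (fun k => ξ k ω)]
  have e2 : {ω : Ω | torusProj n (∑ k : ↥u2, ξ (↑k) ω) = c2}
      = {ω : Ω | torusProj n (∑ k ∈ u2, ξ k ω) = c2} := by
    ext ω
    rw [Set.mem_setOf_eq, Set.mem_setOf_eq, Finset.sum_coe_sort u2 (fun k => ξ k ω)]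
  rw [e1, e2] at h
  exact h

lemma meas_projsum (hm : ∀ k, Measurable (ξ k)) (u : Finset ℕ) (c : Torus n) :
    MeasurableSet {ω : Ω | torusProj n (∑ k ∈ u, ξ k ω) = c} := by
  have h : Measurable fun ω : Ω => torusProj n (∑ k ∈ u, ξ k ω) :=
    (Measurable.of_discrete (f := torusProj n)).comp (sum_meas ξ hm u)
  exact h (measurableSet_singleton c)

lemma tp_chapman (hm : ∀ k, Measurable (ξ k))
    (hs : ∀ k x, volume {ω | ξ k ω = x} = stepProb x)
    (hi : iIndepFun ξ volume)
    (s t : ℕ) (v : Torus n) :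
    tp (s + t) n 0 v = ∑ u : Torus n, tp s n 0 u * tp t n 0 (v - u) := by
  have pl0 := proj_law ξ hm hs hi (s + t) 0 v
  simp only [Nat.zero_add] at pl0
  rw [← pl0]
  have hsp : ∀ ω : Ω, ∑ k ∈ Finset.Ico 0 (s + t), ξ k ω
      = ∑ k ∈ Finset.Ico 0 s, ξ k ω + ∑ k ∈ Finset.Ico s (s + t), ξ k ω := by
    intro ω
    rw [Finset.sum_Ico_consecutive _ (Nat.zero_le s) (Nat.le_add_right s t)]
  have hset : {ω : Ω | torusProj n (∑ k ∈ Finset.Ico 0 (s + t), ξ k ω) = v}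
      = ⋃ u : Torus n,
          ({ω | torusProj n (∑ k ∈ Finset.Ico 0 s, ξ k ω) = u}
            ∩ {ω | torusProj n (∑ k ∈ Finset.Ico s (s + t), ξ k ω) = v - u}) := by
    ext ω
    simp only [Set.mem_setOf_eq, Set.mem_iUnion, Set.mem_inter_iff, hsp ω, torusProj_add]
    constructor
    · intro h
      exact ⟨torusProj n (∑ k ∈ Finset.Ico 0 s, ξ k ω), rfl, by rw [← h]; abel⟩
    · rintro ⟨u, h1, h2⟩
      rw [h1, h2]; abel
  rw [hset, measure_iUnion, tsum_fintype]
  · refine Finset.sum_congr rfl fun u _ => ?_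
    rw [indep_sumevents ξ hm hi _ _ (Finset.Ico_disjoint_Ico_consecutive 0 s (s + t)) u (v - u)]
    have pl1 := proj_law ξ hm hs hi s 0 u
    simp only [Nat.zero_add] at pl1
    have pl2 := proj_law ξ hm hs hi t s (v - u)
    rw [pl1, pl2]
  · intro u u' hne
    simp only [Set.disjoint_left]
    rintro ω ⟨h1, -⟩ ⟨h2, -⟩
    exact hne (h1 ▸ h2 ▸ rfl)
  · intro u
    exact (meas_projsum ξ hm _ _).inter (meas_projsum ξ hm _ _)
lemma tp_sum_one (hm : ∀ k, Measurable (ξ k))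
    (hs : ∀ k x, volume {ω | ξ k ω = x} = stepProb x)
    (hi : iIndepFun ξ volume) (t : ℕ) :
    ∑ u : Torus n, tp t n 0 u = 1 := by
  have h : ∀ u : Torus n, tp t n 0 u
      = volume ((fun ω : Ω => torusProj n (∑ k ∈ Finset.Ico 0 (0 + t), ξ k ω)) ⁻¹' {u}) := by
    intro u
    rw [← proj_law ξ hm hs hi t 0 u]
    rfl
  simp_rw [h]
  rw [sum_measure_preimage_singleton]
  · rw [Finset.coe_univ, Set.preimage_univ, measure_univ]
  · intro u _
    exact meas_projsum ξ hm _ _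

lemma tp_le_one (hm : ∀ k, Measurable (ξ k))
    (hs : ∀ k x, volume {ω | ξ k ω = x} = stepProb x)
    (hi : iIndepFun ξ volume) (t : ℕ) (v : Torus n) :
    tp t n 0 v ≤ 1 := by
  rw [← proj_law ξ hm hs hi t 0 v]
  exact prob_le_one

lemma tp_zero_zero (hm : ∀ k, Measurable (ξ k))
    (hs : ∀ k x, volume {ω | ξ k ω = x} = stepProb x)
    (hi : iIndepFun ξ volume) :
    tp 0 n 0 (0 : Torus n) = 1 := by
  rw [← proj_law ξ hm hs hi 0 0 0]
  have : {ω : Ω | torusProj n (∑ k ∈ Finset.Ico 0 (0 + 0), ξ k ω) = 0} = Set.univ := by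
    ext ω; simp [torusProj_zero]
  rw [this, measure_univ]

lemma stepProb_zero : stepProb 0 = 1 / 2 := by simp [stepProb]

lemma stepProb_unit (i : Fin 4) : stepProb (unitVec i) = 1 / 16 := by
  have h0 : unitVec i ≠ 0 := by
    intro h
    have := congrFun h i
    simp [unitVec] at this
  rw [stepProb, if_neg h0, if_pos ⟨i, Or.inl rfl⟩]

lemma tp_one_zero (hm : ∀ k, Measurable (ξ k))
    (hs : ∀ k x, volume {ω | ξ k ω = x} = stepProb x)
    (hi : iIndepFun ξ volume) :
    (16 : ℝ≥0∞)⁻¹ ≤ tp 1 n 0 (0 : Torus n) := by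
  rw [← proj_law ξ hm hs hi 1 0 0]
  have hsub : {ω : Ω | ξ 0 ω = 0} ⊆ {ω | torusProj n (∑ k ∈ Finset.Ico 0 (0 + 1), ξ k ω) = 0} := by
    intro ω h
    simp only [Set.mem_setOf_eq] at h ⊢
    rw [show Finset.Ico 0 (0 + 1) = {0} from rfl, Finset.sum_singleton, h, torusProj_zero]
  calc (16 : ℝ≥0∞)⁻¹ ≤ 1 / 2 := by
        rw [one_div]
        exact ENNReal.inv_le_inv.mpr (by norm_num)
    _ = volume {ω : Ω | ξ 0 ω = 0} := by rw [hs 0 0, stepProb_zero]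
    _ ≤ _ := measure_mono hsub

lemma tp_one_unit (hm : ∀ k, Measurable (ξ k))
    (hs : ∀ k x, volume {ω | ξ k ω = x} = stepProb x)
    (hi : iIndepFun ξ volume) (i : Fin 4) :
    (16 : ℝ≥0∞)⁻¹ ≤ tp 1 n 0 (torusProj n (unitVec i)) := by
  rw [← proj_law ξ hm hs hi 1 0 (torusProj n (unitVec i))]
  have hsub : {ω : Ω | ξ 0 ω = unitVec i}
      ⊆ {ω | torusProj n (∑ k ∈ Finset.Ico 0 (0 + 1), ξ k ω) = torusProj n (unitVec i)} := by
    intro ω h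
    simp only [Set.mem_setOf_eq] at h ⊢
    rw [show Finset.Ico 0 (0 + 1) = {0} from rfl, Finset.sum_singleton, h]
  calc (16 : ℝ≥0∞)⁻¹ = 1 / 16 := by rw [one_div]
    _ = volume {ω : Ω | ξ 0 ω = unitVec i} := by rw [hs 0 (unitVec i), stepProb_unit]
    _ ≤ _ := measure_mono hsub

lemma tp_mul_le (hm : ∀ k, Measurable (ξ k))
    (hs : ∀ k x, volume {ω | ξ k ω = x} = stepProb x)
    (hi : iIndepFun ξ volume)
    (s t : ℕ) (u w : Torus n) :
    tp s n 0 u * tp t n 0 w ≤ tp (s + t) n 0 (u + w) := by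
  rw [tp_chapman ξ hm hs hi s t (u + w)]
  have : tp s n 0 u * tp t n 0 (u + w - u) = tp s n 0 u * tp t n 0 w := by
    rw [add_sub_cancel_left]
  rw [← this]
  exact Finset.single_le_sum (f := fun u' => tp s n 0 u' * tp t n 0 (u + w - u'))
    (fun _ _ => zero_le) (Finset.mem_univ u)

lemma tp_pad (hm : ∀ k, Measurable (ξ k))
    (hs : ∀ k x, volume {ω | ξ k ω = x} = stepProb x)
    (hi : iIndepFun ξ volume)
    (t : ℕ) (v : Torus n) (h : (16 : ℝ≥0∞)⁻¹ ^ t ≤ tp t n 0 v) :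
    (16 : ℝ≥0∞)⁻¹ ^ (t + 1) ≤ tp (t + 1) n 0 v := by
  calc (16 : ℝ≥0∞)⁻¹ ^ (t + 1) = (16 : ℝ≥0∞)⁻¹ ^ t * (16 : ℝ≥0∞)⁻¹ := pow_succ _ _
    _ ≤ tp t n 0 v * tp 1 n 0 0 := mul_le_mul' h (tp_one_zero ξ hm hs hi)
    _ ≤ tp (t + 1) n 0 (v + 0) := tp_mul_le ξ hm hs hi t 1 v 0
    _ = tp (t + 1) n 0 v := by rw [add_zero]

lemma tp_step (hm : ∀ k, Measurable (ξ k))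
    (hs : ∀ k x, volume {ω | ξ k ω = x} = stepProb x)
    (hi : iIndepFun ξ volume)
    (t : ℕ) (v : Torus n) (i : Fin 4) (h : (16 : ℝ≥0∞)⁻¹ ^ t ≤ tp t n 0 v) :
    (16 : ℝ≥0∞)⁻¹ ^ (t + 1) ≤ tp (t + 1) n 0 (v + torusProj n (unitVec i)) := by
  calc (16 : ℝ≥0∞)⁻¹ ^ (t + 1) = (16 : ℝ≥0∞)⁻¹ ^ t * (16 : ℝ≥0∞)⁻¹ := pow_succ _ _
    _ ≤ tp t n 0 v * tp 1 n 0 (torusProj n (unitVec i)) :=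
        mul_le_mul' h (tp_one_unit ξ hm hs hi i)
    _ ≤ tp (t + 1) n 0 (v + torusProj n (unitVec i)) := tp_mul_le ξ hm hs hi t 1 v _

lemma tp_reach (hm : ∀ k, Measurable (ξ k))
    (hs : ∀ k x, volume {ω | ξ k ω = x} = stepProb x)
    (hi : iIndepFun ξ volume) :
    ∀ (m : ℕ) (c : Fin 4 → ℕ), (∑ i, c i = m) →
      (16 : ℝ≥0∞)⁻¹ ^ m ≤ tp m n 0 (∑ i, c i • torusProj n (unitVec i)) := by
  intro m
  induction m with
  | zero =>
    intro c hc
    have hc0 : ∀ i, c i = 0 := by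
      intro i
      have := Finset.sum_eq_zero_iff.mp hc
      exact this i (Finset.mem_univ i)
    have : (∑ i, c i • torusProj n (unitVec i)) = (0 : Torus n) := by
      apply Finset.sum_eq_zero
      intro i _
      rw [hc0 i, zero_smul]
    rw [this, pow_zero, tp_zero_zero ξ hm hs hi]
  | succ m ih =>
    intro c hc
    have hex : ∃ i, c i ≠ 0 := by
      by_contra hall
      push_neg at hall
      rw [Finset.sum_eq_zero (fun i _ => hall i)] at hc
      exact Nat.succ_ne_zero m hc.symm
    obtain ⟨i, hi0⟩ := hex
    set c' : Fin 4 → ℕ := Function.update c i (c i - 1) with hc'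
    have hcongr : ∀ (f : Fin 4 → ℕ) (g : Fin 4 → Torus n), ∑ j ∈ Finset.univ.erase i, c' j • g j
        = ∑ j ∈ Finset.univ.erase i, c j • g j := by
      intro f g
      apply Finset.sum_congr rfl
      intro j hj
      rw [hc', Function.update_of_ne (Finset.mem_erase.mp hj).1]
    have hsum' : ∑ j, c' j = m := by
      have h1 : ∑ j, c' j = c' i + ∑ j ∈ Finset.univ.erase i, c' j :=
        (Finset.add_sum_erase _ _ (Finset.mem_univ i)).symm
      have h1' : ∑ j ∈ Finset.univ.erase i, c' j = ∑ j ∈ Finset.univ.erase i, c j := by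
        apply Finset.sum_congr rfl
        intro j hj
        rw [hc', Function.update_of_ne (Finset.mem_erase.mp hj).1]
      have h2 : ∑ j, c j = c i + ∑ j ∈ Finset.univ.erase i, c j :=
        (Finset.add_sum_erase _ _ (Finset.mem_univ i)).symm
      have h3 : c' i = c i - 1 := by rw [hc', Function.update_self]
      omega
    have hvec : ∑ j, c j • torusProj n (unitVec j)
        = (∑ j, c' j • torusProj n (unitVec j)) + torusProj n (unitVec i) := by
      have h1 : ∑ j, c j • torusProj n (unitVec j)
          = c i • torusProj n (unitVec i)
            + ∑ j ∈ Finset.univ.erase i, c j • torusProj n (unitVec j) :=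
        (Finset.add_sum_erase _ _ (Finset.mem_univ i)).symm
      have h2 : ∑ j, c' j • torusProj n (unitVec j)
          = (c i - 1) • torusProj n (unitVec i)
            + ∑ j ∈ Finset.univ.erase i, c j • torusProj n (unitVec j) := by
        have h2a : ∑ j, c' j • torusProj n (unitVec j)
            = c' i • torusProj n (unitVec i)
              + ∑ j ∈ Finset.univ.erase i, c' j • torusProj n (unitVec j) :=
          (Finset.add_sum_erase _ _ (Finset.mem_univ i)).symm
        rw [h2a]
        congr 1
        · rw [hc', Function.update_self]
        · apply Finset.sum_congr rfl
          intro j hj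
          rw [hc', Function.update_of_ne (Finset.mem_erase.mp hj).1]
      have h3 : c i • torusProj n (unitVec i)
          = (c i - 1) • torusProj n (unitVec i) + torusProj n (unitVec i) := by
        nth_rewrite 1 [show c i = (c i - 1) + 1 by omega]
        rw [succ_nsmul]
      rw [h1, h2, h3]
      abel
    rw [hvec]
    exact tp_step ξ hm hs hi m _ i (ih c' hsum')

lemma torus_decomp (v : Torus n) :
    v = ∑ i, (v i).val • torusProj n (unitVec i) ∧ (∑ i, (v i).val) ≤ 4 * (n - 1) := by
  constructor
  · funext j
    have h1 : (∑ i, (v i).val • torusProj n (unitVec i)) j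
        = ∑ i, (v i).val • ((if j = i then 1 else 0 : ZMod n)) := by
      rw [Finset.sum_apply]
      apply Finset.sum_congr rfl
      intro i _
      simp only [Pi.smul_apply, torusProj, unitVec]
      congr 1
      split_ifs <;> simp
    have h2 : ∑ i, (v i).val • ((if j = i then 1 else 0 : ZMod n))
        = ∑ i, (if j = i then ((v i).val : ZMod n) else 0) := by
      apply Finset.sum_congr rfl
      intro i _
      split_ifs <;> simp
    rw [h1, h2, Finset.sum_ite_eq]
    simp [ZMod.natCast_rightInverse (v j)]
  · have hb : ∀ i, (v i).val ≤ n - 1 := by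
      intro i
      have := ZMod.val_lt (v i)
      omega
    calc ∑ i, (v i).val ≤ ∑ _i : Fin 4, (n - 1) := Finset.sum_le_sum fun i _ => hb i
      _ = 4 * (n - 1) := by simp [Finset.sum_const, Finset.card_univ]

lemma tp_pos (hm : ∀ k, Measurable (ξ k))
    (hs : ∀ k x, volume {ω | ξ k ω = x} = stepProb x)
    (hi : iIndepFun ξ volume) (v : Torus n) :
    (16 : ℝ≥0∞)⁻¹ ^ (4 * (n - 1)) ≤ tp (4 * (n - 1)) n 0 v := by
  obtain ⟨hveq, hvle⟩ := torus_decomp v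
  have h0 : (16 : ℝ≥0∞)⁻¹ ^ (∑ i, (v i).val)
      ≤ tp (∑ i, (v i).val) n 0 (∑ i, (v i).val • torusProj n (unitVec i)) :=
    tp_reach ξ hm hs hi _ _ rfl
  rw [← hveq] at h0
  have hpad : ∀ p : ℕ, (16 : ℝ≥0∞)⁻¹ ^ ((∑ i, (v i).val) + p)
      ≤ tp ((∑ i, (v i).val) + p) n 0 v := by
    intro p
    induction p with
    | zero => exact h0
    | succ p ihp => exact tp_pad ξ hm hs hi _ _ ihp
  have := hpad (4 * (n - 1) - ∑ i, (v i).val)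
  rwa [Nat.add_sub_cancel' hvle] at this
section Mix
variable (hm : ∀ k, Measurable (ξ k))
  (hs : ∀ k x, volume {ω | ξ k ω = x} = stepProb x)
  (hi : iIndepFun ξ volume)
include hm hs hi

lemma tp_ne_top (t : ℕ) (v : Torus n) : tp t n 0 v ≠ ⊤ :=
  ((tp_le_one ξ hm hs hi t v).trans_lt ENNReal.one_lt_top).ne

lemma Qsum (t : ℕ) : ∑ v : Torus n, (tp t n 0 v).toReal = 1 := by
  rw [← ENNReal.toReal_sum (fun v _ => tp_ne_top ξ hm hs hi t v),
    tp_sum_one ξ hm hs hi t, ENNReal.toReal_one]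

lemma Qch (s t : ℕ) (v : Torus n) :
    (tp (s + t) n 0 v).toReal
      = ∑ u : Torus n, (tp s n 0 u).toReal * (tp t n 0 (v - u)).toReal := by
  rw [tp_chapman ξ hm hs hi s t v,
    ENNReal.toReal_sum (fun u _ =>
      ENNReal.mul_ne_top (tp_ne_top ξ hm hs hi s u) (tp_ne_top ξ hm hs hi t (v - u)))]
  exact Finset.sum_congr rfl fun u _ => ENNReal.toReal_mul

lemma Qker (t : ℕ) (v : Torus n) :
    ∑ u : Torus n, (tp t n 0 (v - u)).toReal = 1 := by
  rw [← Qsum (n := n) ξ hm hs hi t]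
  exact Fintype.sum_equiv (Equiv.subLeft v) _ _ fun u => rfl

lemma Qker' (t : ℕ) (u : Torus n) :
    ∑ v : Torus n, (tp t n 0 (v - u)).toReal = 1 := by
  rw [← Qsum (n := n) ξ hm hs hi t]
  exact Fintype.sum_equiv (Equiv.subRight u) _ _ fun v => rfl

omit hm hs hi in
lemma torus_card : Fintype.card (Torus n) = n ^ 4 := by
  simp [ZMod.card]

lemma Qexpand (s t : ℕ) (v : Torus n) :
    (tp (s + t) n 0 v).toReal - 1 / (n : ℝ) ^ 4
      = ∑ u : Torus n,
          ((tp s n 0 u).toReal - 1 / (n : ℝ) ^ 4) * (tp t n 0 (v - u)).toReal := by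
  have h : ∑ u : Torus n,
      ((tp s n 0 u).toReal - 1 / (n : ℝ) ^ 4) * (tp t n 0 (v - u)).toReal
      = (∑ u : Torus n, (tp s n 0 u).toReal * (tp t n 0 (v - u)).toReal)
        - (1 / (n : ℝ) ^ 4) * ∑ u : Torus n, (tp t n 0 (v - u)).toReal := by
    rw [Finset.mul_sum, ← Finset.sum_sub_distrib]
    exact Finset.sum_congr rfl fun u _ => by ring
  rw [h, Qker ξ hm hs hi t v, mul_one, ← Qch ξ hm hs hi s t v]

lemma mix_step (ε : ℝ) (t : ℕ)
    (h : ∀ u : Torus n, |(tp t n 0 u).toReal - 1 / (n : ℝ) ^ 4| ≤ ε) (v : Torus n) :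
    |(tp (t + 1) n 0 v).toReal - 1 / (n : ℝ) ^ 4| ≤ ε := by
  have hε : 0 ≤ ε := (abs_nonneg _).trans (h v)
  rw [Qexpand ξ hm hs hi t 1 v]
  calc |∑ u : Torus n, ((tp t n 0 u).toReal - 1 / (n : ℝ) ^ 4) * (tp 1 n 0 (v - u)).toReal|
      ≤ ∑ u : Torus n, |((tp t n 0 u).toReal - 1 / (n : ℝ) ^ 4) * (tp 1 n 0 (v - u)).toReal| :=
        Finset.abs_sum_le_sum_abs _ _
    _ ≤ ∑ u : Torus n, ε * (tp 1 n 0 (v - u)).toReal := by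
        refine Finset.sum_le_sum fun u _ => ?_
        rw [abs_mul, abs_of_nonneg ENNReal.toReal_nonneg]
        exact mul_le_mul_of_nonneg_right (h u) ENNReal.toReal_nonneg
    _ = ε := by rw [← Finset.mul_sum, Qker ξ hm hs hi 1 v, mul_one]

lemma Qpos_real (v : Torus n) :
    ((16 : ℝ)⁻¹) ^ (4 * (n - 1)) ≤ (tp (4 * (n - 1)) n 0 v).toReal := by
  have h := ENNReal.toReal_mono (tp_ne_top ξ hm hs hi _ v) (tp_pos ξ hm hs hi v)
  calc ((16 : ℝ)⁻¹) ^ (4 * (n - 1)) = (((16 : ℝ≥0∞)⁻¹) ^ (4 * (n - 1))).toReal := by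
        simp
    _ ≤ _ := h

lemma card_delta_le_one :
    (n : ℝ) ^ 4 * ((16 : ℝ)⁻¹) ^ (4 * (n - 1)) ≤ 1 := by
  have h1 : ∑ v : Torus n, ((16 : ℝ)⁻¹) ^ (4 * (n - 1))
      ≤ ∑ v : Torus n, (tp (4 * (n - 1)) n 0 v).toReal :=
    Finset.sum_le_sum fun v _ => Qpos_real ξ hm hs hi v
  rw [Qsum ξ hm hs hi] at h1
  rw [Finset.sum_const, Finset.card_univ, torus_card (n := n), nsmul_eq_mul] at h1
  calc (n : ℝ) ^ 4 * ((16 : ℝ)⁻¹) ^ (4 * (n - 1))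
      = ((n ^ 4 : ℕ) : ℝ) * ((16 : ℝ)⁻¹) ^ (4 * (n - 1)) := by push_cast; ring
    _ ≤ 1 := h1

lemma contraction (t : ℕ) :
    ∑ v : Torus n, |(tp (t + 4 * (n - 1)) n 0 v).toReal - 1 / (n : ℝ) ^ 4|
      ≤ (1 - (n : ℝ) ^ 4 * ((16 : ℝ)⁻¹) ^ (4 * (n - 1)))
        * ∑ u : Torus n, |(tp t n 0 u).toReal - 1 / (n : ℝ) ^ 4| := by
  set T := 4 * (n - 1) with hT
  set θ := 1 / (n : ℝ) ^ 4 with hθ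
  set δ := ((16 : ℝ)⁻¹) ^ T with hδ
  have hn0 : (n : ℝ) ≠ 0 := Nat.cast_ne_zero.mpr (NeZero.ne n)
  have hzero : ∑ u : Torus n, ((tp t n 0 u).toReal - θ) = 0 := by
    rw [Finset.sum_sub_distrib, Qsum ξ hm hs hi t, Finset.sum_const, Finset.card_univ,
      torus_card (n := n), nsmul_eq_mul, hθ]
    push_cast
    field_simp
    norm_num
  have hexp : ∀ v : Torus n, (tp (t + T) n 0 v).toReal - θ
      = ∑ u : Torus n, ((tp t n 0 u).toReal - θ) * ((tp T n 0 (v - u)).toReal - δ) := by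
    intro v
    have h1 : ∑ u : Torus n, ((tp t n 0 u).toReal - θ) * ((tp T n 0 (v - u)).toReal - δ)
        = (∑ u : Torus n, ((tp t n 0 u).toReal - θ) * (tp T n 0 (v - u)).toReal)
          - δ * ∑ u : Torus n, ((tp t n 0 u).toReal - θ) := by
      rw [Finset.mul_sum, ← Finset.sum_sub_distrib]
      exact Finset.sum_congr rfl fun u _ => by ring
    rw [h1, hzero, mul_zero, sub_zero, ← Qexpand ξ hm hs hi t T v]
  calc ∑ v : Torus n, |(tp (t + T) n 0 v).toReal - θ|
      ≤ ∑ v : Torus n, ∑ u : Torus n,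
          |(tp t n 0 u).toReal - θ| * ((tp T n 0 (v - u)).toReal - δ) := by
        refine Finset.sum_le_sum fun v _ => ?_
        rw [hexp v]
        refine (Finset.abs_sum_le_sum_abs _ _).trans ?_
        refine Finset.sum_le_sum fun u _ => ?_
        rw [abs_mul]
        refine mul_le_mul_of_nonneg_left ?_ (abs_nonneg _)
        rw [abs_of_nonneg (by linarith [Qpos_real ξ hm hs hi (v - u)] : (0:ℝ) ≤ (tp T n 0 (v - u)).toReal - δ)]
    _ = ∑ u : Torus n, |(tp t n 0 u).toReal - θ|
          * ∑ v : Torus n, ((tp T n 0 (v - u)).toReal - δ) := by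
        rw [Finset.sum_comm]
        exact Finset.sum_congr rfl fun u _ => by rw [Finset.mul_sum]
    _ = (1 - (n : ℝ) ^ 4 * δ) * ∑ u : Torus n, |(tp t n 0 u).toReal - θ| := by
        have hin : ∀ u : Torus n, ∑ v : Torus n, ((tp T n 0 (v - u)).toReal - δ)
            = 1 - (n : ℝ) ^ 4 * δ := by
          intro u
          rw [Finset.sum_sub_distrib, Qker' ξ hm hs hi T u, Finset.sum_const,
            Finset.card_univ, torus_card (n := n), nsmul_eq_mul]
          push_cast
          ring
        rw [Finset.sum_congr rfl fun u _ => by rw [hin u]]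
        rw [← Finset.sum_mul, mul_comm]

lemma Edecay (k : ℕ) :
    ∑ v : Torus n, |(tp (k * (4 * (n - 1))) n 0 v).toReal - 1 / (n : ℝ) ^ 4|
      ≤ 2 * (1 - (n : ℝ) ^ 4 * ((16 : ℝ)⁻¹) ^ (4 * (n - 1))) ^ k := by
  set T := 4 * (n - 1)
  set θ := 1 / (n : ℝ) ^ 4 with hθ
  set c := 1 - (n : ℝ) ^ 4 * ((16 : ℝ)⁻¹) ^ T with hc
  have hc0 : 0 ≤ c := by
    rw [hc]
    have := card_delta_le_one (n := n) ξ hm hs hi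
    show (0:ℝ) ≤ 1 - (n:ℝ)^4 * ((16:ℝ)⁻¹) ^ (4 * (n - 1))
    linarith
  have hθ0 : 0 ≤ θ := by positivity
  induction k with
  | zero =>
    simp only [Nat.zero_mul, pow_zero, mul_one]
    have hb : ∀ v : Torus n, |(tp 0 n 0 v).toReal - θ| ≤ (tp 0 n 0 v).toReal + θ := by
      intro v
      have h0 : (0:ℝ) ≤ (tp 0 n 0 v).toReal := ENNReal.toReal_nonneg
      rw [abs_le]
      constructor <;> linarith
    calc ∑ v : Torus n, |(tp 0 n 0 v).toReal - θ|
        ≤ ∑ v : Torus n, ((tp 0 n 0 v).toReal + θ) := Finset.sum_le_sum fun v _ => hb v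
      _ = 1 + (n:ℝ)^4 * θ := by
          rw [Finset.sum_add_distrib, Qsum ξ hm hs hi 0, Finset.sum_const,
            Finset.card_univ, torus_card (n := n), nsmul_eq_mul]
          push_cast
          ring
      _ ≤ 2 := by
          have hn0 : (n : ℝ) ≠ 0 := Nat.cast_ne_zero.mpr (NeZero.ne n)
          have : (n:ℝ)^4 * θ = 1 := by rw [hθ]; field_simp
          linarith
  | succ k ihk =>
    have hstep := contraction (n := n) ξ hm hs hi (k * T)
    have : (k + 1) * T = k * T + T := by ring
    rw [this]
    calc ∑ v : Torus n, |(tp (k * T + T) n 0 v).toReal - θ|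
        ≤ c * ∑ u : Torus n, |(tp (k * T) n 0 u).toReal - θ| := hstep
      _ ≤ c * (2 * c ^ k) := mul_le_mul_of_nonneg_left ihk hc0
      _ = 2 * c ^ (k + 1) := by ring

end Mix
section Mix2
variable (hm : ∀ k, Measurable (ξ k))
  (hs : ∀ k x, volume {ω | ξ k ω = x} = stepProb x)
  (hi : iIndepFun ξ volume)
include hm hs hi

lemma mix_nonempty (hn : 2 ≤ n) :
    ∃ t : ℕ, ∀ x : Torus n,
      |(tp t n 0 x).toReal - 1 / (n : ℝ) ^ 4| ≤ 1 / (2 * (n : ℝ) ^ 4) := by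
  set c := 1 - (n : ℝ) ^ 4 * ((16 : ℝ)⁻¹) ^ (4 * (n - 1)) with hc
  have hnpos : (0 : ℝ) < (n : ℝ) := Nat.cast_pos.mpr (by omega)
  have hδpos : (0 : ℝ) < ((16 : ℝ)⁻¹) ^ (4 * (n - 1)) := by positivity
  have hc1 : c < 1 := by
    have h4 : (0 : ℝ) < (n : ℝ) ^ 4 * ((16 : ℝ)⁻¹) ^ (4 * (n - 1)) := by positivity
    rw [hc]; linarith
  have hc0 : 0 ≤ c := by
    rw [hc]
    have := card_delta_le_one (n := n) ξ hm hs hi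
    linarith
  have hx : (0 : ℝ) < 1 / (4 * (n : ℝ) ^ 4) := by positivity
  obtain ⟨k, hk⟩ := exists_pow_lt_of_lt_one hx hc1
  refine ⟨k * (4 * (n - 1)), fun x => ?_⟩
  have h1 : |(tp (k * (4 * (n - 1))) n 0 x).toReal - 1 / (n : ℝ) ^ 4|
      ≤ ∑ v : Torus n, |(tp (k * (4 * (n - 1))) n 0 v).toReal - 1 / (n : ℝ) ^ 4| :=
    Finset.single_le_sum (f := fun v : Torus n => |(tp (k * (4 * (n - 1))) n 0 v).toReal - 1 / (n : ℝ) ^ 4|) (fun v _ => abs_nonneg _) (Finset.mem_univ x)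
  have h2 := Edecay (n := n) ξ hm hs hi k
  rw [← hc] at h2
  have hck : 0 ≤ c ^ k := pow_nonneg hc0 k
  have he : 2 * (1 / (4 * (n : ℝ) ^ 4)) = 1 / (2 * (n : ℝ) ^ 4) := by
    field_simp
    ring
  nlinarith [h1, h2, hk]

lemma mix_mem (hn : 2 ≤ n) (d : ℕ) (hd : mixTime n ≤ d) :
    ∀ x : Torus n,
      |(tp d n 0 x).toReal - 1 / (n : ℝ) ^ 4| ≤ 1 / (2 * (n : ℝ) ^ 4) := by
  have hne : {t : ℕ | ∀ x : Torus n,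
      |(tp t n 0 x).toReal - 1 / (n : ℝ) ^ 4| ≤ 1 / (2 * (n : ℝ) ^ 4)}.Nonempty :=
    mix_nonempty ξ hm hs hi hn
  have hmem : ∀ x : Torus n,
      |(tp (mixTime n) n 0 x).toReal - 1 / (n : ℝ) ^ 4| ≤ 1 / (2 * (n : ℝ) ^ 4) :=
    Nat.sInf_mem hne
  exact Nat.le_induction hmem
    (fun t _ ih => mix_step ξ hm hs hi _ t ih) d hd

lemma tp_mix_bound (hn : 2 ≤ n) (d : ℕ) (hd : mixTime n ≤ d) (v : Torus n) :
    tp d n 0 v ≤ 3 / 2 * ((n : ℝ≥0∞) ^ 4)⁻¹ := by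
  have h := mix_mem ξ hm hs hi hn d hd v
  have hnpos : (0 : ℝ) < (n : ℝ) := Nat.cast_pos.mpr (by omega)
  have hQ : (tp d n 0 v).toReal ≤ 3 / 2 * (((n : ℝ)) ^ 4)⁻¹ := by
    have h2 := (abs_le.mp h).2
    have he : 1 / (n : ℝ) ^ 4 + 1 / (2 * (n : ℝ) ^ 4) = 3 / 2 * (((n : ℝ)) ^ 4)⁻¹ := by
      field_simp
      ring
    linarith
  calc tp d n 0 v = ENNReal.ofReal (tp d n 0 v).toReal :=
        (ENNReal.ofReal_toReal (tp_ne_top ξ hm hs hi d v)).symm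
    _ ≤ ENNReal.ofReal (3 / 2 * (((n : ℝ)) ^ 4)⁻¹) := ENNReal.ofReal_le_ofReal hQ
    _ = ENNReal.ofReal (3 / 2) * ENNReal.ofReal ((((n : ℝ)) ^ 4)⁻¹) :=
        ENNReal.ofReal_mul (by norm_num)
    _ = 3 / 2 * ((n : ℝ≥0∞) ^ 4)⁻¹ := by
        congr 1
        · rw [ENNReal.ofReal_div_of_pos (by norm_num), ENNReal.ofReal_ofNat,
            ENNReal.ofReal_ofNat]
        · rw [ENNReal.ofReal_inv_of_pos (by positivity),
            ENNReal.ofReal_pow (by positivity), ENNReal.ofReal_natCast]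

end Mix2
lemma kap_eq (hm : ∀ k, Measurable (ξ k))
    (hs : ∀ k x, volume {ω | ξ k ω = x} = stepProb x)
    (hi : iIndepFun ξ volume)
    (k : ℕ) (c : Torus n) :
    volume {ω | torusProj n (ξ k ω) = c} = tp 1 n 0 c := by
  have h := proj_law ξ hm hs hi 1 k c
  have e : ∀ ω : Ω, ∑ k' ∈ Finset.Ico k (k + 1), ξ k' ω = ξ k ω := by
    intro ω
    rw [Finset.sum_Ico_succ_top (le_refl k), Finset.Ico_self, Finset.sum_empty, zero_add]
  simp only [e] at h
  exact h

lemma path_prod (hm : ∀ k, Measurable (ξ k))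
    (hs : ∀ k x, volume {ω | ξ k ω = x} = stepProb x)
    (hi : iIndepFun ξ volume)
    (α N : ℕ) (w : Fin (N + 1) → Torus n) (hw0 : w 0 = 0) :
    volume {ω | ∀ j : Fin (N + 1), torusProj n (∑ k ∈ Finset.Ico α (α + ↑j), ξ k ω) = w j}
      = ∏ j : Fin N, tp 1 n 0 (w j.succ - w j.castSucc) := by
  set cc : ℕ → Torus n := fun m =>
    if h : m < N then w (⟨m, h⟩ : Fin N).succ - w (⟨m, h⟩ : Fin N).castSucc else 0 with hcc
  set S : Finset ℕ := Finset.image (fun m => α + m) (Finset.range N) with hS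
  set sets : ℕ → Set Lat4 := fun k => (fun z : Lat4 => torusProj n z) ⁻¹' {cc (k - α)}
    with hsets
  have hsucc : ∀ (m : ℕ) (ω : Ω), ∑ k ∈ Finset.Ico α (α + (m + 1)), ξ k ω
      = ∑ k ∈ Finset.Ico α (α + m), ξ k ω + ξ (α + m) ω := by
    intro m ω
    rw [show α + (m + 1) = (α + m) + 1 from rfl]
    exact Finset.sum_Ico_succ_top (Nat.le_add_right _ _) _
  have hccm : ∀ (m : ℕ) (hm' : m < N),
      cc m = w (⟨m + 1, by omega⟩ : Fin (N + 1)) - w (⟨m, by omega⟩ : Fin (N + 1)) := by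
    intro m hm'
    rw [hcc]
    simp only [dif_pos hm']
    rfl
  have hset : {ω : Ω | ∀ j : Fin (N + 1),
        torusProj n (∑ k ∈ Finset.Ico α (α + ↑j), ξ k ω) = w j}
      = ⋂ k ∈ S, (ξ k) ⁻¹' sets k := by
    ext ω
    simp only [Set.mem_setOf_eq, Set.mem_iInter, Set.mem_preimage, hS, Finset.mem_image,
      Finset.mem_range, hsets, Set.mem_singleton_iff]
    constructor
    · rintro h k ⟨m, hm', rfl⟩
      rw [Nat.add_sub_cancel_left, hccm m hm']
      have h1 := h ⟨m, by omega⟩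
      have h2 := h ⟨m + 1, by omega⟩
      simp only at h1 h2
      rw [hsucc m ω, torusProj_add, h1] at h2
      rw [← h2]
      abel
    · intro h j
      have key : ∀ (m : ℕ) (hmle : m ≤ N),
          torusProj n (∑ k ∈ Finset.Ico α (α + m), ξ k ω)
            = w (⟨m, by omega⟩ : Fin (N + 1)) := by
        intro m
        induction m with
        | zero =>
          intro _
          rw [Nat.add_zero, Finset.Ico_self, Finset.sum_empty, torusProj_zero,
            Fin.mk_zero, hw0]
        | succ m ihm =>
          intro hmle
          have hm' : m < N := by omega
          have hstep := h (α + m) ⟨m, hm', rfl⟩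
          rw [Nat.add_sub_cancel_left, hccm m hm'] at hstep
          rw [hsucc m ω, torusProj_add, ihm (by omega), hstep]
          abel
      have := key ↑j (by omega)
      rwa [Fin.eta] at this
  rw [hset, hi.measure_inter_preimage_eq_mul S (fun k _ => MeasurableSet.of_discrete)]
  have hinj : Set.InjOn (fun m => α + m) (Finset.range N : Set ℕ) := by
    intro a _ b _ hab
    have : α + a = α + b := hab
    omega
  rw [hS, Finset.prod_image (fun a ha b hb hab => hinj ha hb hab)]
  have hterm : ∀ m ∈ Finset.range N,
      volume ((ξ (α + m)) ⁻¹' sets (α + m)) = tp 1 n 0 (cc m) := by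
    intro m hm'
    have : (ξ (α + m)) ⁻¹' sets (α + m) = {ω : Ω | torusProj n (ξ (α + m) ω) = cc m} := by
      rw [hsets]
      ext ω
      simp [Nat.add_sub_cancel_left]
    rw [this, kap_eq ξ hm hs hi (α + m) (cc m)]
  rw [Finset.prod_congr rfl hterm]
  rw [← Fin.prod_univ_eq_prod_range (fun m => tp 1 n 0 (cc m)) N]
  apply Finset.prod_congr rfl
  intro j _
  rw [hcc]
  simp only [dif_pos j.isLt, Fin.eta]
end Walk
lemma measurable_cylinder_sum {ι : Type*} [Countable ι] (n : ℕ)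
    (u : ι → Finset ℕ) (c : ι → Torus n) :
    MeasurableSet {g : ℕ → Lat4 | ∀ i, torusProj n (∑ k ∈ u i, g k) = c i} := by
  have h : {g : ℕ → Lat4 | ∀ i, torusProj n (∑ k ∈ u i, g k) = c i}
      = ⋂ i, (fun g : ℕ → Lat4 => torusProj n (∑ k ∈ u i, g k)) ⁻¹' {c i} := by
    ext g; simp [Set.mem_iInter]
  rw [h]
  refine MeasurableSet.iInter fun i => ?_
  exact ((Measurable.of_discrete (f := torusProj n)).comp
    (Finset.measurable_sum _ fun k _ => measurable_pi_apply k)) (measurableSet_singleton _)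

lemma measurable_cylinder_sum_single (n : ℕ) (u : Finset ℕ) (c : Torus n) :
    MeasurableSet {g : ℕ → Lat4 | torusProj n (∑ k ∈ u, g k) = c} :=
  ((Measurable.of_discrete (f := torusProj n)).comp
    (Finset.measurable_sum _ fun k _ => measurable_pi_apply k)) (measurableSet_singleton c)

def rext (s : Finset ℕ) (g : ↥s → Lat4) : ℕ → Lat4 :=
  fun k => if h : k ∈ s then g ⟨k, h⟩ else 0

lemma rext_sum {Ω : Type*} (ξ : ℕ → Ω → Lat4) (s u : Finset ℕ) (hu : u ⊆ s) (ω : Ω) :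
    ∑ k ∈ u, rext s (fun k' : ↥s => ξ (↑k') ω) k = ∑ k ∈ u, ξ k ω :=
  Finset.sum_congr rfl fun k hk => by simp only [rext]; rw [dif_pos (hu hk)]

lemma lintegral_pair_sum {Ω : Type*} [MeasureSpace Ω] {α : Type*} [Fintype α]
    [MeasurableSpace α] [MeasurableSingletonClass α]
    (g : α → ℝ≥0∞) (Z : Ω → α) (hZ : Measurable Z) :
    ∫⁻ ω, g (Z ω) ∂volume = ∑ p : α, g p * volume (Z ⁻¹' {p}) := by
  rw [← lintegral_map (f := g) Measurable.of_discrete hZ, lintegral_fintype]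
  refine Finset.sum_congr rfl fun p _ => ?_
  rw [Measure.map_apply hZ (measurableSet_singleton p)]
end
end Aux

/-- Mixing lemma: if `d ≥ τ_n`, then for any nonnegative function `f` of a pair of paths,
`E[f(X[0,L], X[L+d, L+M+d])] ≤ (3/2) E[f(X[0,L], Y[0,M])]` where `Y` is an independent
walk started from the uniform distribution. -/
theorem statement3 {Ω : Type} [MeasureSpace Ω] [IsProbabilityMeasure (volume : Measure Ω)]
    (n L M d : ℕ) (hn : 2 ≤ n) (hd : mixTime n ≤ d)
    (X Y : ℕ → Ω → Torus n) (hX : IsTorusWalk n X) (hY : IsTorusWalk n Y)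
    (hY0 : IsUniformStart n (Y 0))
    (hindep : IndepFun (fun ω (t : ℕ) => X t ω) (fun ω (t : ℕ) => Y t ω) volume)
    (f : (Fin (L + 1) → Torus n) → (Fin (M + 1) → Torus n) → ℝ≥0∞)
    (hf : Measurable (Function.uncurry f)) :
    ∫⁻ ω, f (fun i => X i ω) (fun j => X (L + d + j) ω) ∂volume ≤
      3 / 2 * ∫⁻ ω, f (fun i => X i ω) (fun j => Y j ω) ∂volume := by
  classical
  haveI : NeZero n := ⟨by omega⟩
  obtain ⟨hXm, ξ, hξm, hξs, hξi, hXind, hXeq⟩ := hX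
  obtain ⟨hYm, η, hηm, hηs, hηi, hYind, hYeq⟩ := hY
  -- basic random vectors
  set A : Ω → (Fin (L + 1) → Torus n) := fun ω i => X (↑i) ω with hA_def
  set B : Ω → (Fin (M + 1) → Torus n) := fun ω j => X (L + d + ↑j) ω with hB_def
  set YP : Ω → (Fin (M + 1) → Torus n) := fun ω j => Y (↑j) ω with hYP_def
  have hA : Measurable A := measurable_pi_lambda _ fun i => hXm _
  have hB : Measurable B := measurable_pi_lambda _ fun j => hXm _
  have hYP : Measurable YP := measurable_pi_lambda _ fun j => hYm _
  -- the product kernel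
  set Pprod : (Fin (M + 1) → Torus n) → ℝ≥0∞ :=
    fun b => ∏ j : Fin M, tp 1 n 0 ((b j.succ - b 0) - (b j.castSucc - b 0)) with hPprod_def
  -- events
  set H1 : (Fin (L + 1) → Torus n) → Set Ω := fun a =>
    {ω | ∀ i : Fin (L + 1), torusProj n (∑ k ∈ Finset.range (↑i : ℕ), ξ k ω) = a i - a 0}
    with hH1_def
  set EV : (Fin (L + 1) → Torus n) → (Fin (M + 1) → Torus n) → Set Ω := fun a b =>
    {ω | torusProj n (∑ k ∈ Finset.Ico L (L + d), ξ k ω) = b 0 - a (Fin.last L)}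
    with hEV_def
  set EW : (Fin (M + 1) → Torus n) → Set Ω := fun b =>
    {ω | ∀ j : Fin (M + 1),
      torusProj n (∑ k ∈ Finset.Ico (L + d) (L + d + (↑j : ℕ)), ξ k ω) = b j - b 0}
    with hEW_def
  set EWY : (Fin (M + 1) → Torus n) → Set Ω := fun b =>
    {ω | ∀ j : Fin (M + 1),
      torusProj n (∑ k ∈ Finset.range (↑j : ℕ), η k ω) = b j - b 0} with hEWY_def
  -- `A = a` decomposition
  have claim3 : ∀ a, {ω | A ω = a} = (X 0) ⁻¹' {a 0} ∩ H1 a := by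
    intro a
    ext ω
    simp only [Set.mem_setOf_eq, Set.mem_inter_iff, Set.mem_preimage,
      Set.mem_singleton_iff, hH1_def]
    constructor
    · intro h
      have hfun : ∀ i : Fin (L + 1), X (↑i) ω = a i := fun i => congrFun h i
      have h0 : X 0 ω = a 0 := by simpa using hfun 0
      refine ⟨h0, fun i => ?_⟩
      have hi := hfun i
      rw [hXeq (↑i) ω, h0] at hi
      rw [eq_sub_iff_add_eq']
      exact hi
    · rintro ⟨h0, h1⟩
      funext i
      show X (↑i) ω = a i
      rw [hXeq (↑i) ω, h0, h1 i]
      abel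
  -- decomposition of X (L + d + j)
  have hsplit3 : ∀ (ω : Ω) (j : Fin (M + 1)), X (L + d + ↑j) ω
      = (X 0 ω + torusProj n (∑ k ∈ Finset.range L, ξ k ω))
        + (torusProj n (∑ k ∈ Finset.Ico L (L + d), ξ k ω)
          + torusProj n (∑ k ∈ Finset.Ico (L + d) (L + d + (↑j : ℕ)), ξ k ω)) := by
    intro ω j
    rw [hXeq (L + d + ↑j) ω, Finset.range_eq_Ico,
      ← Finset.sum_Ico_consecutive (fun k => ξ k ω) (Nat.zero_le (L + d))
        (Nat.le_add_right (L + d) (↑j : ℕ)),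
      ← Finset.sum_Ico_consecutive (fun k => ξ k ω) (Nat.zero_le L) (Nat.le_add_right L d),
      torusProj_add, torusProj_add, ← Finset.range_eq_Ico]
    abel
  -- joint event decomposition
  have claim1 : ∀ a b, {ω | A ω = a ∧ B ω = b}
      = ((X 0) ⁻¹' {a 0} ∩ H1 a) ∩ (EV a b ∩ EW b) := by
    intro a b
    ext ω
    simp only [Set.mem_setOf_eq, Set.mem_inter_iff]
    constructor
    · rintro ⟨hAa, hBb⟩
      have hEA : ω ∈ (X 0) ⁻¹' {a 0} ∩ H1 a := by
        rw [← claim3 a]; exact hAa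
      obtain ⟨h0m, h1m⟩ := hEA
      have h0 : X 0 ω = a 0 := h0m
      have h1 : ∀ i : Fin (L + 1),
          torusProj n (∑ k ∈ Finset.range (↑i : ℕ), ξ k ω) = a i - a 0 := h1m
      have haL : X 0 ω + torusProj n (∑ k ∈ Finset.range L, ξ k ω) = a (Fin.last L) := by
        have hl2 := h1 (Fin.last L)
        rw [Fin.val_last] at hl2
        rw [h0, hl2]
        abel
      have hBfun : ∀ j : Fin (M + 1), X (L + d + (↑j : ℕ)) ω = b j :=
        fun j => congrFun hBb j
      have hb0 : torusProj n (∑ k ∈ Finset.Ico L (L + d), ξ k ω)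
          = b 0 - a (Fin.last L) := by
        have h00 := hBfun 0
        rw [hsplit3 ω 0] at h00
        rw [show ((0 : Fin (M + 1)) : ℕ) = 0 from rfl, Nat.add_zero, Finset.Ico_self,
          Finset.sum_empty, torusProj_zero, haL, add_zero] at h00
        rw [eq_sub_iff_add_eq']
        exact h00
      refine ⟨⟨h0m, h1m⟩, hb0, ?_⟩
      intro j
      have hj := hBfun j
      rw [hsplit3 ω j, haL, hb0] at hj
      rw [← hj]
      abel
    · rintro ⟨⟨h0m, h1m⟩, hev, hew⟩
      have h0 : X 0 ω = a 0 := h0m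
      have h1 : ∀ i : Fin (L + 1),
          torusProj n (∑ k ∈ Finset.range (↑i : ℕ), ξ k ω) = a i - a 0 := h1m
      have hev' : torusProj n (∑ k ∈ Finset.Ico L (L + d), ξ k ω)
          = b 0 - a (Fin.last L) := hev
      have hew' : ∀ j : Fin (M + 1),
          torusProj n (∑ k ∈ Finset.Ico (L + d) (L + d + (↑j : ℕ)), ξ k ω)
            = b j - b 0 := hew
      have haL : X 0 ω + torusProj n (∑ k ∈ Finset.range L, ξ k ω) = a (Fin.last L) := by
        have hl2 := h1 (Fin.last L)
        rw [Fin.val_last] at hl2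
        rw [h0, hl2]
        abel
      constructor
      · have : ω ∈ {ω | A ω = a} := by
          rw [claim3 a]; exact ⟨h0m, h1m⟩
        exact this
      · funext j
        show X (L + d + (↑j : ℕ)) ω = b j
        rw [hsplit3 ω j, haL, hev', hew' j]
        abel
  -- subset and disjointness facts
  have hsub1L : ∀ i : Fin (L + 1), Finset.range (↑i : ℕ) ⊆ Finset.range L := by
    intro i
    exact Finset.range_subset_range.mpr (by have := i.isLt; omega)
  have hsub1 : ∀ i : Fin (L + 1), Finset.range (↑i : ℕ) ⊆ Finset.range (L + d) := by
    intro i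
    exact Finset.range_subset_range.mpr (by have := i.isLt; omega)
  have hsub2 : Finset.Ico L (L + d) ⊆ Finset.range (L + d) := by
    intro x hx
    simp only [Finset.mem_Ico] at hx
    simp only [Finset.mem_range]
    omega
  have hsub3 : ∀ j : Fin (M + 1),
      Finset.Ico (L + d) (L + d + (↑j : ℕ)) ⊆ Finset.Ico (L + d) (L + d + M) := by
    intro j
    exact Finset.Ico_subset_Ico le_rfl (by have := j.isLt; omega)
  have hdisj12 : Disjoint (Finset.range (L + d)) (Finset.Ico (L + d) (L + d + M)) := by
    rw [Finset.disjoint_left]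
    intro x hx hx'
    simp only [Finset.mem_range] at hx
    simp only [Finset.mem_Ico] at hx'
    omega
  have hdisjL : Disjoint (Finset.range L) (Finset.Ico L (L + d)) := by
    rw [Finset.disjoint_left]
    intro x hx hx'
    simp only [Finset.mem_range] at hx
    simp only [Finset.mem_Ico] at hx'
    omega
  -- factorization steps
  have stepB2 : ∀ a b, volume (H1 a ∩ EV a b) = volume (H1 a) * volume (EV a b) := by
    intro a b
    have h := indep_P ξ hξm hξi (Finset.range L) (Finset.Ico L (L + d)) hdisjL
      (fun g => ∀ i : Fin (L + 1),
        torusProj n (∑ k ∈ Finset.range (↑i : ℕ), rext (Finset.range L) g k) = a i - a 0)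
      (fun g => torusProj n (∑ k ∈ Finset.Ico L (L + d),
        rext (Finset.Ico L (L + d)) g k) = b 0 - a (Fin.last L))
    have e1 : {ω : Ω | ∀ i : Fin (L + 1), torusProj n (∑ k ∈ Finset.range (↑i : ℕ),
        rext (Finset.range L) (fun k' : ↥(Finset.range L) => ξ (↑k') ω) k) = a i - a 0}
        = H1 a := by
      ext ω
      simp only [Set.mem_setOf_eq, hH1_def]
      constructor
      · intro h' i; have := h' i; rwa [rext_sum ξ _ _ (hsub1L i) ω] at this
      · intro h' i; rw [rext_sum ξ _ _ (hsub1L i) ω]; exact h' i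
    have e2 : {ω : Ω | torusProj n (∑ k ∈ Finset.Ico L (L + d),
        rext (Finset.Ico L (L + d)) (fun k' : ↥(Finset.Ico L (L + d)) => ξ (↑k') ω) k)
          = b 0 - a (Fin.last L)} = EV a b := by
      ext ω
      simp only [Set.mem_setOf_eq, hEV_def]
      rw [rext_sum ξ _ _ (subset_refl _) ω]
    rw [e1, e2] at h
    exact h
  have stepB1 : ∀ a b, volume ((H1 a ∩ EV a b) ∩ EW b)
      = volume (H1 a ∩ EV a b) * volume (EW b) := by
    intro a b
    have h := indep_P ξ hξm hξi (Finset.range (L + d)) (Finset.Ico (L + d) (L + d + M))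
      hdisj12
      (fun g => (∀ i : Fin (L + 1),
          torusProj n (∑ k ∈ Finset.range (↑i : ℕ), rext (Finset.range (L + d)) g k)
            = a i - a 0)
        ∧ torusProj n (∑ k ∈ Finset.Ico L (L + d), rext (Finset.range (L + d)) g k)
            = b 0 - a (Fin.last L))
      (fun g => ∀ j : Fin (M + 1),
        torusProj n (∑ k ∈ Finset.Ico (L + d) (L + d + (↑j : ℕ)),
          rext (Finset.Ico (L + d) (L + d + M)) g k) = b j - b 0)
    have e12 : {ω : Ω | (∀ i : Fin (L + 1), torusProj n (∑ k ∈ Finset.range (↑i : ℕ),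
          rext (Finset.range (L + d)) (fun k' : ↥(Finset.range (L + d)) => ξ (↑k') ω) k)
            = a i - a 0)
        ∧ torusProj n (∑ k ∈ Finset.Ico L (L + d),
            rext (Finset.range (L + d)) (fun k' : ↥(Finset.range (L + d)) => ξ (↑k') ω) k)
              = b 0 - a (Fin.last L)} = H1 a ∩ EV a b := by
      ext ω
      simp only [Set.mem_setOf_eq, Set.mem_inter_iff, hH1_def, hEV_def]
      constructor
      · rintro ⟨hp, hq⟩
        constructor
        · intro i; have := hp i; rwa [rext_sum ξ _ _ (hsub1 i) ω] at this
        · rwa [rext_sum ξ _ _ hsub2 ω] at hq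
      · rintro ⟨hp, hq⟩
        constructor
        · intro i; rw [rext_sum ξ _ _ (hsub1 i) ω]; exact hp i
        · rw [rext_sum ξ _ _ hsub2 ω]; exact hq
    have e3 : {ω : Ω | ∀ j : Fin (M + 1),
        torusProj n (∑ k ∈ Finset.Ico (L + d) (L + d + (↑j : ℕ)),
          rext (Finset.Ico (L + d) (L + d + M))
            (fun k' : ↥(Finset.Ico (L + d) (L + d + M)) => ξ (↑k') ω) k) = b j - b 0}
        = EW b := by
      ext ω
      simp only [Set.mem_setOf_eq, hEW_def]
      constructor
      · intro h' j; have := h' j; rwa [rext_sum ξ _ _ (hsub3 j) ω] at this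
      · intro h' j; rw [rext_sum ξ _ _ (hsub3 j) ω]; exact h' j
    rw [e12, e3] at h
    exact h
  -- independence from the starting point
  have hXind' := indepFun_iff_measure_inter_preimage_eq_mul.mp hXind
  have stepA : ∀ (a0 : Torus n) (SS : Set (ℕ → Lat4)), MeasurableSet SS →
      volume ((X 0) ⁻¹' {a0} ∩ (fun ω k => ξ k ω) ⁻¹' SS)
        = volume ((X 0) ⁻¹' {a0}) * volume ((fun ω k => ξ k ω) ⁻¹' SS) :=
    fun a0 SS hSS => hXind' {a0} SS (measurableSet_singleton a0) hSS
  -- the LHS factorization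
  have hLfac : ∀ a b, volume (((X 0) ⁻¹' {a 0} ∩ H1 a) ∩ (EV a b ∩ EW b))
      = volume {ω | A ω = a} * (tp d n 0 (b 0 - a (Fin.last L)) * Pprod b) := by
    intro a b
    set SG1 : Set (ℕ → Lat4) := {g | ∀ i : Fin (L + 1),
      torusProj n (∑ k ∈ Finset.range (↑i : ℕ), g k) = a i - a 0} with hSG1
    set SG2 : Set (ℕ → Lat4) := {g | torusProj n (∑ k ∈ Finset.Ico L (L + d), g k)
      = b 0 - a (Fin.last L)} with hSG2
    set SG3 : Set (ℕ → Lat4) := {g | ∀ j : Fin (M + 1),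
      torusProj n (∑ k ∈ Finset.Ico (L + d) (L + d + (↑j : ℕ)), g k) = b j - b 0} with hSG3
    have hm1 : MeasurableSet SG1 := measurable_cylinder_sum n _ _
    have hm2 : MeasurableSet SG2 := measurable_cylinder_sum_single n _ _
    have hm3 : MeasurableSet SG3 := measurable_cylinder_sum n _ _
    have hpre1 : (fun ω (k : ℕ) => ξ k ω) ⁻¹' SG1 = H1 a := rfl
    have hpre2 : (fun ω (k : ℕ) => ξ k ω) ⁻¹' SG2 = EV a b := rfl
    have hpre3 : (fun ω (k : ℕ) => ξ k ω) ⁻¹' SG3 = EW b := rfl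
    have h1' : ((X 0) ⁻¹' {a 0} ∩ H1 a) ∩ (EV a b ∩ EW b)
        = (X 0) ⁻¹' {a 0} ∩ (fun ω (k : ℕ) => ξ k ω) ⁻¹' (SG1 ∩ (SG2 ∩ SG3)) := by
      rw [Set.preimage_inter, Set.preimage_inter, hpre1, hpre2, hpre3, Set.inter_assoc]
    have h2' : volume (((X 0) ⁻¹' {a 0} ∩ H1 a) ∩ (EV a b ∩ EW b))
        = volume ((X 0) ⁻¹' {a 0}) * volume (H1 a ∩ (EV a b ∩ EW b)) := by
      rw [h1', stepA (a 0) _ (hm1.inter (hm2.inter hm3)), Set.preimage_inter,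
        Set.preimage_inter, hpre1, hpre2, hpre3]
    have h3' : volume (H1 a ∩ (EV a b ∩ EW b))
        = volume (H1 a) * volume (EV a b) * volume (EW b) := by
      rw [← Set.inter_assoc, stepB1 a b, stepB2 a b]
    have h4' : volume {ω | A ω = a} = volume ((X 0) ⁻¹' {a 0}) * volume (H1 a) := by
      rw [claim3 a, ← hpre1]
      exact stepA (a 0) SG1 hm1
    have h5' : volume (EV a b) = tp d n 0 (b 0 - a (Fin.last L)) := by
      have := proj_law ξ hξm hξs hξi d L (b 0 - a (Fin.last L))
      rw [hEV_def]
      exact this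
    have h6' : volume (EW b) = Pprod b := by
      have hp := path_prod ξ hξm hξs hξi (L + d) M (fun j => b j - b 0) (by simp)
      rw [hEW_def, hPprod_def]
      exact hp
    rw [h2', h3', h4', h5', h6']
    ring
  -- RHS factorization
  have hYfac : ∀ b, volume {ω | YP ω = b} = ((n : ℝ≥0∞) ^ 4)⁻¹ * Pprod b := by
    intro b
    have claim6 : {ω | YP ω = b} = (Y 0) ⁻¹' {b 0} ∩ EWY b := by
      ext ω
      simp only [Set.mem_setOf_eq, Set.mem_inter_iff, Set.mem_preimage,
        Set.mem_singleton_iff, hEWY_def]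
      constructor
      · intro h
        have hfun : ∀ j : Fin (M + 1), Y (↑j) ω = b j := fun j => congrFun h j
        have h0 : Y 0 ω = b 0 := by simpa using hfun 0
        refine ⟨h0, fun j => ?_⟩
        have hj := hfun j
        rw [hYeq (↑j) ω, h0] at hj
        rw [eq_sub_iff_add_eq']
        exact hj
      · rintro ⟨h0, h1⟩
        funext j
        show Y (↑j) ω = b j
        rw [hYeq (↑j) ω, h0, h1 j]
        abel
    set SGY : Set (ℕ → Lat4) := {g | ∀ j : Fin (M + 1),
      torusProj n (∑ k ∈ Finset.range (↑j : ℕ), g k) = b j - b 0} with hSGY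
    have hmY : MeasurableSet SGY := measurable_cylinder_sum n _ _
    have hpreY : (fun ω (k : ℕ) => η k ω) ⁻¹' SGY = EWY b := rfl
    have hYind' := indepFun_iff_measure_inter_preimage_eq_mul.mp hYind
    have h1' : volume ((Y 0) ⁻¹' {b 0} ∩ EWY b)
        = volume ((Y 0) ⁻¹' {b 0}) * volume (EWY b) := by
      rw [← hpreY]
      exact hYind' {b 0} SGY (measurableSet_singleton _) hmY
    have h2' : volume ((Y 0) ⁻¹' {b 0}) = ((n : ℝ≥0∞) ^ 4)⁻¹ := hY0 (b 0)
    have h3' : volume (EWY b) = Pprod b := by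
      have hp := path_prod η hηm hηs hηi 0 M (fun j => b j - b 0) (by simp)
      have hev : {ω : Ω | ∀ j : Fin (M + 1),
          torusProj n (∑ k ∈ Finset.Ico 0 (0 + (↑j : ℕ)), η k ω) = b j - b 0}
          = EWY b := by
        ext ω
        simp only [Set.mem_setOf_eq, hEWY_def, Nat.zero_add, ← Finset.range_eq_Ico]
      rw [hev] at hp
      rw [hPprod_def]
      exact hp
    rw [claim6, h1', h2', h3']
  -- independence of A and YP
  have hAYP : IndepFun A YP volume := by
    have hφ : Measurable (fun g : ℕ → Torus n => (fun i : Fin (L + 1) => g (↑i : ℕ))) :=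
      measurable_pi_lambda _ fun i => measurable_pi_apply _
    have hψ : Measurable (fun g : ℕ → Torus n => (fun j : Fin (M + 1) => g (↑j : ℕ))) :=
      measurable_pi_lambda _ fun j => measurable_pi_apply _
    exact hindep.comp hφ hψ
  have hpairY : ∀ a b, volume ((fun ω => (A ω, YP ω)) ⁻¹' {(a, b)})
      = volume {ω | A ω = a} * volume {ω | YP ω = b} := by
    intro a b
    have hpre : (fun ω => (A ω, YP ω)) ⁻¹' {(a, b)} = A ⁻¹' {a} ∩ YP ⁻¹' {b} := by
      ext ω
      simp [Prod.ext_iff]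
    rw [hpre, (indepFun_iff_measure_inter_preimage_eq_mul.mp hAYP) {a} {b}
      (measurableSet_singleton a) (measurableSet_singleton b)]
    rfl
  have hpairX : ∀ a b, volume ((fun ω => (A ω, B ω)) ⁻¹' {(a, b)})
      = volume {ω | A ω = a} * (tp d n 0 (b 0 - a (Fin.last L)) * Pprod b) := by
    intro a b
    have hpre : (fun ω => (A ω, B ω)) ⁻¹' {(a, b)} = {ω | A ω = a ∧ B ω = b} := by
      ext ω
      simp [Prod.ext_iff]
    rw [hpre, claim1 a b]
    exact hLfac a b
  -- the mixing bound
  have hbound : ∀ c : Torus n, tp d n 0 c ≤ 3 / 2 * ((n : ℝ≥0∞) ^ 4)⁻¹ :=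
    fun c => tp_mix_bound (n := n) ξ hξm hξs hξi hn d hd c
  -- rewrite both integrals as sums
  have hLHS : ∫⁻ ω, f (fun i => X (↑i) ω) (fun j => X (L + d + ↑j) ω) ∂volume
      = ∑ p : (Fin (L + 1) → Torus n) × (Fin (M + 1) → Torus n),
          f p.1 p.2 * volume ((fun ω => (A ω, B ω)) ⁻¹' {p}) :=
    lintegral_pair_sum (fun p => f p.1 p.2) (fun ω => (A ω, B ω)) (hA.prodMk hB)
  have hRHS : ∫⁻ ω, f (fun i => X (↑i) ω) (fun j => Y (↑j) ω) ∂volume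
      = ∑ p : (Fin (L + 1) → Torus n) × (Fin (M + 1) → Torus n),
          f p.1 p.2 * volume ((fun ω => (A ω, YP ω)) ⁻¹' {p}) :=
    lintegral_pair_sum (fun p => f p.1 p.2) (fun ω => (A ω, YP ω)) (hA.prodMk hYP)
  rw [hLHS, hRHS, Finset.mul_sum]
  refine Finset.sum_le_sum fun p _ => ?_
  rw [hpairX p.1 p.2, hpairY p.1 p.2, hYfac p.2]
  have h := hbound (p.2 0 - p.1 (Fin.last L))
  calc f p.1 p.2 * (volume {ω | A ω = p.1}
        * (tp d n 0 (p.2 0 - p.1 (Fin.last L)) * Pprod p.2))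
      ≤ f p.1 p.2 * (volume {ω | A ω = p.1}
        * ((3 / 2 * ((n : ℝ≥0∞) ^ 4)⁻¹) * Pprod p.2)) :=
        mul_le_mul_right (mul_le_mul_right (mul_le_mul_left h _) _) _
    _ = 3 / 2 * (f p.1 p.2 * (volume {ω | A ω = p.1}
        * (((n : ℝ≥0∞) ^ 4)⁻¹ * Pprod p.2))) := by ring
end

section
/- Let Y_1,…,Y_n and Z_1,…,Z_n be {0,1}-valued random variables (defined on possibly different probability spaces). Let p_i = P(Y_i = 1), q_i = P(Z_i = 1), q_{ij} = P(Y_i = 1 and Y_j = 1), and p_{ij} = P(Z_i = 1 and Z_j = 1). Then there exists a coupling of the random vectors (Y_1,…,Y_n) and (Z_1,…,Z_n), i.e. a probability space carrying random vectors with these two joint distributions, under which P(Y_i ≠ Z_i for some i = 1,…,n) ≤ Σ_{i=1}^{n} Σ_{j ≠ i} (p_{ij} + q_{ij}) + Σ_{i=1}^{n} |p_i − q_i|. -/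
open MeasureTheory ProbabilityTheory Filter
open scoped ENNReal

section S19Aux
open Finset MeasureTheory
open scoped Classical ENNReal

namespace S19

variable {n : ℕ}

def wt (a : Fin n → Bool) : ℕ := (Finset.univ.filter fun i => a i = true).card

def sgl (i : Fin n) : Fin n → Bool := fun j => if j = i then true else false

lemma wt_sgl (i : Fin n) : wt (sgl i) = 1 := by
  unfold wt
  have : (Finset.univ.filter fun j => sgl i j = true) = {i} := by
    ext j; simp [sgl]
  rw [this]; simp

lemma sgl_inj : Function.Injective (sgl (n := n)) := by
  intro i j hij
  by_contra h
  have := congrFun hij i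
  simp [sgl, h] at this

lemma wt_eq_zero_iff (a : Fin n → Bool) : wt a = 0 ↔ a = fun _ => false := by
  constructor
  · intro h
    funext j
    have : (Finset.univ.filter fun i => a i = true) = ∅ := Finset.card_eq_zero.mp h
    by_contra hj
    have hj' : a j = true := by simpa using hj
    have : j ∈ (Finset.univ.filter fun i => a i = true) := by simp [hj']
    simp [Finset.card_eq_zero.mp h] at this
  · intro h; subst h; unfold wt; simp

lemma wt_eq_one_iff (a : Fin n → Bool) : wt a = 1 ↔ ∃ i, a = sgl i := by
  constructor
  · intro h
    obtain ⟨i, hi⟩ := Finset.card_eq_one.mp h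
    refine ⟨i, funext fun j => ?_⟩
    have hmem : ∀ j, a j = true ↔ j = i := by
      intro j
      constructor
      · intro hj
        have : j ∈ (Finset.univ.filter fun k => a k = true) := by simp [hj]
        rw [hi] at this; simpa using this
      · intro hj; subst hj
        have : j ∈ ({j} : Finset (Fin n)) := by simp
        rw [← hi] at this; simpa using this
    by_cases hj : j = i
    · subst hj; simp [sgl, (hmem j).mpr rfl]
    · simp only [sgl, if_neg hj]
      have h2 := (hmem j).not.mpr hj
      simpa using h2
  · rintro ⟨i, rfl⟩; exact wt_sgl i



variable {n : ℕ}

lemma wnn (w : ℕ) : 0 ≤ (w:ℝ) * ((w:ℝ) - 1) := by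
  rcases Nat.eq_zero_or_pos w with h | h
  · subst h; norm_num
  · have : (1:ℝ) ≤ (w:ℝ) := by exact_mod_cast h
    nlinarith

lemma sum_ind (a : Fin n → Bool) : ∑ i, (if a i = true then (1:ℝ) else 0) = (wt a : ℝ) := by
  rw [Finset.sum_boole]; rfl

lemma count_pairs (a : Fin n → Bool) :
    ∑ i, ∑ j ∈ Finset.univ.erase i, (if a i = true ∧ a j = true then (1:ℝ) else 0)
      = (wt a : ℝ) * ((wt a : ℝ) - 1) := by
  have inner : ∀ i, ∑ j ∈ Finset.univ.erase i, (if a i = true ∧ a j = true then (1:ℝ) else 0)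
      = (if a i = true then (1:ℝ) else 0) * ((wt a : ℝ) - (if a i = true then (1:ℝ) else 0)) := by
    intro i
    by_cases h : a i = true
    · simp only [h, true_and, if_true, one_mul]
      rw [Finset.sum_erase_eq_sub (Finset.mem_univ i), sum_ind, h, if_pos rfl]
    · simp [h]
  rw [Finset.sum_congr rfl fun i _ => inner i]
  have h2 : ∀ i, (if a i = true then (1:ℝ) else 0) * ((wt a : ℝ) - (if a i = true then (1:ℝ) else 0))
      = (if a i = true then (1:ℝ) else 0) * (wt a : ℝ) - (if a i = true then (1:ℝ) else 0) := by
    intro i; by_cases h : a i = true <;> simp [h]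
  rw [Finset.sum_congr rfl fun i _ => h2 i, Finset.sum_sub_distrib, ← Finset.sum_mul, sum_ind]
  ring

lemma sum_P (G : (Fin n → Bool) → ℝ) :
    ∑ i, ∑ a ∈ Finset.univ.filter (fun a => a i = true), G a
      = ∑ a, (wt a : ℝ) * G a := by
  have h1 : ∀ i, ∑ a ∈ Finset.univ.filter (fun a => a i = true), G a
      = ∑ a, (if a i = true then (1:ℝ) else 0) * G a := by
    intro i
    rw [Finset.sum_filter]
    exact Finset.sum_congr rfl fun a _ => by by_cases h : a i = true <;> simp [h]
  rw [Finset.sum_congr rfl fun i _ => h1 i, Finset.sum_comm]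
  exact Finset.sum_congr rfl fun a _ => by rw [← Finset.sum_mul, sum_ind]

lemma sum_pairs (G : (Fin n → Bool) → ℝ) :
    ∑ i, ∑ j ∈ Finset.univ.erase i,
        ∑ a ∈ Finset.univ.filter (fun a => a i = true ∧ a j = true), G a
      = ∑ a, ((wt a : ℝ) * ((wt a : ℝ) - 1)) * G a := by
  have h1 : ∀ (i : Fin n) (j : Fin n),
      ∑ a ∈ Finset.univ.filter (fun a => a i = true ∧ a j = true), G a
      = ∑ a, (if a i = true ∧ a j = true then (1:ℝ) else 0) * G a := by
    intro i j
    rw [Finset.sum_filter]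
    exact Finset.sum_congr rfl fun a _ => by
      by_cases h : a i = true ∧ a j = true <;> simp [h]
  calc ∑ i, ∑ j ∈ Finset.univ.erase i,
        ∑ a ∈ Finset.univ.filter (fun a => a i = true ∧ a j = true), G a
      = ∑ i, ∑ a, ∑ j ∈ Finset.univ.erase i,
          (if a i = true ∧ a j = true then (1:ℝ) else 0) * G a := by
        refine Finset.sum_congr rfl fun i _ => ?_
        rw [Finset.sum_congr rfl fun j _ => h1 i j, Finset.sum_comm]
    _ = ∑ a, ∑ i, ∑ j ∈ Finset.univ.erase i,
          (if a i = true ∧ a j = true then (1:ℝ) else 0) * G a := Finset.sum_comm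
    _ = ∑ a, ((wt a : ℝ) * ((wt a : ℝ) - 1)) * G a := by
        refine Finset.sum_congr rfl fun a _ => ?_
        rw [Finset.sum_congr rfl fun i (_ : i ∈ Finset.univ) => (Finset.sum_mul ..).symm,
          ← Finset.sum_mul, count_pairs]


variable {n : ℕ}

lemma coef1 (w : ℕ) (x : ℝ) (hx : 0 ≤ x) :
    (w:ℝ) * x - (if w = 1 then x else 0) ≤ (w:ℝ) * ((w:ℝ) - 1) * x := by
  match w with
  | 0 => simp
  | 1 => simp
  | (k+2) =>
    have h2 : (2:ℝ) ≤ ((k+2 : ℕ) : ℝ) := by push_cast; linarith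
    simp only [if_neg (by omega : ¬ (k+2 = 1))]
    nlinarith [mul_nonneg (mul_nonneg (by linarith : (0:ℝ) ≤ ((k+2:ℕ):ℝ))
      (by linarith : (0:ℝ) ≤ ((k+2:ℕ):ℝ) - 2)) hx]

lemma coef0 (w : ℕ) (x : ℝ) (hx : 0 ≤ x) :
    ((w:ℝ) - (w:ℝ) * ((w:ℝ) - 1) / 2) * x ≤ (if w = 0 then 0 else x) := by
  match w with
  | 0 => simp
  | 1 => simp
  | (k+2) =>
    have h2 : (2:ℝ) ≤ ((k+2 : ℕ) : ℝ) := by push_cast; linarith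
    simp only [if_neg (by omega : ¬ (k+2 = 0))]
    nlinarith [mul_nonneg (mul_nonneg (by linarith : (0:ℝ) ≤ ((k+2:ℕ):ℝ) - 1)
      (by linarith : (0:ℝ) ≤ ((k+2:ℕ):ℝ) - 2)) hx]

theorem real_core (F H : (Fin n → Bool) → ℝ)
    (hF0 : ∀ a, 0 ≤ F a) (hH0 : ∀ a, 0 ≤ H a)
    (hF1 : ∑ a, F a = 1) (hH1 : ∑ a, H a = 1) :
    ∑ a, max (F a - H a) 0 ≤
      (∑ i, ∑ j ∈ Finset.univ.erase i,
        ((∑ a ∈ Finset.univ.filter fun a => a i = true ∧ a j = true, H a) +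
         (∑ a ∈ Finset.univ.filter fun a => a i = true ∧ a j = true, F a))) +
      ∑ i, |(∑ a ∈ Finset.univ.filter fun a => a i = true, F a) -
            (∑ a ∈ Finset.univ.filter fun a => a i = true, H a)| := by
  set P : Fin n → ℝ := fun i => ∑ a ∈ Finset.univ.filter (fun a => a i = true), F a with hP
  set Q : Fin n → ℝ := fun i => ∑ a ∈ Finset.univ.filter (fun a => a i = true), H a with hQ
  set EY : ℝ := ∑ a, ((wt a : ℝ) * ((wt a : ℝ) - 1)) * F a with hEY
  set EZ : ℝ := ∑ a, ((wt a : ℝ) * ((wt a : ℝ) - 1)) * H a with hEZ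
  have hEYnn : 0 ≤ EY := Finset.sum_nonneg fun a _ => mul_nonneg (wnn _) (hF0 a)
  -- RHS rewrite
  have hRHS : (∑ i, ∑ j ∈ Finset.univ.erase i,
        ((∑ a ∈ Finset.univ.filter fun a => a i = true ∧ a j = true, H a) +
         (∑ a ∈ Finset.univ.filter fun a => a i = true ∧ a j = true, F a)))
      = EZ + EY := by
    rw [show (∑ i, ∑ j ∈ Finset.univ.erase i,
        ((∑ a ∈ Finset.univ.filter fun a => a i = true ∧ a j = true, H a) +
         (∑ a ∈ Finset.univ.filter fun a => a i = true ∧ a j = true, F a)))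
      = (∑ i, ∑ j ∈ Finset.univ.erase i,
          ∑ a ∈ Finset.univ.filter fun a => a i = true ∧ a j = true, H a)
        + (∑ i, ∑ j ∈ Finset.univ.erase i,
          ∑ a ∈ Finset.univ.filter fun a => a i = true ∧ a j = true, F a) from by
        rw [← Finset.sum_add_distrib]
        exact Finset.sum_congr rfl fun i _ => Finset.sum_add_distrib]
    rw [sum_pairs, sum_pairs]
  rw [hRHS]
  have hsumP : ∑ i, P i = ∑ a, (wt a : ℝ) * F a := by
    simp only [hP]; exact sum_P F
  have hsumQ : ∑ i, Q i = ∑ a, (wt a : ℝ) * H a := by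
    simp only [hQ]; exact sum_P H
  set Z0 : Fin n → Bool := fun _ => false with hZ0
  have hZ : Finset.univ.filter (fun a : Fin n → Bool => wt a = 0) = {Z0} := by
    ext a
    simp only [Finset.mem_filter, Finset.mem_univ, true_and, Finset.mem_singleton]
    rw [wt_eq_zero_iff, hZ0]
  have hsplit : ∑ a, max (F a - H a) 0 =
      (∑ a ∈ Finset.univ.filter (fun a => wt a = 0), max (F a - H a) 0)
      + ((∑ a ∈ Finset.univ.filter (fun a => wt a = 1), max (F a - H a) 0)
      + (∑ a ∈ Finset.univ.filter (fun a => 2 ≤ wt a), max (F a - H a) 0)) := by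
    have e1 : (Finset.univ.filter (fun a : Fin n → Bool => ¬ wt a = 0)).filter
        (fun a => wt a = 1) = Finset.univ.filter (fun a => wt a = 1) := by
      rw [Finset.filter_filter]
      ext a; simp only [Finset.mem_filter, Finset.mem_univ, true_and]
      omega
    have e2 : (Finset.univ.filter (fun a : Fin n → Bool => ¬ wt a = 0)).filter
        (fun a => ¬ wt a = 1) = Finset.univ.filter (fun a => 2 ≤ wt a) := by
      rw [Finset.filter_filter]
      ext a; simp only [Finset.mem_filter, Finset.mem_univ, true_and]
      omega
    rw [← Finset.sum_filter_add_sum_filter_not Finset.univ (fun a => wt a = 0)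
      (fun a => max (F a - H a) 0),
      ← Finset.sum_filter_add_sum_filter_not
        (Finset.univ.filter (fun a : Fin n → Bool => ¬ wt a = 0)) (fun a => wt a = 1)
        (fun a => max (F a - H a) 0), e1, e2]
  -- zero class bounds
  have hsum_ne0F : ∑ a, (if wt a = 0 then (0:ℝ) else F a) = 1 - F Z0 := by
    have e : ∑ a, (if wt a = 0 then (0:ℝ) else F a)
        = ∑ a, F a - ∑ a, (if wt a = 0 then F a else 0) := by
      rw [← Finset.sum_sub_distrib]
      exact Finset.sum_congr rfl fun a _ => by by_cases h : wt a = 0 <;> simp [h]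
    rw [e, hF1, ← Finset.sum_filter, hZ, Finset.sum_singleton]
  have hsum_ne0H : ∑ a, (if wt a = 0 then (0:ℝ) else H a) = 1 - H Z0 := by
    have e : ∑ a, (if wt a = 0 then (0:ℝ) else H a)
        = ∑ a, H a - ∑ a, (if wt a = 0 then H a else 0) := by
      rw [← Finset.sum_sub_distrib]
      exact Finset.sum_congr rfl fun a _ => by by_cases h : wt a = 0 <;> simp [h]
    rw [e, hH1, ← Finset.sum_filter, hZ, Finset.sum_singleton]
  have hFZ : F Z0 ≤ 1 - ∑ i, P i + EY/2 := by
    have h1 : ∑ a, ((wt a : ℝ) - (wt a:ℝ)*((wt a:ℝ)-1)/2) * F a ≤ 1 - F Z0 := by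
      rw [← hsum_ne0F]
      exact Finset.sum_le_sum fun a _ => coef0 (wt a) (F a) (hF0 a)
    have h2 : ∑ a, ((wt a : ℝ) - (wt a:ℝ)*((wt a:ℝ)-1)/2) * F a = ∑ i, P i - EY/2 := by
      calc ∑ a, ((wt a : ℝ) - (wt a:ℝ)*((wt a:ℝ)-1)/2) * F a
          = ∑ a, ((wt a:ℝ) * F a - ((wt a:ℝ)*((wt a:ℝ)-1)) * F a / 2) := by
            exact Finset.sum_congr rfl fun a _ => by ring
        _ = ∑ a, (wt a:ℝ) * F a - (∑ a, ((wt a:ℝ)*((wt a:ℝ)-1)) * F a)/2 := by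
            rw [Finset.sum_sub_distrib, Finset.sum_div]
        _ = ∑ i, P i - EY/2 := by rw [hsumP]
    linarith
  have hHZ : 1 - ∑ i, Q i ≤ H Z0 := by
    have h1 : ∑ a, (if wt a = 0 then (0:ℝ) else H a) ≤ ∑ a, (wt a:ℝ) * H a := by
      refine Finset.sum_le_sum fun a _ => ?_
      rcases Nat.eq_zero_or_pos (wt a) with h | h
      · simp [h]
      · rw [if_neg (by omega)]
        have h1 : (1:ℝ) ≤ (wt a:ℝ) := by exact_mod_cast h
        nlinarith [hH0 a]
    rw [hsum_ne0H] at h1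
    rw [hsumQ]
    linarith
  have bound0 : max (F Z0 - H Z0) 0 ≤ (∑ i, max (Q i - P i) 0) + EY/2 := by
    have hs : ∑ i, (Q i - P i) ≤ ∑ i, max (Q i - P i) 0 :=
      Finset.sum_le_sum fun i _ => le_max_left _ _
    have hss : ∑ i, (Q i - P i) = ∑ i, Q i - ∑ i, P i := Finset.sum_sub_distrib _ _
    have h0nn : (0:ℝ) ≤ ∑ i, max (Q i - P i) 0 :=
      Finset.sum_nonneg fun i _ => le_max_right _ _
    apply max_le
    · linarith
    · linarith
  -- singleton class
  have hS1 : Finset.univ.filter (fun a : Fin n → Bool => wt a = 1)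
      = Finset.univ.image sgl := by
    ext a
    simp only [Finset.mem_filter, Finset.mem_univ, true_and, Finset.mem_image]
    rw [wt_eq_one_iff]
    exact ⟨fun ⟨i, h⟩ => ⟨i, h.symm⟩, fun ⟨i, h⟩ => ⟨i, h.symm⟩⟩
  have hsum1 : ∑ a ∈ Finset.univ.filter (fun a => wt a = 1), max (F a - H a) 0
      = ∑ i, max (F (sgl i) - H (sgl i)) 0 := by
    rw [hS1, Finset.sum_image (fun i _ j _ h => sgl_inj h)]
  have hsglmem : ∀ i : Fin n, sgl i ∈ Finset.univ.filter (fun a => a i = true) := by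
    intro i; simp [sgl]
  have hsglF : ∀ i, F (sgl i) ≤ P i := fun i =>
    Finset.single_le_sum (fun a _ => hF0 a) (hsglmem i)
  have hsglH : ∀ i, H (sgl i) ≤ Q i := fun i =>
    Finset.single_le_sum (fun a _ => hH0 a) (hsglmem i)
  have bound1 : ∑ i, max (F (sgl i) - H (sgl i)) 0
      ≤ ∑ i, max (P i - Q i) 0 + ∑ i, (Q i - H (sgl i)) := by
    rw [← Finset.sum_add_distrib]
    refine Finset.sum_le_sum fun i _ => ?_
    have h1 := hsglF i
    have h2 := hsglH i
    have h3 := le_max_left (P i - Q i) (0:ℝ)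
    have h4 := le_max_right (P i - Q i) (0:ℝ)
    apply max_le <;> linarith
  have hRbd : ∑ i, (Q i - H (sgl i)) ≤ EZ := by
    have e : ∑ i, H (sgl i) = ∑ a, (if wt a = 1 then H a else 0) := by
      rw [← Finset.sum_filter, hS1, Finset.sum_image (fun i _ j _ h => sgl_inj h)]
    calc ∑ i, (Q i - H (sgl i)) = ∑ i, Q i - ∑ i, H (sgl i) := Finset.sum_sub_distrib _ _
      _ = ∑ a, ((wt a:ℝ) * H a) - ∑ a, (if wt a = 1 then H a else 0) := by
          rw [hsumQ, e]
      _ = ∑ a, ((wt a:ℝ) * H a - (if wt a = 1 then H a else 0)) :=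
          (Finset.sum_sub_distrib _ _).symm
      _ ≤ EZ := Finset.sum_le_sum fun a _ => coef1 (wt a) (H a) (hH0 a)
  -- big class
  have bound2 : ∑ a ∈ Finset.univ.filter (fun a => 2 ≤ wt a), max (F a - H a) 0 ≤ EY/2 := by
    have h1 : ∑ a ∈ Finset.univ.filter (fun a => 2 ≤ wt a), max (F a - H a) 0
        ≤ ∑ a ∈ Finset.univ.filter (fun a => 2 ≤ wt a), F a :=
      Finset.sum_le_sum fun a _ => max_le (by linarith [hH0 a]) (hF0 a)
    have h3 : ∑ a, (if 2 ≤ wt a then F a else 0)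
        ≤ ∑ a, ((wt a:ℝ)*((wt a:ℝ)-1)/2) * F a := by
      refine Finset.sum_le_sum fun a _ => ?_
      by_cases h : 2 ≤ wt a
      · rw [if_pos h]
        have h2 : (2:ℝ) ≤ (wt a:ℝ) := by exact_mod_cast h
        have hc : (0:ℝ) ≤ (wt a:ℝ)*((wt a:ℝ)-1)/2 - 1 := by nlinarith
        nlinarith [mul_nonneg hc (hF0 a)]
      · rw [if_neg h]
        have := wnn (wt a)
        have := hF0 a
        positivity
    have h4 : ∑ a, ((wt a:ℝ)*((wt a:ℝ)-1)/2) * F a = EY/2 := by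
      rw [hEY, Finset.sum_div]
      exact Finset.sum_congr rfl fun a _ => by ring
    have h2' : ∑ a ∈ Finset.univ.filter (fun a => 2 ≤ wt a), F a
        = ∑ a, (if 2 ≤ wt a then F a else 0) := Finset.sum_filter _ _
    linarith
  have habs : ∑ i, |P i - Q i| = ∑ i, max (P i - Q i) 0 + ∑ i, max (Q i - P i) 0 := by
    rw [← Finset.sum_add_distrib]
    refine Finset.sum_congr rfl fun i _ => ?_
    rcases le_total (P i) (Q i) with h | h
    · rw [abs_of_nonpos (by linarith), max_eq_right (by linarith),
        max_eq_left (by linarith)]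
      ring
    · rw [abs_of_nonneg (by linarith), max_eq_left (by linarith),
        max_eq_right (by linarith)]
      ring
  rw [hsplit, hZ, Finset.sum_singleton, hsum1, habs]
  linarith


open MeasureTheory
open scoped ENNReal
variable {n : ℕ}

lemma min_add_tsub (x y : ℝ≥0∞) : min x y + (x - y) = x := by
  rcases le_total x y with h | h
  · rw [min_eq_left h, tsub_eq_zero_of_le h, add_zero]
  · rw [min_eq_right h, add_comm, tsub_add_cancel_of_le h]

theorem coupling (μ ν : Measure (Fin n → Bool)) [IsProbabilityMeasure μ]
    [IsProbabilityMeasure ν] :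
    ∃ π : Measure ((Fin n → Bool) × (Fin n → Bool)),
      IsProbabilityMeasure π ∧ π.map Prod.fst = μ ∧ π.map Prod.snd = ν ∧
      π {p | p.1 ≠ p.2} ≤ ∑ a, (μ {a} - ν {a}) := by
  classical
  set f : (Fin n → Bool) → ℝ≥0∞ := fun a => μ {a} with hf
  set h : (Fin n → Bool) → ℝ≥0∞ := fun a => ν {a} with hh
  set m : ℝ≥0∞ := ∑ a, (f a - h a) with hm
  have hsum : ∀ (κ : Measure (Fin n → Bool)) (s : Set (Fin n → Bool)),
      κ s = ∑ a ∈ Finset.univ.filter (· ∈ s), κ {a} := by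
    intro κ s
    have hcup : s = ⋃ a ∈ (Finset.univ.filter (· ∈ s) : Finset (Fin n → Bool)),
        ({a} : Set (Fin n → Bool)) := by
      ext x; simp
    calc κ s = κ (⋃ a ∈ (Finset.univ.filter (· ∈ s) : Finset (Fin n → Bool)),
        ({a} : Set (Fin n → Bool))) := by rw [← hcup]
      _ = ∑ a ∈ Finset.univ.filter (· ∈ s), κ {a} :=
        measure_biUnion_finset
          (fun a _ b _ hab => Set.disjoint_singleton.mpr hab)
          (fun b _ => measurableSet_singleton b)
  have hf_univ : ∑ a, f a = 1 := by
    have h1 := hsum μ Set.univ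
    simp only [measure_univ, Set.mem_univ, Finset.filter_true] at h1
    exact h1.symm
  have hh_univ : ∑ a, h a = 1 := by
    have h1 := hsum ν Set.univ
    simp only [measure_univ, Set.mem_univ, Finset.filter_true] at h1
    exact h1.symm
  have hft : ∀ a, f a ≠ ∞ := fun a => measure_ne_top μ _
  have hht : ∀ a, h a ≠ ∞ := fun a => measure_ne_top ν _
  have hmt : m ≠ ∞ := by
    rw [hm]
    exact ENNReal.sum_ne_top.mpr fun a _ => ne_top_of_le_ne_top (hft a) tsub_le_self
  have hmint : (∑ a, min (f a) (h a)) ≠ ∞ :=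
    ENNReal.sum_ne_top.mpr fun a _ => ne_top_of_le_ne_top (hft a) (min_le_left _ _)
  have hmm : (∑ a, (h a - f a)) = m := by
    have k1 : (∑ a, min (f a) (h a)) + m = 1 := by
      rw [hm, ← Finset.sum_add_distrib,
        Finset.sum_congr rfl fun a (_ : a ∈ Finset.univ) => min_add_tsub (f a) (h a), hf_univ]
    have k2 : (∑ a, min (f a) (h a)) + (∑ a, (h a - f a)) = 1 := by
      have e : ∀ a : Fin n → Bool, min (f a) (h a) + (h a - f a) = h a := fun a => by
        rw [min_comm]
        exact min_add_tsub (h a) (f a)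
      rw [← Finset.sum_add_distrib,
        Finset.sum_congr rfl fun a (_ : a ∈ Finset.univ) => e a, hh_univ]
    exact ((ENNReal.add_right_inj hmint).mp (k2.trans k1.symm))
  set w : (Fin n → Bool) → (Fin n → Bool) → ℝ≥0∞ := fun a b =>
    (if a = b then min (f a) (h a) else 0) + (f a - h a) * ((h b - f b) * m⁻¹) with hw
  set π : Measure ((Fin n → Bool) × (Fin n → Bool)) :=
    ∑ p : (Fin n → Bool) × (Fin n → Bool), w p.1 p.2 • Measure.dirac p with hπ
  have π_apply : ∀ s : Set ((Fin n → Bool) × (Fin n → Bool)),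
      π s = ∑ p : (Fin n → Bool) × (Fin n → Bool), if p ∈ s then w p.1 p.2 else 0 := by
    intro s
    rw [hπ, Measure.finset_sum_apply]
    refine Finset.sum_congr rfl fun p _ => ?_
    rw [Measure.smul_apply, Measure.dirac_apply, Set.indicator_apply]
    by_cases hp : p ∈ s <;> simp [hp]
  have hmm' : (∑ b, (h b - f b) * m⁻¹) = m * m⁻¹ := by
    rw [← Finset.sum_mul, hmm]
  have row : ∀ a, ∑ b, w a b = f a := by
    intro a
    simp only [hw]
    rw [Finset.sum_add_distrib]
    have e1 : ∑ b, (if a = b then min (f a) (h a) else 0) = min (f a) (h a) := by simp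
    have e2 : ∑ b, (f a - h a) * ((h b - f b) * m⁻¹) = (f a - h a) * (m * m⁻¹) := by
      rw [← Finset.mul_sum, hmm']
    rw [e1, e2]
    by_cases h0 : m = 0
    · have hall : f a - h a = 0 :=
        (Finset.sum_eq_zero_iff.mp (hm ▸ h0 : (∑ a, (f a - h a)) = 0)) a (Finset.mem_univ a)
      rw [hall, zero_mul, add_zero]
      exact min_eq_left (tsub_eq_zero_iff_le.mp hall)
    · rw [ENNReal.mul_inv_cancel h0 hmt, mul_one]
      exact min_add_tsub _ _
  have col : ∀ b, ∑ a, w a b = h b := by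
    intro b
    simp only [hw]
    rw [Finset.sum_add_distrib]
    have e1 : ∑ a, (if a = b then min (f a) (h a) else 0) = min (f b) (h b) := by simp
    have e2 : ∑ a, (f a - h a) * ((h b - f b) * m⁻¹) = m * ((h b - f b) * m⁻¹) := by
      rw [← Finset.sum_mul, ← hm]
    rw [e1, e2]
    by_cases h0 : m = 0
    · have hall1 : f b - h b = 0 :=
        (Finset.sum_eq_zero_iff.mp (hm ▸ h0 : (∑ a, (f a - h a)) = 0)) b (Finset.mem_univ b)
      have hall2 : h b - f b = 0 := by
        have hz : (∑ a, (h a - f a)) = 0 := by rw [hmm]; exact h0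
        exact (Finset.sum_eq_zero_iff.mp hz) b (Finset.mem_univ b)
      have heq : f b = h b :=
        le_antisymm (tsub_eq_zero_iff_le.mp hall1) (tsub_eq_zero_iff_le.mp hall2)
      rw [hall2, zero_mul, mul_zero, add_zero, heq, min_self]
    · have : m * ((h b - f b) * m⁻¹) = (h b - f b) * (m * m⁻¹) := by ring
      rw [this, ENNReal.mul_inv_cancel h0 hmt, mul_one, min_comm]
      exact min_add_tsub _ _
  have hfst : π.map Prod.fst = μ := by
    ext s hs
    rw [Measure.map_apply measurable_fst hs, π_apply, Fintype.sum_prod_type]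
    have e : ∀ a : Fin n → Bool,
        (∑ b, if (a, b) ∈ Prod.fst ⁻¹' s then w a b else 0) = if a ∈ s then f a else 0 := by
      intro a
      by_cases ha : a ∈ s
      · simp only [Set.mem_preimage, ha, if_true]
        exact row a
      · simp [Set.mem_preimage, ha]
    rw [Finset.sum_congr rfl fun a _ => e a, ← Finset.sum_filter]
    exact (hsum μ s).symm
  have hsnd : π.map Prod.snd = ν := by
    ext s hs
    rw [Measure.map_apply measurable_snd hs, π_apply, Fintype.sum_prod_type_right]
    have e : ∀ b : Fin n → Bool,
        (∑ a, if (a, b) ∈ Prod.snd ⁻¹' s then w a b else 0) = if b ∈ s then h b else 0 := by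
      intro b
      by_cases hb : b ∈ s
      · simp only [Set.mem_preimage, hb, if_true]
        exact col b
      · simp [Set.mem_preimage, hb]
    rw [Finset.sum_congr rfl fun b _ => e b, ← Finset.sum_filter]
    exact (hsum ν s).symm
  have htot : IsProbabilityMeasure π := by
    constructor
    rw [π_apply, Fintype.sum_prod_type]
    simp only [Set.mem_univ, if_true]
    rw [Finset.sum_congr rfl fun a _ => row a, hf_univ]
  have hfail : π {p : (Fin n → Bool) × (Fin n → Bool) | p.1 ≠ p.2} ≤ m := by
    have hfp : π {p : (Fin n → Bool) × (Fin n → Bool) | p.1 ≠ p.2}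
        = ∑ p : (Fin n → Bool) × (Fin n → Bool), if p.1 = p.2 then 0 else w p.1 p.2 := by
      rw [π_apply]
      refine Finset.sum_congr rfl fun p _ => ?_
      by_cases hp : p.1 = p.2 <;> simp [Set.mem_setOf_eq, hp]
    rw [hfp]
    have step : (∑ p : (Fin n → Bool) × (Fin n → Bool), if p.1 = p.2 then 0 else w p.1 p.2)
        ≤ ∑ p : (Fin n → Bool) × (Fin n → Bool),
            (f p.1 - h p.1) * ((h p.2 - f p.2) * m⁻¹) := by
      refine Finset.sum_le_sum fun p _ => ?_
      by_cases hp : p.1 = p.2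
      · rw [if_pos hp]; exact zero_le
      · rw [if_neg hp]
        simp only [hw, if_neg hp, zero_add]
        exact le_rfl
    refine le_trans step ?_
    rw [Fintype.sum_prod_type]
    have e : ∀ a : Fin n → Bool,
        (∑ b, (f a - h a) * ((h b - f b) * m⁻¹)) = (f a - h a) * (m * m⁻¹) := by
      intro a
      rw [← Finset.mul_sum, hmm']
    rw [Finset.sum_congr rfl fun a (_ : a ∈ Finset.univ) => e a]
    calc ∑ a, (f a - h a) * (m * m⁻¹)
        ≤ ∑ a, (f a - h a) * 1 :=
          Finset.sum_le_sum fun a _ => mul_le_mul_right (ENNReal.mul_inv_le_one m) _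
      _ = m := by
          rw [hm]
          exact Finset.sum_congr rfl fun a _ => mul_one _
  exact ⟨π, htot, hfst, hsnd, hfail⟩


open MeasureTheory
open scoped ENNReal
variable {n : ℕ}

lemma meas_eq_sum (κ : Measure (Fin n → Bool)) (s : Set (Fin n → Bool)) :
    κ s = ∑ a ∈ Finset.univ.filter (· ∈ s), κ {a} := by
  classical
  have hcup : s = ⋃ a ∈ (Finset.univ.filter (· ∈ s) : Finset (Fin n → Bool)),
      ({a} : Set (Fin n → Bool)) := by
    ext x; simp
  calc κ s = κ (⋃ a ∈ (Finset.univ.filter (· ∈ s) : Finset (Fin n → Bool)),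
      ({a} : Set (Fin n → Bool))) := by rw [← hcup]
    _ = ∑ a ∈ Finset.univ.filter (· ∈ s), κ {a} :=
      measure_biUnion_finset
        (fun a _ b _ hab => Set.disjoint_singleton.mpr hab)
        (fun b _ => measurableSet_singleton b)

lemma sum_point (κ : Measure (Fin n → Bool)) [IsProbabilityMeasure κ] :
    ∑ a, κ {a} = 1 := by
  have h1 := meas_eq_sum κ Set.univ
  simp only [measure_univ, Set.mem_univ, Finset.filter_true] at h1
  exact h1.symm



end S19

end S19Aux

/-- The coupling lemma for two finite families of `{0,1}`-valued random variables. -/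
theorem statement19 {Ω₁ Ω₂ : Type} [MeasureSpace Ω₁] [MeasureSpace Ω₂]
    [IsProbabilityMeasure (volume : Measure Ω₁)]
    [IsProbabilityMeasure (volume : Measure Ω₂)]
    (n : ℕ) (Y : Fin n → Ω₁ → Bool) (Z : Fin n → Ω₂ → Bool)
    (hY : ∀ i, Measurable (Y i)) (hZ : ∀ i, Measurable (Z i)) :
    ∃ (Ω : Type) (_ : MeasureSpace Ω),
      IsProbabilityMeasure (volume : Measure Ω) ∧
      ∃ (Y' Z' : Fin n → Ω → Bool),
        (∀ i, Measurable (Y' i)) ∧ (∀ i, Measurable (Z' i)) ∧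
        Measure.map (fun ω (i : Fin n) => Y' i ω) volume =
          Measure.map (fun ω (i : Fin n) => Y i ω) volume ∧
        Measure.map (fun ω (i : Fin n) => Z' i ω) volume =
          Measure.map (fun ω (i : Fin n) => Z i ω) volume ∧
        (volume {ω : Ω | ∃ i, Y' i ω ≠ Z' i ω}).toReal ≤
          (∑ i : Fin n, ∑ j ∈ Finset.univ.erase i,
            ((volume {ω : Ω₂ | Z i ω = true ∧ Z j ω = true}).toReal +
              (volume {ω : Ω₁ | Y i ω = true ∧ Y j ω = true}).toReal)) +
          ∑ i : Fin n, |(volume {ω : Ω₁ | Y i ω = true}).toReal -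
            (volume {ω : Ω₂ | Z i ω = true}).toReal| := by
  classical
  have mY : Measurable (fun ω (i : Fin n) => Y i ω) := measurable_pi_lambda _ hY
  have mZ : Measurable (fun ω (i : Fin n) => Z i ω) := measurable_pi_lambda _ hZ
  set μ : Measure (Fin n → Bool) := Measure.map (fun ω (i : Fin n) => Y i ω) volume with hμ
  set ν : Measure (Fin n → Bool) := Measure.map (fun ω (i : Fin n) => Z i ω) volume with hν
  haveI hμp : IsProbabilityMeasure μ := Measure.isProbabilityMeasure_map mY.aemeasurable
  haveI hνp : IsProbabilityMeasure ν := Measure.isProbabilityMeasure_map mZ.aemeasurable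
  obtain ⟨π, hπp, hfst, hsnd, hfail⟩ := S19.coupling μ ν
  refine ⟨(Fin n → Bool) × (Fin n → Bool), ⟨π⟩, hπp,
    (fun i p => p.1 i), (fun i p => p.2 i),
    (fun i => (measurable_pi_apply i).comp measurable_fst),
    (fun i => (measurable_pi_apply i).comp measurable_snd), hfst, hsnd, ?_⟩
  -- the quantitative bound
  set F : (Fin n → Bool) → ℝ := fun a => (μ {a}).toReal with hF
  set H : (Fin n → Bool) → ℝ := fun a => (ν {a}).toReal with hH
  have hFnn : ∀ a, 0 ≤ F a := fun a => ENNReal.toReal_nonneg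
  have hHnn : ∀ a, 0 ≤ H a := fun a => ENNReal.toReal_nonneg
  have hF1 : ∑ a, F a = 1 := by
    rw [hF, ← ENNReal.toReal_sum (fun a _ => measure_ne_top μ _), S19.sum_point μ]
    simp
  have hH1 : ∑ a, H a = 1 := by
    rw [hH, ← ENNReal.toReal_sum (fun a _ => measure_ne_top ν _), S19.sum_point ν]
    simp
  have hset : {p : (Fin n → Bool) × (Fin n → Bool) | ∃ i, p.1 i ≠ p.2 i}
      = {p : (Fin n → Bool) × (Fin n → Bool) | p.1 ≠ p.2} := by
    ext p
    simp [Function.ne_iff]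
  have hmt : (∑ a, (μ {a} - ν {a})) ≠ ⊤ :=
    ENNReal.sum_ne_top.mpr fun a _ => ne_top_of_le_ne_top (measure_ne_top μ _) tsub_le_self
  have step1 : (π {p : (Fin n → Bool) × (Fin n → Bool) | ∃ i, p.1 i ≠ p.2 i}).toReal
      ≤ ∑ a, max (F a - H a) 0 := by
    have h1 : (π {p : (Fin n → Bool) × (Fin n → Bool) | ∃ i, p.1 i ≠ p.2 i}).toReal
        ≤ (∑ a, (μ {a} - ν {a})).toReal :=
      ENNReal.toReal_mono hmt (hset ▸ hfail)
    have h2 : (∑ a, (μ {a} - ν {a})).toReal = ∑ a, max (F a - H a) 0 := by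
      rw [ENNReal.toReal_sum
        (fun a _ => ne_top_of_le_ne_top (measure_ne_top μ _) tsub_le_self)]
      refine Finset.sum_congr rfl fun a _ => ?_
      rcases le_total (μ {a}) (ν {a}) with hle | hle
      · rw [tsub_eq_zero_of_le hle]
        simp only [ENNReal.toReal_zero]
        exact (max_eq_right (sub_nonpos.mpr
          (ENNReal.toReal_mono (measure_ne_top ν _) hle))).symm
      · rw [ENNReal.toReal_sub_of_le hle (measure_ne_top μ _)]
        exact (max_eq_left (sub_nonneg.mpr
          (ENNReal.toReal_mono (measure_ne_top μ _) hle))).symm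
    rw [← h2]
    exact h1
  -- identify the RHS quantities
  have hsetmeas : ∀ s : Set (Fin n → Bool), MeasurableSet s :=
    fun s => s.to_countable.measurableSet
  have hYi : ∀ i : Fin n, (volume {ω : Ω₁ | Y i ω = true}).toReal
      = ∑ a ∈ Finset.univ.filter (fun a => a i = true), F a := by
    intro i
    have e1 : volume {ω : Ω₁ | Y i ω = true} = μ {a | a i = true} := by
      rw [hμ, Measure.map_apply mY (hsetmeas _)]
      rfl
    rw [e1, S19.meas_eq_sum μ _,
      ENNReal.toReal_sum (fun a _ => measure_ne_top μ _)]
    refine Finset.sum_congr ?_ fun a _ => rfl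
    ext a; simp [Set.mem_setOf_eq]
  have hZi : ∀ i : Fin n, (volume {ω : Ω₂ | Z i ω = true}).toReal
      = ∑ a ∈ Finset.univ.filter (fun a => a i = true), H a := by
    intro i
    have e1 : volume {ω : Ω₂ | Z i ω = true} = ν {a | a i = true} := by
      rw [hν, Measure.map_apply mZ (hsetmeas _)]
      rfl
    rw [e1, S19.meas_eq_sum ν _,
      ENNReal.toReal_sum (fun a _ => measure_ne_top ν _)]
    refine Finset.sum_congr ?_ fun a _ => rfl
    ext a; simp [Set.mem_setOf_eq]
  have hYij : ∀ i j : Fin n, (volume {ω : Ω₁ | Y i ω = true ∧ Y j ω = true}).toReal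
      = ∑ a ∈ Finset.univ.filter (fun a => a i = true ∧ a j = true), F a := by
    intro i j
    have e1 : volume {ω : Ω₁ | Y i ω = true ∧ Y j ω = true}
        = μ {a | a i = true ∧ a j = true} := by
      rw [hμ, Measure.map_apply mY (hsetmeas _)]
      rfl
    rw [e1, S19.meas_eq_sum μ _,
      ENNReal.toReal_sum (fun a _ => measure_ne_top μ _)]
    refine Finset.sum_congr ?_ fun a _ => rfl
    ext a; simp [Set.mem_setOf_eq]
  have hZij : ∀ i j : Fin n, (volume {ω : Ω₂ | Z i ω = true ∧ Z j ω = true}).toReal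
      = ∑ a ∈ Finset.univ.filter (fun a => a i = true ∧ a j = true), H a := by
    intro i j
    have e1 : volume {ω : Ω₂ | Z i ω = true ∧ Z j ω = true}
        = ν {a | a i = true ∧ a j = true} := by
      rw [hν, Measure.map_apply mZ (hsetmeas _)]
      rfl
    rw [e1, S19.meas_eq_sum ν _,
      ENNReal.toReal_sum (fun a _ => measure_ne_top ν _)]
    refine Finset.sum_congr ?_ fun a _ => rfl
    ext a; simp [Set.mem_setOf_eq]
  have main := S19.real_core F H hFnn hHnn hF1 hH1
  show (π {p : (Fin n → Bool) × (Fin n → Bool) | ∃ i, p.1 i ≠ p.2 i}).toReal ≤ _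
  refine le_trans step1 (le_trans main (le_of_eq ?_))
  congr 1
  · refine Finset.sum_congr rfl fun i _ => Finset.sum_congr rfl fun j _ => ?_
    rw [hZij i j, hYij i j]
  · refine Finset.sum_congr rfl fun i _ => ?_
    rw [hYi i, hZi i]
end
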